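/- arXiv:1403.7584 — 7 statements merged into one kernel-verified Lean document; each statement's English description precedes it below -/
import Mathlib

section
/- Let H be a graded connected Hopf algebra over a field K of characteristic zero, with grading 𝒜 and finite-dimensional homogeneous components. Then for every m ≥ 1, the restriction of S∘S − id to 𝒜 m is nilpotent of order at most m: for every x ∈ 𝒜 m, (S∘S − id)^m (x) = 0 (the m-fold composite of the linear map S∘S − id_H applied to x vanishes). -/
open scoped TensorProduct

open Coalgebra HopfAlgebra TensorProduct LinearMap

namespace ALaux

variable {K H : Type*} [CommRing K] [Ring H] [HopfAlgebra K H]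

lemma sum_counit_smul_right {ι : Type*} (a : H) (r : Coalgebra.Repr K a ι) :
    ∑ i ∈ r.index, Coalgebra.counit (R := K) (r.right i) • r.left i = a := by
  have h := Coalgebra.sum_tmul_counit_eq (R := K) r
  have h2 := congrArg (TensorProduct.rid K H) h
  rw [map_sum] at h2
  simp only [TensorProduct.rid_tmul] at h2
  simpa using h2

lemma sum_counit_smul_left {ι : Type*} (a : H) (r : Coalgebra.Repr K a ι) :
    ∑ i ∈ r.index, Coalgebra.counit (R := K) (r.left i) • r.right i = a := by
  have h := Coalgebra.sum_counit_tmul_eq (R := K) r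
  have h2 := congrArg (TensorProduct.lid K H) h
  rw [map_sum] at h2
  simp only [TensorProduct.lid_tmul] at h2
  simpa using h2

lemma antipode_one' : antipode (R := K) (1 : H) = 1 := by
  have h := HopfAlgebra.mul_antipode_rTensor_comul_apply (R := K) (1 : H)
  rw [Bialgebra.comul_one, Algebra.TensorProduct.one_def] at h
  simpa using h

/-- the product representation of `comul (a*b)` -/
noncomputable def mulRepr {ι κ : Type*} (a b : H) (ra : Coalgebra.Repr K a ι)
    (rb : Coalgebra.Repr K b κ) :
    Coalgebra.Repr K (a * b) (ι × κ) where
  index := ra.index ×ˢ rb.index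
  left := fun p => ra.left p.1 * rb.left p.2
  right := fun p => ra.right p.1 * rb.right p.2
  eq := by
    rw [Bialgebra.comul_mul, ← ra.eq, ← rb.eq, Finset.sum_mul_sum]
    rw [Finset.sum_product]
    simp [Algebra.TensorProduct.tmul_mul_tmul]

end ALaux

namespace ALaux2

variable {K H : Type*} [CommRing K] [Ring H] [HopfAlgebra K H]

open ALaux

/-- The 6-linear gadget `(x₁⊗(x₂⊗x₃), y₁⊗(y₂⊗y₃)) ↦ S(x₁y₁) * ((x₂y₂) * (S y₃ * S x₃))`. -/
noncomputable def Phi : (H ⊗[K] (H ⊗[K] H)) →ₗ[K] (H ⊗[K] (H ⊗[K] H)) →ₗ[K] H :=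
  TensorProduct.curry <|
    (LinearMap.mul' K H) ∘ₗ
    (LinearMap.lTensor H (LinearMap.mul' K H)) ∘ₗ
    (TensorProduct.map
      ((antipode (R := K)) ∘ₗ LinearMap.mul' K H)
      ((TensorProduct.map (LinearMap.mul' K H)
          ((LinearMap.mul' K H) ∘ₗ
            (TensorProduct.map (antipode (R := K)) (antipode (R := K))) ∘ₗ
            (TensorProduct.comm K H H).toLinearMap)) ∘ₗ
        (TensorProduct.tensorTensorTensorComm K H H H H).toLinearMap)) ∘ₗ
    (TensorProduct.tensorTensorTensorComm K H (H ⊗[K] H) H (H ⊗[K] H)).toLinearMap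

lemma Phi_tmul (x₁ x₂ x₃ y₁ y₂ y₃ : H) :
    Phi (x₁ ⊗ₜ[K] (x₂ ⊗ₜ[K] x₃)) (y₁ ⊗ₜ[K] (y₂ ⊗ₜ[K] y₃)) =
      antipode (R := K) (x₁ * y₁) *
        ((x₂ * y₂) * (antipode (R := K) y₃ * antipode (R := K) x₃)) := by
  simp [Phi, TensorProduct.tensorTensorTensorComm_tmul, LinearMap.mul'_apply]

lemma smul_sum_mul_sum {ι κ : Type*} (s : Finset ι) (t : Finset κ)
    (c : ι → K) (d : κ → K) (u : ι → H) (v : κ → H) :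
    ∑ i ∈ s, ∑ j ∈ t, (c i * d j) • (u i * v j) =
      (∑ i ∈ s, c i • u i) * (∑ j ∈ t, d j • v j) := by
  rw [Finset.sum_mul_sum]
  refine Finset.sum_congr rfl fun i _ => Finset.sum_congr rfl fun j _ => ?_
  rw [smul_mul_assoc, mul_smul_comm, smul_smul]

lemma sum_swap_inner {M : Type*} [AddCommMonoid M] {ιb ιa : Type*} {ιaj : ιa → Type*}
    (t : Finset ιb) (s : Finset ιa) (u : ∀ i, Finset (ιaj i))
    (f : ιb → (i : ιa) → ιaj i → M) :
    ∑ b ∈ t, ∑ i ∈ s, ∑ j ∈ u i, f b i j = ∑ i ∈ s, ∑ j ∈ u i, ∑ b ∈ t, f b i j := by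
  rw [Finset.sum_comm]
  exact Finset.sum_congr rfl fun i _ => Finset.sum_comm

theorem antipode_mul' (a b : H) :
    antipode (R := K) (a * b) = antipode (R := K) b * antipode (R := K) a := by
  classical
  let ra := Coalgebra.Repr.arbitrary K a
  let rb := Coalgebra.Repr.arbitrary K b
  let ra1 : ∀ i, Coalgebra.Repr K (ra.left i) (H × H) := fun i => Coalgebra.Repr.arbitrary K (ra.left i)
  let ra2 : ∀ i, Coalgebra.Repr K (ra.right i) (H × H) := fun i => Coalgebra.Repr.arbitrary K (ra.right i)
  let rb1 : ∀ i, Coalgebra.Repr K (rb.left i) (H × H) := fun i => Coalgebra.Repr.arbitrary K (rb.left i)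
  let rb2 : ∀ i, Coalgebra.Repr K (rb.right i) (H × H) := fun i => Coalgebra.Repr.arbitrary K (rb.right i)
  have ha := Coalgebra.sum_tmul_tmul_eq (R := K) ra ra1 ra2
  have hb := Coalgebra.sum_tmul_tmul_eq (R := K) rb rb1 rb2
  have key :
      Phi (K := K)
        (∑ i ∈ ra.index, ∑ j ∈ (ra1 i).index,
          (ra1 i).left j ⊗ₜ[K] ((ra1 i).right j ⊗ₜ[K] ra.right i))
        (∑ i ∈ rb.index, ∑ j ∈ (rb1 i).index,
          (rb1 i).left j ⊗ₜ[K] ((rb1 i).right j ⊗ₜ[K] rb.right i)) =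
      Phi (K := K)
        (∑ i ∈ ra.index, ∑ j ∈ (ra2 i).index,
          ra.left i ⊗ₜ[K] ((ra2 i).left j ⊗ₜ[K] (ra2 i).right j))
        (∑ i ∈ rb.index, ∑ j ∈ (rb2 i).index,
          rb.left i ⊗ₜ[K] ((rb2 i).left j ⊗ₜ[K] (rb2 i).right j)) := by
    rw [ha, hb]
  simp only [map_sum, LinearMap.sum_apply, Phi_tmul] at key
  -- the "right reprs" side computes to `S (a * b)`
  have hA :
      ∑ i' ∈ rb.index, ∑ j' ∈ (rb2 i').index, ∑ i ∈ ra.index, ∑ j ∈ (ra2 i).index,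
        antipode (R := K) (ra.left i * rb.left i') *
          ((ra2 i).left j * (rb2 i').left j' *
            (antipode (R := K) ((rb2 i').right j') * antipode (R := K) ((ra2 i).right j))) =
      antipode (R := K) (a * b) := by
    have step1 : ∀ i' ∈ rb.index, ∀ i ∈ ra.index, ∀ j ∈ (ra2 i).index,
        ∑ j' ∈ (rb2 i').index,
          antipode (R := K) (ra.left i * rb.left i') *
            ((ra2 i).left j * (rb2 i').left j' *
              (antipode (R := K) ((rb2 i').right j') * antipode (R := K) ((ra2 i).right j))) =
        Coalgebra.counit (R := K) (rb.right i') •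
          (antipode (R := K) (ra.left i * rb.left i') *
            ((ra2 i).left j * antipode (R := K) ((ra2 i).right j))) := by
      intro i' _ i _ j _
      have h1 : ∀ j' ∈ (rb2 i').index,
          antipode (R := K) (ra.left i * rb.left i') *
            ((ra2 i).left j * (rb2 i').left j' *
              (antipode (R := K) ((rb2 i').right j') * antipode (R := K) ((ra2 i).right j))) =
          antipode (R := K) (ra.left i * rb.left i') *
            ((ra2 i).left j *
              (((rb2 i').left j' * antipode (R := K) ((rb2 i').right j')) *
                antipode (R := K) ((ra2 i).right j))) := by
        intro j' _
        rw [mul_assoc ((ra2 i).left j), mul_assoc ((rb2 i').left j')]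
      rw [Finset.sum_congr rfl h1, ← Finset.mul_sum, ← Finset.mul_sum, ← Finset.sum_mul,
        HopfAlgebra.sum_mul_antipode_eq_smul (rb2 i'), smul_mul_assoc, one_mul,
        mul_smul_comm, mul_smul_comm]
    calc
      _ = ∑ i' ∈ rb.index, ∑ i ∈ ra.index, ∑ j ∈ (ra2 i).index, ∑ j' ∈ (rb2 i').index,
            antipode (R := K) (ra.left i * rb.left i') *
              ((ra2 i).left j * (rb2 i').left j' *
                (antipode (R := K) ((rb2 i').right j') * antipode (R := K) ((ra2 i).right j))) :=
        Finset.sum_congr rfl fun i' _ => sum_swap_inner _ _ _ _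
      _ = ∑ i' ∈ rb.index, ∑ i ∈ ra.index, ∑ j ∈ (ra2 i).index,
            Coalgebra.counit (R := K) (rb.right i') •
              (antipode (R := K) (ra.left i * rb.left i') *
                ((ra2 i).left j * antipode (R := K) ((ra2 i).right j))) := by
        refine Finset.sum_congr rfl fun i' hi' => Finset.sum_congr rfl fun i hi =>
          Finset.sum_congr rfl fun j hj => step1 i' hi' i hi j hj
      _ = ∑ i' ∈ rb.index, ∑ i ∈ ra.index,
            (Coalgebra.counit (R := K) (ra.right i) * Coalgebra.counit (R := K) (rb.right i')) •
              antipode (R := K) (ra.left i * rb.left i') := by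
        refine Finset.sum_congr rfl fun i' _ => Finset.sum_congr rfl fun i _ => ?_
        rw [← Finset.smul_sum, ← Finset.mul_sum,
          HopfAlgebra.sum_mul_antipode_eq_smul (ra2 i), mul_smul_comm, mul_one,
          smul_smul, mul_comm]
      _ = antipode (R := K) (a * b) := by
        have hfac := smul_sum_mul_sum (K := K) (H := H) ra.index rb.index
          (fun i => Coalgebra.counit (R := K) (ra.right i))
          (fun i' => Coalgebra.counit (R := K) (rb.right i'))
          (fun i => ra.left i) (fun i' => rb.left i')
        rw [sum_counit_smul_right a ra, sum_counit_smul_right b rb] at hfac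
        calc
          _ = antipode (R := K) (∑ i' ∈ rb.index, ∑ i ∈ ra.index,
                (Coalgebra.counit (R := K) (ra.right i) *
                  Coalgebra.counit (R := K) (rb.right i')) • (ra.left i * rb.left i')) := by
            rw [map_sum]
            refine Finset.sum_congr rfl fun i' _ => ?_
            rw [map_sum]
            exact Finset.sum_congr rfl fun i _ => (map_smul _ _ _).symm
          _ = _ := by rw [Finset.sum_comm, hfac]
  -- the "left reprs" side computes to `S b * S a`
  have hB :
      ∑ i' ∈ rb.index, ∑ j' ∈ (rb1 i').index, ∑ i ∈ ra.index, ∑ j ∈ (ra1 i).index,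
        antipode (R := K) ((ra1 i).left j * (rb1 i').left j') *
          ((ra1 i).right j * (rb1 i').right j' *
            (antipode (R := K) (rb.right i') * antipode (R := K) (ra.right i))) =
      antipode (R := K) b * antipode (R := K) a := by
    have step1 : ∀ i' ∈ rb.index, ∀ i ∈ ra.index,
        ∑ j ∈ (ra1 i).index, ∑ j' ∈ (rb1 i').index,
          antipode (R := K) ((ra1 i).left j * (rb1 i').left j') *
            ((ra1 i).right j * (rb1 i').right j' *
              (antipode (R := K) (rb.right i') * antipode (R := K) (ra.right i))) =
        (Coalgebra.counit (R := K) (ra.left i) * Coalgebra.counit (R := K) (rb.left i')) •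
          (antipode (R := K) (rb.right i') * antipode (R := K) (ra.right i)) := by
      intro i' _ i _
      have h1 : ∀ j ∈ (ra1 i).index, ∀ j' ∈ (rb1 i').index,
          antipode (R := K) ((ra1 i).left j * (rb1 i').left j') *
            ((ra1 i).right j * (rb1 i').right j' *
              (antipode (R := K) (rb.right i') * antipode (R := K) (ra.right i))) =
          (antipode (R := K) ((ra1 i).left j * (rb1 i').left j') *
            ((ra1 i).right j * (rb1 i').right j')) *
            (antipode (R := K) (rb.right i') * antipode (R := K) (ra.right i)) := by
        intro j _ j' _
        simp only [mul_assoc]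
      calc
        _ = (∑ j ∈ (ra1 i).index, ∑ j' ∈ (rb1 i').index,
              antipode (R := K) ((ra1 i).left j * (rb1 i').left j') *
                ((ra1 i).right j * (rb1 i').right j')) *
              (antipode (R := K) (rb.right i') * antipode (R := K) (ra.right i)) := by
          rw [Finset.sum_mul]
          refine Finset.sum_congr rfl fun j hj => ?_
          rw [Finset.sum_mul]
          exact Finset.sum_congr rfl fun j' hj' => h1 j hj j' hj'
        _ = _ := by
          have hprod := HopfAlgebra.sum_antipode_mul_eq_smul (R := K)
            (mulRepr (ra.left i) (rb.left i') (ra1 i) (rb1 i'))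
          rw [mulRepr] at hprod
          simp only [Finset.sum_product] at hprod
          rw [hprod, Bialgebra.counit_mul, smul_mul_assoc, one_mul]
    calc
      _ = ∑ i' ∈ rb.index, ∑ i ∈ ra.index, ∑ j ∈ (ra1 i).index, ∑ j' ∈ (rb1 i').index,
            antipode (R := K) ((ra1 i).left j * (rb1 i').left j') *
              ((ra1 i).right j * (rb1 i').right j' *
                (antipode (R := K) (rb.right i') * antipode (R := K) (ra.right i))) :=
        Finset.sum_congr rfl fun i' _ => sum_swap_inner _ _ _ _
      _ = ∑ i' ∈ rb.index, ∑ i ∈ ra.index,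
            (Coalgebra.counit (R := K) (ra.left i) * Coalgebra.counit (R := K) (rb.left i')) •
              (antipode (R := K) (rb.right i') * antipode (R := K) (ra.right i)) := by
        refine Finset.sum_congr rfl fun i' hi' => Finset.sum_congr rfl fun i hi => ?_
        exact step1 i' hi' i hi
      _ = ∑ i' ∈ rb.index, ∑ i ∈ ra.index,
            (Coalgebra.counit (R := K) (rb.left i') * Coalgebra.counit (R := K) (ra.left i)) •
              (antipode (R := K) (rb.right i') * antipode (R := K) (ra.right i)) := by
        refine Finset.sum_congr rfl fun i' _ => Finset.sum_congr rfl fun i _ => ?_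
        rw [mul_comm (Coalgebra.counit (R := K) (ra.left i))]
      _ = (∑ i' ∈ rb.index, Coalgebra.counit (R := K) (rb.left i') •
              antipode (R := K) (rb.right i')) *
            (∑ i ∈ ra.index, Coalgebra.counit (R := K) (ra.left i) •
              antipode (R := K) (ra.right i)) :=
        smul_sum_mul_sum rb.index ra.index _ _ _ _
      _ = antipode (R := K) b * antipode (R := K) a := by
        have h2 : ∀ (c : H) (r : Coalgebra.Repr K c (H × H)),
            ∑ i ∈ r.index, Coalgebra.counit (R := K) (r.left i) • antipode (R := K) (r.right i)
              = antipode (R := K) c := by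
          intro c r
          have h3 := congrArg (antipode (R := K)) (sum_counit_smul_left c r)
          rw [map_sum] at h3
          simp only [map_smul] at h3
          exact h3
        rw [h2 b rb, h2 a ra]
  rw [hB, hA] at key
  exact key.symm

end ALaux2

namespace ALgraded

open ALaux ALaux2

variable {K H : Type*} [CommRing K] [Ring H] [HopfAlgebra K H]

lemma mem_finset_sum' {ι M : Type*} [AddCommMonoid M] [Module K M] (s : Finset ι)
    (p : ι → Submodule K M) (x : M) (hx : x ∈ ∑ i ∈ s, p i) :
    ∃ g : ι → M, (∀ i ∈ s, g i ∈ p i) ∧ x = ∑ i ∈ s, g i := by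
  classical
  induction s using Finset.induction_on generalizing x with
  | empty => exact ⟨0, by simp, by simpa using hx⟩
  | @insert a s ha ih =>
    rw [Finset.sum_insert ha] at hx
    rw [Submodule.add_eq_sup] at hx
    obtain ⟨y, hy, z, hz, rfl⟩ := Submodule.mem_sup.mp hx
    obtain ⟨g, hg, rfl⟩ := ih z hz
    refine ⟨Function.update g a y, ?_, ?_⟩
    · intro i hi
      rcases Finset.mem_insert.mp hi with rfl | hi'
      · rw [Function.update_self]; exact hy
      · rw [Function.update_of_ne (by rintro rfl; exact ha hi')]; exact hg i hi'
    · rw [Finset.sum_insert ha, Function.update_self]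
      congr 1
      exact Finset.sum_congr rfl fun i hi =>
        (Function.update_of_ne (by rintro rfl; exact ha hi) _ _).symm

variable (𝒜 : ℕ → Submodule K H)

/-- the "middle" submodule of `H ⊗ H` spanned by tensors of positive-degree elements of
complementary degrees summing to `m` -/
noncomputable def midMod (m : ℕ) : Submodule K (H ⊗[K] H) :=
  Submodule.span K {z | ∃ p q u v, p + q = m ∧ 0 < p ∧ 0 < q ∧
    u ∈ 𝒜 p ∧ v ∈ 𝒜 q ∧ z = u ⊗ₜ[K] v}

variable [GradedAlgebra 𝒜]

theorem comul_split
    (hΔ : ∀ m : ℕ, ∀ x ∈ 𝒜 m, Coalgebra.comul (R := K) x ∈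
      ∑ pq ∈ Finset.HasAntidiagonal.antidiagonal m,
        LinearMap.range (TensorProduct.map (𝒜 pq.1).subtype (𝒜 pq.2).subtype))
    (hε : ∀ m : ℕ, 0 < m → ∀ x ∈ 𝒜 m, Coalgebra.counit (R := K) x = 0)
    (hconn : 𝒜 0 = Submodule.span K {(1 : H)})
    (m : ℕ) (hm : 1 ≤ m) (x : H) (hx : x ∈ 𝒜 m) :
    ∃ w ∈ midMod 𝒜 m, Coalgebra.comul (R := K) x = 1 ⊗ₜ[K] x + x ⊗ₜ[K] 1 + w := by
  classical
  obtain ⟨g, hg, hsum⟩ := mem_finset_sum' _ _ _ (hΔ m x hx)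
  have h0m : ((0 : ℕ), m) ∈ Finset.HasAntidiagonal.antidiagonal m := by simp
  have hm0' : ((m : ℕ), 0) ∈ (Finset.HasAntidiagonal.antidiagonal m).erase (0, m) := by
    refine Finset.mem_erase.mpr ⟨?_, by simp⟩
    simp only [ne_eq, Prod.mk.injEq]
    omega
  have hsplit : ∑ pq ∈ Finset.HasAntidiagonal.antidiagonal m, g pq =
      g (0, m) + (g (m, 0) +
        ∑ pq ∈ ((Finset.HasAntidiagonal.antidiagonal m).erase (0, m)).erase (m, 0), g pq) := by
    rw [← Finset.add_sum_erase _ g h0m, ← Finset.add_sum_erase _ g hm0']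
  -- the `(0, m)` piece
  have hrange0 : ∀ t : (𝒜 0) ⊗[K] (𝒜 m),
      ∃ aEl ∈ 𝒜 m, TensorProduct.map (𝒜 0).subtype (𝒜 m).subtype t = 1 ⊗ₜ[K] aEl := by
    intro t
    induction t with
    | zero => exact ⟨0, zero_mem _, by simp [TensorProduct.tmul_zero]⟩
    | tmul u v =>
      have hu : (u : H) ∈ Submodule.span K {(1 : H)} := by rw [← hconn]; exact u.2
      obtain ⟨c, hc⟩ := Submodule.mem_span_singleton.mp hu
      refine ⟨c • (v : H), Submodule.smul_mem _ _ v.2, ?_⟩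
      rw [TensorProduct.map_tmul]
      simp only [Submodule.coe_subtype]
      rw [← hc, TensorProduct.smul_tmul]
    | add t₁ t₂ ih₁ ih₂ =>
      obtain ⟨a₁, ha₁, he₁⟩ := ih₁
      obtain ⟨a₂, ha₂, he₂⟩ := ih₂
      exact ⟨a₁ + a₂, add_mem ha₁ ha₂, by rw [map_add, he₁, he₂, TensorProduct.tmul_add]⟩
  have hrangem : ∀ t : (𝒜 m) ⊗[K] (𝒜 0),
      ∃ bEl ∈ 𝒜 m, TensorProduct.map (𝒜 m).subtype (𝒜 0).subtype t = bEl ⊗ₜ[K] 1 := by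
    intro t
    induction t with
    | zero => exact ⟨0, zero_mem _, by simp [TensorProduct.zero_tmul]⟩
    | tmul u v =>
      have hv : (v : H) ∈ Submodule.span K {(1 : H)} := by rw [← hconn]; exact v.2
      obtain ⟨c, hc⟩ := Submodule.mem_span_singleton.mp hv
      refine ⟨c • (u : H), Submodule.smul_mem _ _ u.2, ?_⟩
      rw [TensorProduct.map_tmul]
      simp only [Submodule.coe_subtype]
      rw [← hc, ← TensorProduct.smul_tmul]
    | add t₁ t₂ ih₁ ih₂ =>
      obtain ⟨b₁, hb₁, he₁⟩ := ih₁
      obtain ⟨b₂, hb₂, he₂⟩ := ih₂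
      exact ⟨b₁ + b₂, add_mem hb₁ hb₂, by rw [map_add, he₁, he₂, TensorProduct.add_tmul]⟩
  obtain ⟨t0, ht0⟩ := hg (0, m) h0m
  obtain ⟨aEl, haEl, hga⟩ := hrange0 t0
  rw [ht0] at hga
  obtain ⟨tm, htm⟩ := hg (m, 0) (Finset.mem_of_mem_erase hm0')
  obtain ⟨bEl, hbEl, hgb⟩ := hrangem tm
  rw [htm] at hgb
  -- the rest lies in `midMod`
  have hrest : ∑ pq ∈ ((Finset.HasAntidiagonal.antidiagonal m).erase (0, m)).erase (m, 0), g pq ∈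
      midMod 𝒜 m := by
    refine Submodule.sum_mem _ fun pq hpq => ?_
    have hmem : pq ∈ Finset.HasAntidiagonal.antidiagonal m :=
      Finset.mem_of_mem_erase (Finset.mem_of_mem_erase hpq)
    have hadd : pq.1 + pq.2 = m := Finset.HasAntidiagonal.mem_antidiagonal.mp hmem
    have hne1 : pq ≠ (m, 0) := Finset.ne_of_mem_erase hpq
    have hne2 : pq ≠ (0, m) := Finset.ne_of_mem_erase (Finset.mem_of_mem_erase hpq)
    obtain ⟨p, q⟩ := pq
    simp only [Prod.mk.injEq, ne_eq, not_and] at hne1 hne2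
    have hp : 0 < p := by
      rcases Nat.eq_zero_or_pos p with h | h
      · exfalso; exact hne2 h (by omega)
      · exact h
    have hq : 0 < q := by
      rcases Nat.eq_zero_or_pos q with h | h
      · exfalso; exact hne1 (by omega) h
      · exact h
    obtain ⟨t, ht⟩ := hg (p, q) hmem
    rw [← ht]
    clear ht
    induction t with
    | zero => simp only [map_zero]; exact zero_mem (midMod 𝒜 m)
    | tmul u v =>
      rw [TensorProduct.map_tmul]
      exact Submodule.subset_span ⟨p, q, u, v, hadd, hp, hq, u.2, v.2, rfl⟩
    | add t₁ t₂ ih₁ ih₂ =>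
      rw [map_add]; exact add_mem ih₁ ih₂
  -- identify `aEl = x` and `bEl = x` using the counit laws
  set ψ₁ : H ⊗[K] H →ₗ[K] H :=
    (TensorProduct.lid K H).toLinearMap ∘ₗ
      LinearMap.rTensor H (Coalgebra.counit (R := K)) with hψ₁
  set ψ₂ : H ⊗[K] H →ₗ[K] H :=
    (TensorProduct.rid K H).toLinearMap ∘ₗ
      LinearMap.lTensor H (Coalgebra.counit (R := K)) with hψ₂
  have hψ₁tmul : ∀ u v : H, ψ₁ (u ⊗ₜ[K] v) = Coalgebra.counit (R := K) u • v := by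
    intro u v; simp [hψ₁]
  have hψ₂tmul : ∀ u v : H, ψ₂ (u ⊗ₜ[K] v) = Coalgebra.counit (R := K) v • u := by
    intro u v; simp [hψ₂]
  have hψ₁Δ : ψ₁ (Coalgebra.comul (R := K) x) = x := by
    rw [hψ₁, LinearMap.comp_apply, Coalgebra.rTensor_counit_comul]
    simp
  have hψ₂Δ : ψ₂ (Coalgebra.comul (R := K) x) = x := by
    rw [hψ₂, LinearMap.comp_apply, Coalgebra.lTensor_counit_comul]
    simp
  have hψ₁mid : ∀ w ∈ midMod 𝒜 m, ψ₁ w = 0 := by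
    intro w hw
    induction hw using Submodule.span_induction with
    | mem z hz =>
      obtain ⟨p, q, u, v, hpq, hp, hq, hu, hv, rfl⟩ := hz
      rw [hψ₁tmul, hε p hp u hu, zero_smul]
    | zero => exact map_zero _
    | add y z _ _ hy hz => rw [map_add, hy, hz, add_zero]
    | smul c y _ hy => rw [map_smul, hy, smul_zero]
  have hψ₂mid : ∀ w ∈ midMod 𝒜 m, ψ₂ w = 0 := by
    intro w hw
    induction hw using Submodule.span_induction with
    | mem z hz =>
      obtain ⟨p, q, u, v, hpq, hp, hq, hu, hv, rfl⟩ := hz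
      rw [hψ₂tmul, hε q hq v hv, zero_smul]
    | zero => exact map_zero _
    | add y z _ _ hy hz => rw [map_add, hy, hz, add_zero]
    | smul c y _ hy => rw [map_smul, hy, smul_zero]
  have hcm : Coalgebra.comul (R := K) x =
      1 ⊗ₜ[K] aEl + (bEl ⊗ₜ[K] 1 +
        ∑ pq ∈ ((Finset.HasAntidiagonal.antidiagonal m).erase (0, m)).erase (m, 0), g pq) := by
    rw [hsum, hsplit, hga, hgb]
  have hax : aEl = x := by
    have h := hψ₁Δ
    rw [hcm, map_add, map_add, hψ₁tmul, hψ₁tmul, hψ₁mid _ hrest, Bialgebra.counit_one,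
      one_smul, hε m hm bEl hbEl, zero_smul, add_zero, add_zero] at h
    exact h
  have hbx : bEl = x := by
    have h := hψ₂Δ
    rw [hcm, map_add, map_add, hψ₂tmul, hψ₂tmul, hψ₂mid _ hrest, Bialgebra.counit_one,
      one_smul, hε m hm aEl haEl, zero_smul, add_zero, zero_add] at h
    exact h
  refine ⟨_, hrest, ?_⟩
  rw [hcm, hax, hbx, add_assoc]

theorem antipode_mem
    (hΔ : ∀ m : ℕ, ∀ x ∈ 𝒜 m, Coalgebra.comul (R := K) x ∈
      ∑ pq ∈ Finset.HasAntidiagonal.antidiagonal m,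
        LinearMap.range (TensorProduct.map (𝒜 pq.1).subtype (𝒜 pq.2).subtype))
    (hε : ∀ m : ℕ, 0 < m → ∀ x ∈ 𝒜 m, Coalgebra.counit (R := K) x = 0)
    (hconn : 𝒜 0 = Submodule.span K {(1 : H)}) :
    ∀ m : ℕ, ∀ x ∈ 𝒜 m, antipode (R := K) x ∈ 𝒜 m := by
  intro m
  induction m using Nat.strong_induction_on with
  | _ m ih =>
  intro x hx
  rcases Nat.eq_zero_or_pos m with h0 | hpos
  · subst h0
    have hx' : x ∈ Submodule.span K {(1 : H)} := by rw [← hconn]; exact hx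
    obtain ⟨c, hc⟩ := Submodule.mem_span_singleton.mp hx'
    rw [← hc, map_smul, antipode_one', hconn]
    exact Submodule.smul_mem _ _ (Submodule.mem_span_singleton_self 1)
  · obtain ⟨w, hw, hcm⟩ := comul_split 𝒜 hΔ hε hconn m hpos x hx
    have h0 := HopfAlgebra.mul_antipode_lTensor_comul_apply (R := K) x
    rw [hcm, hε m hpos x hx, map_zero, map_add, map_add, map_add, map_add] at h0
    simp only [LinearMap.lTensor_tmul, LinearMap.mul'_apply, one_mul, antipode_one',
      mul_one] at h0
    -- h0 : S x + x + mul'(lTensor S w) = 0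
    have hE' : ∀ z ∈ midMod 𝒜 m,
        LinearMap.mul' K H ((antipode (R := K)).lTensor H z) ∈ 𝒜 m := by
      intro z hz
      induction hz using Submodule.span_induction with
      | mem z hz =>
        obtain ⟨p, q, u, v, hpq, hp, hq, hu, hv, rfl⟩ := hz
        rw [LinearMap.lTensor_tmul, LinearMap.mul'_apply]
        have hSv : antipode (R := K) v ∈ 𝒜 q := ih q (by omega) v hv
        have := SetLike.mul_mem_graded hu hSv
        rwa [hpq] at this
      | zero => simp only [map_zero]; exact zero_mem _
      | add y z _ _ hy hz => rw [map_add, map_add]; exact add_mem hy hz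
      | smul c y _ hy => rw [map_smul, map_smul]; exact Submodule.smul_mem _ _ hy
    have hE := hE' w hw
    have : antipode (R := K) x =
        -x - LinearMap.mul' K H ((antipode (R := K)).lTensor H w) := by
      linear_combination (norm := module) h0
    rw [this]
    exact sub_mem (neg_mem hx) hE

theorem antipode_add_self_mem
    (hΔ : ∀ m : ℕ, ∀ x ∈ 𝒜 m, Coalgebra.comul (R := K) x ∈
      ∑ pq ∈ Finset.HasAntidiagonal.antidiagonal m,
        LinearMap.range (TensorProduct.map (𝒜 pq.1).subtype (𝒜 pq.2).subtype))
    (hε : ∀ m : ℕ, 0 < m → ∀ x ∈ 𝒜 m, Coalgebra.counit (R := K) x = 0)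
    (hconn : 𝒜 0 = Submodule.span K {(1 : H)})
    (m : ℕ) (hm : 1 ≤ m) (x : H) (hx : x ∈ 𝒜 m) :
    antipode (R := K) x + x ∈ (⨆ i, 𝒜 (i + 1)) * (⨆ i, 𝒜 (i + 1)) := by
  obtain ⟨w, hw, hcm⟩ := comul_split 𝒜 hΔ hε hconn m hm x hx
  have h0 := HopfAlgebra.mul_antipode_rTensor_comul_apply (R := K) x
  rw [hcm, hε m hm x hx, map_zero, map_add, map_add, map_add, map_add] at h0
  simp only [LinearMap.rTensor_tmul, LinearMap.mul'_apply, antipode_one', one_mul,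
    mul_one] at h0
  -- h0 : x + S x + mul'(rTensor S w) = 0
  have hE' : ∀ z ∈ midMod 𝒜 m,
      LinearMap.mul' K H ((antipode (R := K)).rTensor H z) ∈
      (⨆ i, 𝒜 (i + 1)) * (⨆ i, 𝒜 (i + 1)) := by
    intro z hz
    induction hz using Submodule.span_induction with
    | mem z hz =>
      obtain ⟨p, q, u, v, hpq, hp, hq, hu, hv, rfl⟩ := hz
      rw [LinearMap.rTensor_tmul, LinearMap.mul'_apply]
      have hSu : antipode (R := K) u ∈ 𝒜 p := antipode_mem 𝒜 hΔ hε hconn p u hu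
      obtain ⟨p', rfl⟩ : ∃ p', p = p' + 1 := ⟨p - 1, by omega⟩
      obtain ⟨q', rfl⟩ : ∃ q', q = q' + 1 := ⟨q - 1, by omega⟩
      exact Submodule.mul_mem_mul (le_iSup (fun i => 𝒜 (i + 1)) p' hSu)
        (le_iSup (fun i => 𝒜 (i + 1)) q' hv)
    | zero => simp only [map_zero]; exact zero_mem _
    | add y z _ _ hy hz => rw [map_add, map_add]; exact add_mem hy hz
    | smul c y _ hy => rw [map_smul, map_smul]; exact Submodule.smul_mem _ _ hy
  have hE := hE' w hw
  have : antipode (R := K) x + x =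
      -(LinearMap.mul' K H ((antipode (R := K)).rTensor H w)) := by
    linear_combination (norm := module) h0
  rw [this]
  exact neg_mem hE

end ALgraded

open ALaux ALaux2 ALgraded in
/-- **Nilpotency of `S² - id`** -/
theorem antipode_comp_antipode_sub_id_pow_eq_zero'
    (K H : Type*) [Field K] [CharZero K] [Ring H] [HopfAlgebra K H]
    (𝒜 : ℕ → Submodule K H) [GradedAlgebra 𝒜]
    (hΔ : ∀ m : ℕ, ∀ x ∈ 𝒜 m, Coalgebra.comul (R := K) x ∈
      ∑ pq ∈ Finset.HasAntidiagonal.antidiagonal m,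
        LinearMap.range (TensorProduct.map (𝒜 pq.1).subtype (𝒜 pq.2).subtype))
    (hε : ∀ m : ℕ, 0 < m → ∀ x ∈ 𝒜 m, Coalgebra.counit (R := K) x = 0)
    (hconn : 𝒜 0 = Submodule.span K {(1 : H)})
    [hfin : ∀ m, Module.Finite K (𝒜 m)]
    (m : ℕ) (hm : 1 ≤ m) (x : H) (hx : x ∈ 𝒜 m) :
    ((HopfAlgebra.antipode (R := K) ∘ₗ HopfAlgebra.antipode (R := K)
        - LinearMap.id : Module.End K H) ^ m) x = 0 := by
  classical
  set T : Module.End K H :=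
    HopfAlgebra.antipode (R := K) ∘ₗ HopfAlgebra.antipode (R := K) - LinearMap.id with hT
  have hTapp : ∀ y : H, T y =
      HopfAlgebra.antipode (R := K) (HopfAlgebra.antipode (R := K) y) - y := fun y => rfl
  set J : ℕ → Submodule K H := fun k => ⨆ i, 𝒜 (i + k) with hJ
  set P : Submodule K H := J 1 with hP
  have hle : ∀ p : ℕ, 0 < p → 𝒜 p ≤ P := by
    intro p hp
    obtain ⟨p', rfl⟩ : ∃ p', p = p' + 1 := ⟨p - 1, by omega⟩
    exact le_iSup (fun i => 𝒜 (i + 1)) p'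
  have hJmul : ∀ k l : ℕ, J k * J l ≤ J (k + l) := by
    intro k l
    rw [hJ]
    rw [Submodule.iSup_mul]
    refine iSup_le fun i => ?_
    rw [Submodule.mul_iSup]
    refine iSup_le fun j => ?_
    refine le_trans (Submodule.mul_le.mpr fun u hu v hv => ?_)
      (le_iSup (fun i => 𝒜 (i + (k + l))) (i + j))
    have h2 : i + j + (k + l) = i + k + (j + l) := by ring
    rw [h2]
    exact SetLike.mul_mem_graded hu hv
  have hJle : ∀ k l : ℕ, l ≤ k → J k ≤ J l := by
    intro k l hkl
    refine iSup_le fun i => ?_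
    have : i + k = (i + (k - l)) + l := by omega
    rw [this]
    exact le_iSup (fun i => 𝒜 (i + l)) (i + (k - l))
  have hPpow : ∀ k : ℕ, 1 ≤ k → P ^ k ≤ J k := by
    intro k hk
    induction k, hk using Nat.le_induction with
    | base => rw [pow_one]
    | succ k hk ih =>
      rw [pow_succ]
      exact le_trans (mul_le_mul' ih le_rfl) (hJmul k 1)
  have hPdec : ∀ k : ℕ, 1 ≤ k → P ^ (k + 1) ≤ P ^ k := by
    intro k hk
    induction k, hk using Nat.le_induction with
    | base =>
      rw [pow_one, pow_two]
      exact le_trans (le_trans (hJmul 1 1) (hJle 2 1 (by omega))) le_rfl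
    | succ k hk ih =>
      rw [pow_succ, pow_succ]
      exact mul_le_mul' ih le_rfl
  have hS := antipode_mem 𝒜 hΔ hε hconn
  have hSP : ∀ y ∈ P, HopfAlgebra.antipode (R := K) y ∈ P := by
    intro y hy
    refine Submodule.iSup_induction (motive := fun z => HopfAlgebra.antipode (R := K) z ∈ P)
      _ hy (fun i z hz => ?_)
      (by show HopfAlgebra.antipode (R := K) (0 : H) ∈ P; rw [map_zero]; exact zero_mem _)
      (fun a b ha hb => ?_)
    · exact hle (i + 1) (by omega) (hS (i + 1) z hz)
    · show HopfAlgebra.antipode (R := K) (a + b) ∈ P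
      rw [map_add]; exact add_mem ha hb
  have hSPP : ∀ y ∈ P * P, HopfAlgebra.antipode (R := K) y ∈ P * P := by
    intro y hy
    refine Submodule.mul_induction_on hy (fun a ha b hb => ?_) (fun a b ha hb => ?_)
    · rw [antipode_mul']
      exact Submodule.mul_mem_mul (hSP b hb) (hSP a ha)
    · rw [map_add]; exact add_mem ha hb
  have hTP : ∀ y ∈ P, T y ∈ P * P := by
    intro y hy
    refine Submodule.iSup_induction (motive := fun z => T z ∈ P * P)
      _ hy (fun i z hz => ?_)
      (by show T (0 : H) ∈ P * P; rw [map_zero]; exact zero_mem _)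
      (fun a b ha hb => ?_)
    · show T z ∈ P * P
      have hz2 := antipode_add_self_mem 𝒜 hΔ hε hconn (i + 1) (by omega) z hz
      have heq : T z = HopfAlgebra.antipode (R := K)
          (HopfAlgebra.antipode (R := K) z + z) -
          (HopfAlgebra.antipode (R := K) z + z) := by
        rw [map_add, hTapp]; abel
      rw [heq]
      exact sub_mem (hSPP _ hz2) hz2
    · show T (a + b) ∈ P * P
      rw [map_add]; exact add_mem ha hb
  have hT𝒜 : ∀ y ∈ 𝒜 m, T y ∈ 𝒜 m := by
    intro y hy
    rw [hTapp]
    exact sub_mem (hS m _ (hS m y hy)) hy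
  have hTpow : ∀ k : ℕ, 1 ≤ k → ∀ y ∈ P ^ k, T y ∈ P ^ (k + 1) := by
    intro k hk
    induction k, hk using Nat.le_induction with
    | base =>
      intro y hy
      rw [pow_one] at hy
      rw [pow_two]
      exact hTP y hy
    | succ k hk ih =>
      intro y hy
      rw [pow_succ] at hy
      refine Submodule.mul_induction_on hy (fun a ha b hb => ?_) (fun a b ha hb => ?_)
      · have hTab : T (a * b) = T a * b + a * T b + T a * T b := by
          simp only [hTapp, antipode_mul']
          noncomm_ring
        rw [hTab]
        have h1 : T a * b ∈ P ^ (k + 2) := by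
          rw [show k + 2 = (k + 1) + 1 by ring, pow_succ]
          exact Submodule.mul_mem_mul (ih a ha) hb
        have h2 : a * T b ∈ P ^ (k + 2) := by
          rw [show k + 2 = k + 2 by rfl, pow_add]
          exact Submodule.mul_mem_mul ha (by rw [pow_two]; exact hTP b hb)
        have h3 : T a * T b ∈ P ^ (k + 2) := by
          refine hPdec (k + 2) (by omega) ?_
          rw [show k + 2 + 1 = (k + 1) + 2 by ring, pow_add]
          exact Submodule.mul_mem_mul (ih a ha) (by rw [pow_two]; exact hTP b hb)
        exact add_mem (add_mem h1 h2) h3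
      · rw [map_add]; exact add_mem ha hb
  have hiter : ∀ j : ℕ, (T ^ j) x ∈ 𝒜 m ∧ (T ^ j) x ∈ P ^ (j + 1) := by
    intro j
    induction j with
    | zero =>
      rw [pow_zero]
      exact ⟨hx, by rw [zero_add, pow_one]; exact hle m hm hx⟩
    | succ j ihj =>
      have hstep : (T ^ (j + 1)) x = T ((T ^ j) x) := by
        rw [pow_succ']; rfl
      constructor
      · rw [hstep]; exact hT𝒜 _ ihj.1
      · rw [hstep]; exact hTpow (j + 1) (by omega) _ ihj.2
  obtain ⟨hy1, hy2⟩ := hiter m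
  have hy3 : (T ^ m) x ∈ J (m + 1) := hPpow (m + 1) (by omega) hy2
  have hdec0 : ∀ z ∈ J (m + 1), ((DirectSum.decompose 𝒜 z m : 𝒜 m) : H) = 0 := by
    intro z hz
    refine Submodule.iSup_induction
      (motive := fun z => ((DirectSum.decompose 𝒜 z m : 𝒜 m) : H) = 0)
      _ hz (fun i y hy => ?_) (by simp) (fun a b ha hb => ?_)
    · exact DirectSum.decompose_of_mem_ne 𝒜 hy (by omega)
    · show ((DirectSum.decompose 𝒜 (a + b) m : 𝒜 m) : H) = 0
      rw [DirectSum.decompose_add, DirectSum.add_apply, Submodule.coe_add]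
      beta_reduce at ha hb
      rw [ha, hb, add_zero]
  have h1 : ((DirectSum.decompose 𝒜 ((T ^ m) x) m : 𝒜 m) : H) = (T ^ m) x :=
    DirectSum.decompose_of_mem_same 𝒜 hy1
  exact h1.symm.trans (hdec0 _ hy3)

/-- **Nilpotency of `S² - id`** (Aguiar–Lauve, Proposition on composition powers).
Let `H` be a graded connected Hopf algebra over a field `K` of characteristic zero with
finite-dimensional homogeneous components.  For every `m ≥ 1`, the restriction of
`S ∘ S - id` to the homogeneous component `𝒜 m` is nilpotent of order at most `m`. -/
theorem antipode_comp_antipode_sub_id_pow_eq_zero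
    (K H : Type*) [Field K] [CharZero K] [Ring H] [HopfAlgebra K H]
    (𝒜 : ℕ → Submodule K H) [GradedAlgebra 𝒜]
    -- the comultiplication respects the grading
    (hΔ : ∀ m : ℕ, ∀ x ∈ 𝒜 m, Coalgebra.comul (R := K) x ∈
      ∑ pq ∈ Finset.HasAntidiagonal.antidiagonal m,
        LinearMap.range (TensorProduct.map (𝒜 pq.1).subtype (𝒜 pq.2).subtype))
    -- the counit vanishes in positive degrees
    (hε : ∀ m : ℕ, 0 < m → ∀ x ∈ 𝒜 m, Coalgebra.counit (R := K) x = 0)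
    -- graded connectedness: `𝒜 0` is the span of `1`
    (hconn : 𝒜 0 = Submodule.span K {(1 : H)})
    -- finite-dimensional homogeneous components
    [hfin : ∀ m, Module.Finite K (𝒜 m)]
    (m : ℕ) (hm : 1 ≤ m) (x : H) (hx : x ∈ 𝒜 m) :
    ((HopfAlgebra.antipode (R := K) ∘ₗ HopfAlgebra.antipode (R := K)
        - LinearMap.id : Module.End K H) ^ m) x = 0 := by
  exact antipode_comp_antipode_sub_id_pow_eq_zero' K H 𝒜 hΔ hε hconn m hm x hx
end

section
/- Let H be a graded connected Hopf algebra over a field K of characteristic zero, with grading 𝒜 and finite-dimensional homogeneous components. For every natural number n and every m: the characteristic polynomial of the restriction of the even composition power S^(2n) (the 2n-fold composite of the antipode with itself) to 𝒜 m equals (X − 1)^{dim 𝒜 m}, i.e. the characteristic polynomial of the identity of 𝒜 m; and the characteristic polynomial of the restriction of the odd composition power S^(2n+1) to 𝒜 m equals the characteristic polynomial of the restriction of S to 𝒜 m. -/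
open scoped TensorProduct

open Coalgebra HopfAlgebra TensorProduct LinearMap

section CharpolyLemmas
open Polynomial Matrix

variable {K : Type*} [Field K]

lemma my_eval_charpoly {ι : Type*} [Fintype ι] [DecidableEq ι] (M : Matrix ι ι K) (x : K) :
    (M.charpoly).eval x = (Matrix.scalar ι x - M).det := by
  rw [Matrix.charpoly, _root_.eval_det, Matrix.matPolyEquiv_charmatrix]
  rw [eval_sub, eval_X, eval_C]

lemma my_matrix_charpoly_nilpotent {ι : Type*} [Fintype ι] [DecidableEq ι]
    (M : Matrix ι ι K) (hM : IsNilpotent M) : M.charpoly = X ^ (Fintype.card ι) := by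
  have h := Matrix.isNilpotent_charpoly_sub_pow_of_isNilpotent hM
  rw [← sub_eq_zero]
  exact h.eq_zero

lemma my_det_one_sub_nilpotent {ι : Type*} [Fintype ι] [DecidableEq ι]
    (N : Matrix ι ι K) (hN : IsNilpotent N) : (1 - N).det = 1 := by
  have h := my_eval_charpoly N 1
  rw [my_matrix_charpoly_nilpotent N hN] at h
  simpa using h.symm

lemma my_matrix_charpoly_add_nilpotent {ι : Type*} [Fintype ι] [DecidableEq ι] [CharZero K]
    (A B : Matrix ι ι K) (hAB : Commute A B) (hB : IsNilpotent B) :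
    (A + B).charpoly = A.charpoly := by
  have hA0 : A.charpoly ≠ 0 := (Matrix.charpoly_monic A).ne_zero
  rw [← sub_eq_zero]
  apply Polynomial.eq_zero_of_infinite_isRoot
  have hsub : {x : K | ¬ (A.charpoly).IsRoot x} ⊆
      {x : K | ((A + B).charpoly - A.charpoly).IsRoot x} := by
    intro x hx
    simp only [Set.mem_setOf_eq, IsRoot.def, eval_sub, sub_eq_zero] at hx ⊢
    have hdet : (Matrix.scalar ι x - A).det ≠ 0 := by
      rw [← my_eval_charpoly]; exact hx
    have hu : IsUnit (Matrix.scalar ι x - A) := by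
      rw [Matrix.isUnit_iff_isUnit_det]; exact hdet.isUnit
    obtain ⟨u, hu⟩ := hu
    have hcommholder : Commute (Matrix.scalar ι x - A) B :=
      (Matrix.scalar_commute x (fun r' => Commute.all x r') B).sub_left hAB
    have hcomm : Commute ((u : Matrix ι ι K)) B := by rw [hu]; exact hcommholder
    have hnil : IsNilpotent ((↑u⁻¹ : Matrix ι ι K) * B) :=
      (hcomm.units_inv_left).isNilpotent_mul_left hB
    have key : Matrix.scalar ι x - (A + B) = (u : Matrix ι ι K) * (1 - (↑u⁻¹ : Matrix ι ι K) * B) := by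
      rw [mul_sub, mul_one, ← mul_assoc, Units.mul_inv, one_mul, hu,
        sub_add_eq_sub_sub]
    rw [my_eval_charpoly, my_eval_charpoly, key, det_mul, my_det_one_sub_nilpotent _ hnil,
      mul_one, hu]
  apply Set.Infinite.mono hsub
  have : ({x : K | (A.charpoly).IsRoot x}).Finite := Polynomial.finite_setOf_isRoot hA0
  have h2 := this.infinite_compl
  convert h2 using 1
  rfl

lemma my_charpoly_add_nilpotent {V : Type*} [AddCommGroup V] [Module K V]
    [Module.Finite K V] [CharZero K] (f g : Module.End K V) (h : Commute f g)
    (hg : IsNilpotent g) : (f + g).charpoly = f.charpoly := by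
  classical
  let b := Module.Free.chooseBasis K V
  let E := LinearMap.toMatrixAlgEquiv b
  have hE : ∀ f' : Module.End K V, E f' = LinearMap.toMatrix b b f' := fun _ => rfl
  rw [← LinearMap.charpoly_toMatrix (f + g) b, ← LinearMap.charpoly_toMatrix f b,
    ← hE, ← hE, map_add]
  apply my_matrix_charpoly_add_nilpotent
  · exact h.map E
  · exact hg.map E

lemma my_charpoly_one {V : Type*} [AddCommGroup V] [Module K V] [Module.Finite K V] :
    (1 : Module.End K V).charpoly = (X - 1) ^ (Module.finrank K V) := by
  classical
  let b := Module.Free.chooseBasis K V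
  let E := LinearMap.toMatrixAlgEquiv b
  have hE : ∀ f' : Module.End K V, E f' = LinearMap.toMatrix b b f' := fun _ => rfl
  rw [← LinearMap.charpoly_toMatrix 1 b, ← hE, _root_.map_one]
  have h1 : (1 : Matrix (Module.Free.ChooseBasisIndex K V) (Module.Free.ChooseBasisIndex K V) K).charpoly
      = (X - 1) ^ (Fintype.card (Module.Free.ChooseBasisIndex K V)) := by
    rw [Matrix.charpoly]
    have : charmatrix (1 : Matrix (Module.Free.ChooseBasisIndex K V) (Module.Free.ChooseBasisIndex K V) K)
        = Matrix.diagonal (fun _ => (X - 1 : K[X])) := by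
      ext i j
      by_cases hij : i = j
      · subst hij; rw [charmatrix_apply_eq, Matrix.diagonal_apply_eq, Matrix.one_apply_eq, Polynomial.C_1]
      · rw [charmatrix_apply_ne _ _ _ hij, Matrix.diagonal_apply_ne _ hij,
          Matrix.one_apply_ne hij, map_zero, neg_zero]
    rw [this, Matrix.det_diagonal, Finset.prod_const, Finset.card_univ]
  rw [h1, Module.finrank_eq_card_chooseBasisIndex]

end CharpolyLemmas

section Antimult

variable {K : Type*} {H : Type*} [CommRing K] [Ring H] [HopfAlgebra K H]

lemma my_antipode_one : antipode (R := K) (1 : H) = 1 := by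
  have h := mul_antipode_rTensor_comul_apply (R := K) (1 : H)
  rw [Bialgebra.comul_one] at h
  rw [Algebra.TensorProduct.one_def] at h
  simpa using h

lemma my_repr_collapse_right {a : H} {ι : Type*} (r : Coalgebra.Repr K a ι) :
    ∑ i ∈ r.index, counit (R := K) (r.right i) • r.left i = a := by
  have h2 := congrArg (TensorProduct.rid K H) (sum_tmul_counit_eq (R := K) r)
  rw [map_sum] at h2
  simpa [TensorProduct.rid_tmul] using h2

lemma my_repr_collapse_left {a : H} {ι : Type*} (r : Coalgebra.Repr K a ι) :
    ∑ i ∈ r.index, counit (R := K) (r.left i) • r.right i = a := by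
  have h2 := congrArg (TensorProduct.lid K H) (sum_counit_tmul_eq (R := K) r)
  rw [map_sum] at h2
  simpa [TensorProduct.lid_tmul] using h2

/-- apply a linear map to a right-collapse -/
lemma my_map_collapse_right {a : H} {ι : Type*} (r : Coalgebra.Repr K a ι) (φ : H →ₗ[K] H) :
    ∑ i ∈ r.index, counit (R := K) (r.right i) • φ (r.left i) = φ a := by
  have := congrArg φ (my_repr_collapse_right r)
  rw [map_sum] at this
  simpa [map_smul] using this

lemma my_map_collapse_left {a : H} {ι : Type*} (r : Coalgebra.Repr K a ι) (φ : H →ₗ[K] H) :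
    ∑ i ∈ r.index, counit (R := K) (r.left i) • φ (r.right i) = φ a := by
  have := congrArg φ (my_repr_collapse_left r)
  rw [map_sum] at this
  simpa [map_smul] using this

/-- trilinear multiplication helper -/
noncomputable def T3 (f g h : H →ₗ[K] H) : H ⊗[K] (H ⊗[K] H) →ₗ[K] H :=
  LinearMap.mul' K H ∘ₗ TensorProduct.map f (LinearMap.mul' K H ∘ₗ TensorProduct.map g h)

lemma T3_tmul (f g h : H →ₗ[K] H) (x y z : H) :
    T3 f g h (x ⊗ₜ[K] (y ⊗ₜ[K] z)) = f x * (g y * h z) := by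
  simp [T3, LinearMap.mul'_apply]

lemma my_col1 {c : H} {ι : Type*} (r : Coalgebra.Repr K c ι) (W : H) :
    ∑ l ∈ r.index, r.left l * (antipode (R := K) (r.right l) * W)
      = counit (R := K) c • W := by
  calc ∑ l ∈ r.index, r.left l * (antipode (R := K) (r.right l) * W)
      = ∑ l ∈ r.index, (r.left l * antipode (R := K) (r.right l)) * W :=
        Finset.sum_congr rfl fun l _ => (mul_assoc _ _ _).symm
    _ = (∑ l ∈ r.index, r.left l * antipode (R := K) (r.right l)) * W :=
        (Finset.sum_mul _ _ _).symm
    _ = (counit (R := K) c • (1 : H)) * W := by rw [sum_mul_antipode_eq_smul r]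
    _ = counit (R := K) c • W := by rw [smul_mul_assoc, one_mul]

lemma my_col2 {c : H} {ι : Type*} (r : Coalgebra.Repr K c ι) (W : H) :
    ∑ l ∈ r.index, antipode (R := K) (r.left l) * (r.right l * W)
      = counit (R := K) c • W := by
  calc ∑ l ∈ r.index, antipode (R := K) (r.left l) * (r.right l * W)
      = ∑ l ∈ r.index, (antipode (R := K) (r.left l) * r.right l) * W :=
        Finset.sum_congr rfl fun l _ => (mul_assoc _ _ _).symm
    _ = (∑ l ∈ r.index, antipode (R := K) (r.left l) * r.right l) * W :=
        (Finset.sum_mul _ _ _).symm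
    _ = (counit (R := K) c • (1 : H)) * W := by rw [sum_antipode_mul_eq_smul r]
    _ = counit (R := K) c • W := by rw [smul_mul_assoc, one_mul]

end Antimult

section Main
variable {K : Type*} {H : Type*} [CommRing K] [Ring H] [HopfAlgebra K H]

lemma my_col2_mul {a b : H} {ι κ : Type*} (ra' : Coalgebra.Repr K a ι) (rb' : Coalgebra.Repr K b κ) (W : H) :
    ∑ j ∈ ra'.index, ∑ l ∈ rb'.index,
      antipode (R := K) (ra'.left j * rb'.left l) * ((ra'.right j * rb'.right l) * W)
      = counit (R := K) (a * b) • W := by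
  have heq : ∑ p ∈ ra'.index ×ˢ rb'.index,
      (ra'.left p.1 * rb'.left p.2) ⊗ₜ[K] (ra'.right p.1 * rb'.right p.2)
      = CoalgebraStruct.comul (R := K) (a * b) := by
    rw [Finset.sum_product, Bialgebra.comul_mul, ← ra'.eq, ← rb'.eq, Finset.sum_mul_sum]
    simp [Algebra.TensorProduct.tmul_mul_tmul]
  have h := my_col2 (c := a * b)
    ⟨ra'.index ×ˢ rb'.index, fun p => ra'.left p.1 * rb'.left p.2,
      fun p => ra'.right p.1 * rb'.right p.2, heq⟩ W
  rw [Finset.sum_product] at h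
  exact h

theorem my_antipode_mul (a b : H) :
    antipode (R := K) (a * b) = antipode (R := K) b * antipode (R := K) a := by
  classical
  let ra := Coalgebra.Repr.arbitrary K a
  let rb := Coalgebra.Repr.arbitrary K b
  let rra := fun i => Coalgebra.Repr.arbitrary K (ra.right i)
  let rla := fun i => Coalgebra.Repr.arbitrary K (ra.left i)
  let rrb := fun k => Coalgebra.Repr.arbitrary K (rb.right k)
  let rlb := fun k => Coalgebra.Repr.arbitrary K (rb.left k)
  -- Claim B : the quadruple sum X₁ equals `antipode (a*b)`
  have claimB : ∑ i ∈ ra.index, ∑ j ∈ (rra i).index, ∑ k ∈ rb.index, ∑ l ∈ (rrb k).index,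
      antipode (R := K) (ra.left i * rb.left k) *
        ((rra i).left j * ((rrb k).left l *
          (antipode (R := K) ((rrb k).right l) * antipode (R := K) ((rra i).right j))))
      = antipode (R := K) (a * b) := by
    calc ∑ i ∈ ra.index, ∑ j ∈ (rra i).index, ∑ k ∈ rb.index, ∑ l ∈ (rrb k).index,
        antipode (R := K) (ra.left i * rb.left k) *
          ((rra i).left j * ((rrb k).left l *
            (antipode (R := K) ((rrb k).right l) * antipode (R := K) ((rra i).right j))))
        = ∑ i ∈ ra.index, ∑ j ∈ (rra i).index, ∑ k ∈ rb.index,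
            counit (R := K) (rb.right k) •
              (antipode (R := K) (ra.left i * rb.left k) *
                ((rra i).left j * antipode (R := K) ((rra i).right j))) := by
          refine Finset.sum_congr rfl fun i _ => Finset.sum_congr rfl fun j _ =>
            Finset.sum_congr rfl fun k _ => ?_
          rw [← Finset.mul_sum, ← Finset.mul_sum,
            my_col1 (rrb k) (antipode (R := K) ((rra i).right j)), mul_smul_comm,
            mul_smul_comm]
      _ = ∑ i ∈ ra.index, ∑ j ∈ (rra i).index,
            antipode (R := K) (ra.left i * b) *
              ((rra i).left j * antipode (R := K) ((rra i).right j)) := by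
          refine Finset.sum_congr rfl fun i _ => Finset.sum_congr rfl fun j _ => ?_
          have h := my_map_collapse_right rb
            ((LinearMap.mulRight K ((rra i).left j * antipode (R := K) ((rra i).right j))) ∘ₗ
              (antipode (R := K)) ∘ₗ (LinearMap.mulLeft K (ra.left i)))
          simp only [LinearMap.coe_comp, Function.comp_apply, LinearMap.mulRight_apply,
            LinearMap.mulLeft_apply] at h
          exact h
      _ = ∑ i ∈ ra.index,
            counit (R := K) (ra.right i) • antipode (R := K) (ra.left i * b) := by
          refine Finset.sum_congr rfl fun i _ => ?_
          rw [← Finset.mul_sum, sum_mul_antipode_eq_smul (rra i), mul_smul_comm, mul_one]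
      _ = antipode (R := K) (a * b) := by
          have h := my_map_collapse_right ra ((antipode (R := K)) ∘ₗ (LinearMap.mulRight K b))
          simp only [LinearMap.coe_comp, Function.comp_apply, LinearMap.mulRight_apply] at h
          exact h
  -- Claim C : the quadruple sum X₂ equals `antipode b * antipode a`
  have claimC : ∑ i ∈ ra.index, ∑ k ∈ rb.index, ∑ j ∈ (rla i).index, ∑ l ∈ (rlb k).index,
      antipode (R := K) ((rla i).left j * (rlb k).left l) *
        (((rla i).right j * (rlb k).right l) *
          (antipode (R := K) (rb.right k) * antipode (R := K) (ra.right i)))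
      = antipode (R := K) b * antipode (R := K) a := by
    calc ∑ i ∈ ra.index, ∑ k ∈ rb.index, ∑ j ∈ (rla i).index, ∑ l ∈ (rlb k).index,
        antipode (R := K) ((rla i).left j * (rlb k).left l) *
          (((rla i).right j * (rlb k).right l) *
            (antipode (R := K) (rb.right k) * antipode (R := K) (ra.right i)))
        = ∑ i ∈ ra.index, ∑ k ∈ rb.index,
            counit (R := K) (ra.left i * rb.left k) •
              (antipode (R := K) (rb.right k) * antipode (R := K) (ra.right i)) := by
          refine Finset.sum_congr rfl fun i _ => Finset.sum_congr rfl fun k _ => ?_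
          exact my_col2_mul (rla i) (rlb k) _
      _ = ∑ i ∈ ra.index, counit (R := K) (ra.left i) •
            (antipode (R := K) b * antipode (R := K) (ra.right i)) := by
          refine Finset.sum_congr rfl fun i _ => ?_
          have hsplit : ∀ k, counit (R := K) (ra.left i * rb.left k) •
              (antipode (R := K) (rb.right k) * antipode (R := K) (ra.right i))
              = counit (R := K) (ra.left i) • (counit (R := K) (rb.left k) •
                (antipode (R := K) (rb.right k) * antipode (R := K) (ra.right i))) := by
            intro k; rw [Bialgebra.counit_mul, mul_smul]
          rw [Finset.sum_congr rfl fun k _ => hsplit k, ← Finset.smul_sum]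
          congr 1
          have h := my_map_collapse_left rb
            ((LinearMap.mulRight K (antipode (R := K) (ra.right i))) ∘ₗ (antipode (R := K)))
          simp only [LinearMap.coe_comp, Function.comp_apply, LinearMap.mulRight_apply] at h
          exact h
      _ = antipode (R := K) b * antipode (R := K) a := by
          have h := my_map_collapse_left ra
            ((LinearMap.mulLeft K (antipode (R := K) b)) ∘ₗ (antipode (R := K)))
          simp only [LinearMap.coe_comp, Function.comp_apply, LinearMap.mulLeft_apply] at h
          exact h
  rw [← claimB, ← claimC]
  -- switch the nesting of the `b`-side
  have stepb : ∀ i ∈ ra.index, ∀ j ∈ (rra i).index,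
      (∑ k ∈ rb.index, ∑ l ∈ (rrb k).index,
        antipode (R := K) (ra.left i * rb.left k) *
          ((rra i).left j * ((rrb k).left l *
            (antipode (R := K) ((rrb k).right l) * antipode (R := K) ((rra i).right j)))))
      = ∑ k ∈ rb.index, ∑ l ∈ (rlb k).index,
          antipode (R := K) (ra.left i * (rlb k).left l) *
            (((rra i).left j * (rlb k).right l) *
              (antipode (R := K) (rb.right k) * antipode (R := K) ((rra i).right j))) := by
    intro i _ j _
    have hb := sum_tmul_tmul_eq (R := K) rb rlb rrb
    have h2 := congrArg (T3 ((antipode (R := K)) ∘ₗ LinearMap.mulLeft K (ra.left i))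
      (LinearMap.mulLeft K ((rra i).left j))
      ((LinearMap.mulRight K (antipode (R := K) ((rra i).right j))) ∘ₗ (antipode (R := K)))) hb
    simp only [map_sum, T3_tmul, LinearMap.coe_comp, Function.comp_apply,
      LinearMap.mulLeft_apply, LinearMap.mulRight_apply] at h2
    refine Eq.trans (Finset.sum_congr rfl fun k _ => Finset.sum_congr rfl fun l _ => ?_) h2.symm
    simp only [mul_assoc]
  -- switch the nesting of the `a`-side
  have stepa : ∀ k ∈ rb.index, ∀ l ∈ (rlb k).index,
      (∑ i ∈ ra.index, ∑ j ∈ (rra i).index,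
        antipode (R := K) (ra.left i * (rlb k).left l) *
          (((rra i).left j * (rlb k).right l) *
            (antipode (R := K) (rb.right k) * antipode (R := K) ((rra i).right j))))
      = ∑ i ∈ ra.index, ∑ j ∈ (rla i).index,
          antipode (R := K) ((rla i).left j * (rlb k).left l) *
            (((rla i).right j * (rlb k).right l) *
              (antipode (R := K) (rb.right k) * antipode (R := K) (ra.right i))) := by
    intro k _ l _
    have ha := sum_tmul_tmul_eq (R := K) ra rla rra
    have h2 := congrArg (T3 ((antipode (R := K)) ∘ₗ LinearMap.mulRight K ((rlb k).left l))
      (LinearMap.mulRight K ((rlb k).right l))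
      ((LinearMap.mulLeft K (antipode (R := K) (rb.right k))) ∘ₗ (antipode (R := K)))) ha
    simp only [map_sum, T3_tmul, LinearMap.coe_comp, Function.comp_apply,
      LinearMap.mulLeft_apply, LinearMap.mulRight_apply] at h2
    exact h2.symm
  calc ∑ i ∈ ra.index, ∑ j ∈ (rra i).index, ∑ k ∈ rb.index, ∑ l ∈ (rrb k).index,
      antipode (R := K) (ra.left i * rb.left k) *
        ((rra i).left j * ((rrb k).left l *
          (antipode (R := K) ((rrb k).right l) * antipode (R := K) ((rra i).right j))))
      = ∑ i ∈ ra.index, ∑ j ∈ (rra i).index, ∑ k ∈ rb.index, ∑ l ∈ (rlb k).index,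
          antipode (R := K) (ra.left i * (rlb k).left l) *
            (((rra i).left j * (rlb k).right l) *
              (antipode (R := K) (rb.right k) * antipode (R := K) ((rra i).right j))) :=
        Finset.sum_congr rfl fun i hi => Finset.sum_congr rfl fun j hj => stepb i hi j hj
    _ = ∑ i ∈ ra.index, ∑ k ∈ rb.index, ∑ j ∈ (rra i).index, ∑ l ∈ (rlb k).index,
          antipode (R := K) (ra.left i * (rlb k).left l) *
            (((rra i).left j * (rlb k).right l) *
              (antipode (R := K) (rb.right k) * antipode (R := K) ((rra i).right j))) :=
        Finset.sum_congr rfl fun i _ => Finset.sum_comm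
    _ = ∑ k ∈ rb.index, ∑ i ∈ ra.index, ∑ j ∈ (rra i).index, ∑ l ∈ (rlb k).index,
          antipode (R := K) (ra.left i * (rlb k).left l) *
            (((rra i).left j * (rlb k).right l) *
              (antipode (R := K) (rb.right k) * antipode (R := K) ((rra i).right j))) :=
        Finset.sum_comm
    _ = ∑ k ∈ rb.index, ∑ i ∈ ra.index, ∑ l ∈ (rlb k).index, ∑ j ∈ (rra i).index,
          antipode (R := K) (ra.left i * (rlb k).left l) *
            (((rra i).left j * (rlb k).right l) *
              (antipode (R := K) (rb.right k) * antipode (R := K) ((rra i).right j))) :=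
        Finset.sum_congr rfl fun k _ => Finset.sum_congr rfl fun i _ => Finset.sum_comm
    _ = ∑ k ∈ rb.index, ∑ l ∈ (rlb k).index, ∑ i ∈ ra.index, ∑ j ∈ (rra i).index,
          antipode (R := K) (ra.left i * (rlb k).left l) *
            (((rra i).left j * (rlb k).right l) *
              (antipode (R := K) (rb.right k) * antipode (R := K) ((rra i).right j))) :=
        Finset.sum_congr rfl fun k _ => Finset.sum_comm
    _ = ∑ k ∈ rb.index, ∑ l ∈ (rlb k).index, ∑ i ∈ ra.index, ∑ j ∈ (rla i).index,
          antipode (R := K) ((rla i).left j * (rlb k).left l) *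
            (((rla i).right j * (rlb k).right l) *
              (antipode (R := K) (rb.right k) * antipode (R := K) (ra.right i))) :=
        Finset.sum_congr rfl fun k hk => Finset.sum_congr rfl fun l hl => stepa k hk l hl
    _ = ∑ k ∈ rb.index, ∑ i ∈ ra.index, ∑ l ∈ (rlb k).index, ∑ j ∈ (rla i).index,
          antipode (R := K) ((rla i).left j * (rlb k).left l) *
            (((rla i).right j * (rlb k).right l) *
              (antipode (R := K) (rb.right k) * antipode (R := K) (ra.right i))) :=
        Finset.sum_congr rfl fun k _ => Finset.sum_comm
    _ = ∑ i ∈ ra.index, ∑ k ∈ rb.index, ∑ l ∈ (rlb k).index, ∑ j ∈ (rla i).index,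
          antipode (R := K) ((rla i).left j * (rlb k).left l) *
            (((rla i).right j * (rlb k).right l) *
              (antipode (R := K) (rb.right k) * antipode (R := K) (ra.right i))) :=
        Finset.sum_comm
    _ = ∑ i ∈ ra.index, ∑ k ∈ rb.index, ∑ j ∈ (rla i).index, ∑ l ∈ (rlb k).index,
          antipode (R := K) ((rla i).left j * (rlb k).left l) *
            (((rla i).right j * (rlb k).right l) *
              (antipode (R := K) (rb.right k) * antipode (R := K) (ra.right i))) :=
        Finset.sum_congr rfl fun i _ => Finset.sum_congr rfl fun k _ => Finset.sum_comm

end Main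

section Graded
variable {K H : Type*} [Field K] [Ring H] [HopfAlgebra K H]
variable (𝒜 : ℕ → Submodule K H)

/-- the sum of the homogeneous components of degree `≥ k` -/
def myG (k : ℕ) : Submodule K H := ⨆ d : {d : ℕ // k ≤ d}, 𝒜 d.val

/-- the augmentation ideal : sum of the positive-degree components -/
def myI : Submodule K H := myG 𝒜 1

lemma mem_myI {d : ℕ} (hd : 0 < d) {x : H} (hx : x ∈ 𝒜 d) : x ∈ myI 𝒜 :=
  le_iSup (fun d : {d : ℕ // 1 ≤ d} => 𝒜 d.val) ⟨d, hd⟩ hx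

lemma myA_le_myG {k d : ℕ} (hd : k ≤ d) : 𝒜 d ≤ myG 𝒜 k :=
  le_iSup (fun d : {d : ℕ // k ≤ d} => 𝒜 d.val) ⟨d, hd⟩

section GradedAlg
variable [GradedAlgebra 𝒜]

lemma myG_mul_le (p q : ℕ) : myG 𝒜 p * myG 𝒜 q ≤ myG 𝒜 (p + q) := by
  rw [myG, Submodule.iSup_mul]
  refine iSup_le fun d => ?_
  rw [myG, Submodule.mul_iSup]
  refine iSup_le fun e => ?_
  have h1 : (𝒜 d.val * 𝒜 e.val : Submodule K H) ≤ 𝒜 (d.val + e.val) :=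
    Submodule.mul_le.mpr fun x hx y hy => SetLike.mul_mem_graded hx hy
  exact le_trans h1 (myA_le_myG 𝒜 (add_le_add d.2 e.2))

lemma myI_pow_le (k : ℕ) : myI 𝒜 ^ (k + 1) ≤ myG 𝒜 (k + 1) := by
  induction k with
  | zero => rw [pow_one]; exact le_rfl
  | succ k ih =>
      rw [pow_succ]
      exact le_trans (mul_le_mul' ih le_rfl) (myG_mul_le 𝒜 (k + 1) 1)

lemma disjoint_myG (m : ℕ) : Disjoint (𝒜 m) (myG 𝒜 (m + 1)) := by
  have hind := (DirectSum.Decomposition.isInternal 𝒜).submodule_iSupIndep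
  have h := hind.disjoint_biSup (x := m) (y := {d : ℕ | m + 1 ≤ d}) (by simp)
  have he : myG 𝒜 (m + 1) = ⨆ j ∈ {d : ℕ | m + 1 ≤ d}, 𝒜 j := by
    rw [myG, iSup_subtype]
    rfl
  rwa [← he] at h

end GradedAlg

lemma my_mem_finset_sum {ι M : Type*} [AddCommGroup M] [Module K M] (s : Finset ι)
    (p : ι → Submodule K M) {x : M} (hx : x ∈ ∑ i ∈ s, p i) :
    ∃ f : ι → M, (∀ i, f i ∈ p i) ∧ x = ∑ i ∈ s, f i := by
  classical
  induction s using Finset.induction_on generalizing x with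
  | empty =>
      refine ⟨0, fun i => zero_mem _, ?_⟩
      rw [Finset.sum_empty] at hx ⊢
      simpa using hx
  | @insert a s ha ih =>
      rw [Finset.sum_insert ha, Submodule.add_eq_sup, Submodule.mem_sup] at hx
      obtain ⟨y, hy, z, hz, rfl⟩ := hx
      obtain ⟨f, hf, hzf⟩ := ih hz
      refine ⟨Function.update f a y, ?_, ?_⟩
      · intro i
        by_cases h : i = a
        · subst h; simpa using hy
        · simpa [Function.update_of_ne h] using hf i
      · rw [Finset.sum_insert ha, Function.update_self, hzf]
        congr 1
        refine Finset.sum_congr rfl fun i hi => ?_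
        rw [Function.update_of_ne (by rintro rfl; exact ha hi)]

lemma tensor_left_one (hconn : 𝒜 0 = Submodule.span K {(1 : H)}) (q : ℕ) {z : H ⊗[K] H}
    (hz : z ∈ LinearMap.range (TensorProduct.map (𝒜 0).subtype (𝒜 q).subtype)) :
    ∃ a ∈ 𝒜 q, z = (1 : H) ⊗ₜ[K] a := by
  obtain ⟨w, rfl⟩ := hz
  induction w using TensorProduct.induction_on with
  | zero => exact ⟨0, zero_mem _, by simp⟩
  | tmul u v =>
      have hu : (u : H) ∈ Submodule.span K {(1 : H)} := hconn ▸ u.2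
      rw [Submodule.mem_span_singleton] at hu
      obtain ⟨c, hc⟩ := hu
      refine ⟨c • v.1, Submodule.smul_mem _ _ v.2, ?_⟩
      rw [TensorProduct.map_tmul, Submodule.coe_subtype, Submodule.coe_subtype, ← hc,
        TensorProduct.smul_tmul]
  | add w1 w2 ih1 ih2 =>
      obtain ⟨a1, ha1, e1⟩ := ih1
      obtain ⟨a2, ha2, e2⟩ := ih2
      exact ⟨a1 + a2, add_mem ha1 ha2, by rw [map_add, e1, e2, TensorProduct.tmul_add]⟩

lemma tensor_right_one (hconn : 𝒜 0 = Submodule.span K {(1 : H)}) (p : ℕ) {z : H ⊗[K] H}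
    (hz : z ∈ LinearMap.range (TensorProduct.map (𝒜 p).subtype (𝒜 0).subtype)) :
    ∃ b ∈ 𝒜 p, z = b ⊗ₜ[K] (1 : H) := by
  obtain ⟨w, rfl⟩ := hz
  induction w using TensorProduct.induction_on with
  | zero => exact ⟨0, zero_mem _, by simp⟩
  | tmul u v =>
      have hv : (v : H) ∈ Submodule.span K {(1 : H)} := hconn ▸ v.2
      rw [Submodule.mem_span_singleton] at hv
      obtain ⟨c, hc⟩ := hv
      refine ⟨c • u.1, Submodule.smul_mem _ _ u.2, ?_⟩
      rw [TensorProduct.map_tmul, Submodule.coe_subtype, Submodule.coe_subtype, ← hc,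
        TensorProduct.tmul_smul, TensorProduct.smul_tmul']
  | add w1 w2 ih1 ih2 =>
      obtain ⟨b1, hb1, e1⟩ := ih1
      obtain ⟨b2, hb2, e2⟩ := ih2
      exact ⟨b1 + b2, add_mem hb1 hb2, by rw [map_add, e1, e2, TensorProduct.add_tmul]⟩

lemma mulS_mem (hS : ∀ m : ℕ, ∀ x ∈ 𝒜 m, antipode (R := K) x ∈ 𝒜 m) (p q : ℕ) {z : H ⊗[K] H}
    (hz : z ∈ LinearMap.range (TensorProduct.map (𝒜 p).subtype (𝒜 q).subtype)) :
    LinearMap.mul' K H ((antipode (R := K)).rTensor H z) ∈ (𝒜 p * 𝒜 q : Submodule K H) := by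
  obtain ⟨w, rfl⟩ := hz
  induction w using TensorProduct.induction_on with
  | zero => rw [map_zero, map_zero, map_zero]; exact zero_mem _
  | tmul u v =>
      rw [TensorProduct.map_tmul, LinearMap.rTensor_tmul, LinearMap.mul'_apply]
      exact Submodule.mul_mem_mul (hS p u.1 u.2) v.2
  | add w1 w2 ih1 ih2 =>
      rw [map_add, map_add, map_add]
      exact add_mem ih1 ih2

lemma counit_rTensor_zero (hε : ∀ m : ℕ, 0 < m → ∀ x ∈ 𝒜 m, Coalgebra.counit (R := K) x = 0)
    {p q : ℕ} (hp : 0 < p) {z : H ⊗[K] H}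
    (hz : z ∈ LinearMap.range (TensorProduct.map (𝒜 p).subtype (𝒜 q).subtype)) :
    (Coalgebra.counit (R := K) (A := H)).rTensor H z = 0 := by
  obtain ⟨w, rfl⟩ := hz
  induction w using TensorProduct.induction_on with
  | zero => rw [map_zero, map_zero]
  | tmul u v =>
      rw [TensorProduct.map_tmul, LinearMap.rTensor_tmul, Submodule.coe_subtype,
        hε p hp u.1 u.2, TensorProduct.zero_tmul]
  | add w1 w2 ih1 ih2 => rw [map_add, map_add, ih1, ih2, add_zero]

lemma counit_lTensor_zero (hε : ∀ m : ℕ, 0 < m → ∀ x ∈ 𝒜 m, Coalgebra.counit (R := K) x = 0)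
    {p q : ℕ} (hq : 0 < q) {z : H ⊗[K] H}
    (hz : z ∈ LinearMap.range (TensorProduct.map (𝒜 p).subtype (𝒜 q).subtype)) :
    (Coalgebra.counit (R := K) (A := H)).lTensor H z = 0 := by
  obtain ⟨w, rfl⟩ := hz
  induction w using TensorProduct.induction_on with
  | zero => rw [map_zero, map_zero]
  | tmul u v =>
      rw [TensorProduct.map_tmul, LinearMap.lTensor_tmul, Submodule.coe_subtype,
        Submodule.coe_subtype, hε q hq v.1 v.2, TensorProduct.tmul_zero]
  | add w1 w2 ih1 ih2 => rw [map_add, map_add, ih1, ih2, add_zero]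

end Graded

section Key
variable {K H : Type*} [Field K] [Ring H] [HopfAlgebra K H]
variable (𝒜 : ℕ → Submodule K H) [GradedAlgebra 𝒜]

lemma antipode_add_self_mem_sq
    (hΔ : ∀ m : ℕ, ∀ x ∈ 𝒜 m, Coalgebra.comul (R := K) x ∈
      ∑ pq ∈ Finset.HasAntidiagonal.antidiagonal m,
        LinearMap.range (TensorProduct.map (𝒜 pq.1).subtype (𝒜 pq.2).subtype))
    (hε : ∀ m : ℕ, 0 < m → ∀ x ∈ 𝒜 m, Coalgebra.counit (R := K) x = 0)
    (hconn : 𝒜 0 = Submodule.span K {(1 : H)})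
    (hS : ∀ m : ℕ, ∀ x ∈ 𝒜 m, antipode (R := K) x ∈ 𝒜 m)
    {m : ℕ} (hm : 0 < m) {y : H} (hy : y ∈ 𝒜 m) :
    antipode (R := K) y + y ∈ myI 𝒜 * myI 𝒜 := by
  classical
  obtain ⟨f, hf, hfsum⟩ := my_mem_finset_sum _ _ (hΔ m y hy)
  have h0m : ((0 : ℕ), m) ∈ Finset.HasAntidiagonal.antidiagonal m := by simp
  have hm0 : ((m : ℕ), (0 : ℕ)) ∈ Finset.HasAntidiagonal.antidiagonal m := by simp
  have hne : ((m : ℕ), (0 : ℕ)) ≠ ((0 : ℕ), m) := by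
    intro hcontra
    exact hm.ne' (congrArg Prod.fst hcontra)
  obtain ⟨a, ham, hfa⟩ := tensor_left_one 𝒜 hconn m (hf (0, m))
  obtain ⟨b, hbm, hfb⟩ := tensor_right_one 𝒜 hconn m (hf (m, 0))
  set s₂ := ((Finset.HasAntidiagonal.antidiagonal m).erase (0, m)).erase (m, 0) with hs₂
  have hm0' : ((m : ℕ), (0 : ℕ)) ∈ (Finset.HasAntidiagonal.antidiagonal m).erase (0, m) :=
    Finset.mem_erase.mpr ⟨hne, hm0⟩
  have hsplit : Coalgebra.comul (R := K) y = f (0, m) + (f (m, 0) + ∑ pq ∈ s₂, f pq) := by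
    rw [hfsum, ← Finset.add_sum_erase _ f h0m, ← Finset.add_sum_erase _ f hm0']
  have hpos : ∀ pq ∈ s₂, 0 < pq.1 ∧ 0 < pq.2 := by
    intro pq hpq
    rw [hs₂, Finset.mem_erase, Finset.mem_erase] at hpq
    obtain ⟨hne2, hne1, hmem⟩ := hpq
    have hsum : pq.1 + pq.2 = m := Finset.HasAntidiagonal.mem_antidiagonal.mp hmem
    constructor
    · refine Nat.pos_of_ne_zero fun h1 => hne1 ?_
      have : pq.2 = m := by omega
      exact Prod.ext h1 this
    · refine Nat.pos_of_ne_zero fun h2 => hne2 ?_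
      have : pq.1 = m := by omega
      exact Prod.ext this h2
  -- identification a = y
  have hay : a = y := by
    have hco := Coalgebra.rTensor_counit_comul (R := K) y
    rw [hsplit, map_add, map_add, map_sum, hfa, hfb, LinearMap.rTensor_tmul,
      LinearMap.rTensor_tmul, Bialgebra.counit_one, hε m hm b hbm,
      TensorProduct.zero_tmul] at hco
    rw [Finset.sum_congr rfl fun pq hpq =>
      counit_rTensor_zero 𝒜 hε (hpos pq hpq).1 (hf pq)] at hco
    rw [Finset.sum_const, smul_zero, add_zero, add_zero] at hco
    have h2 := congrArg (TensorProduct.lid K H) hco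
    simpa [TensorProduct.lid_tmul] using h2
  -- identification b = y
  have hby : b = y := by
    have hco := Coalgebra.lTensor_counit_comul (R := K) y
    rw [hsplit, map_add, map_add, map_sum, hfa, hfb, LinearMap.lTensor_tmul,
      LinearMap.lTensor_tmul, Bialgebra.counit_one, hε m hm a ham,
      TensorProduct.tmul_zero] at hco
    rw [Finset.sum_congr rfl fun pq hpq =>
      counit_lTensor_zero 𝒜 hε (hpos pq hpq).2 (hf pq)] at hco
    rw [Finset.sum_const, smul_zero, add_zero, zero_add] at hco
    have h2 := congrArg (TensorProduct.rid K H) hco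
    simpa [TensorProduct.rid_tmul] using h2
  -- the antipode identity
  have hanti : LinearMap.mul' K H ((antipode (R := K)).rTensor H
      (Coalgebra.comul (R := K) y)) = 0 := by
    rw [mul_antipode_rTensor_comul_apply, hε m hm y hy, map_zero]
  rw [hsplit, map_add, map_add, map_add, map_add, map_sum, map_sum, hfa, hfb,
    LinearMap.rTensor_tmul, LinearMap.rTensor_tmul, LinearMap.mul'_apply,
    LinearMap.mul'_apply, my_antipode_one, one_mul, mul_one, hay, hby] at hanti
  -- hanti : y + (antipode y + ∑ ...) = 0
  have hmem : ∑ pq ∈ s₂, LinearMap.mul' K H ((antipode (R := K)).rTensor H (f pq))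
      ∈ myI 𝒜 * myI 𝒜 := by
    refine Submodule.sum_mem _ fun pq hpq => ?_
    refine SetLike.le_def.mp (mul_le_mul' (le_of_eq_of_le rfl ?_) (le_of_eq_of_le rfl ?_))
      (mulS_mem 𝒜 hS pq.1 pq.2 (hf pq))
    · exact fun x hx => mem_myI 𝒜 (hpos pq hpq).1 hx
    · exact fun x hx => mem_myI 𝒜 (hpos pq hpq).2 hx
  have key : antipode (R := K) y + y
      = -∑ pq ∈ s₂, LinearMap.mul' K H ((antipode (R := K)).rTensor H (f pq)) := by
    have h3 : (antipode (R := K) y + y) +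
        ∑ pq ∈ s₂, LinearMap.mul' K H ((antipode (R := K)).rTensor H (f pq)) = 0 := by
      rw [← hanti]; abel
    exact eq_neg_of_add_eq_zero_left h3
  rw [key]
  exact neg_mem hmem

end Key

section Nilp
variable {K H : Type*} [Field K] [Ring H] [HopfAlgebra K H]
variable (𝒜 : ℕ → Submodule K H) [GradedAlgebra 𝒜]
variable (hΔ : ∀ m : ℕ, ∀ x ∈ 𝒜 m, Coalgebra.comul (R := K) x ∈
      ∑ pq ∈ Finset.HasAntidiagonal.antidiagonal m,
        LinearMap.range (TensorProduct.map (𝒜 pq.1).subtype (𝒜 pq.2).subtype))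
    (hε : ∀ m : ℕ, 0 < m → ∀ x ∈ 𝒜 m, Coalgebra.counit (R := K) x = 0)
    (hconn : 𝒜 0 = Submodule.span K {(1 : H)})
    (hS : ∀ m : ℕ, ∀ x ∈ 𝒜 m, antipode (R := K) x ∈ 𝒜 m)

include hS

omit [GradedAlgebra 𝒜] in
lemma antipode_myI_mem : ∀ x ∈ myI 𝒜, antipode (R := K) x ∈ myI 𝒜 := by
  intro x hx
  refine Submodule.iSup_induction' (p := fun d : {d : ℕ // 1 ≤ d} => 𝒜 d.val)
    (motive := fun x _ => antipode (R := K) x ∈ myI 𝒜) ?_ ?_ ?_ hx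
  · intro d x hxd
    exact mem_myI 𝒜 d.2 (hS d.val x hxd)
  · show antipode (R := K) (0 : H) ∈ myI 𝒜
    rw [map_zero]; exact zero_mem _
  · intro x y _ _ hx hy
    show antipode (R := K) (x + y) ∈ myI 𝒜
    rw [map_add]; exact add_mem hx hy

lemma Ssq_pow_mem (k : ℕ) :
    ∀ x ∈ myI 𝒜 ^ (k + 1), antipode (R := K) (antipode (R := K) x) ∈ myI 𝒜 ^ (k + 1) := by
  induction k with
  | zero =>
      intro x hx
      rw [pow_one] at hx ⊢
      exact antipode_myI_mem 𝒜 hS _ (antipode_myI_mem 𝒜 hS _ hx)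
  | succ k ih =>
      intro x hx
      rw [pow_succ] at hx ⊢
      refine Submodule.mul_induction_on hx ?_ ?_
      · intro u hu v hv
        rw [my_antipode_mul, my_antipode_mul]
        exact Submodule.mul_mem_mul (ih u hu)
          (antipode_myI_mem 𝒜 hS _ (antipode_myI_mem 𝒜 hS _ hv))
      · intro z w hz hw
        rw [map_add, map_add]; exact add_mem hz hw

include hΔ hε hconn in
lemma N_step_one :
    ∀ x ∈ myI 𝒜, antipode (R := K) (antipode (R := K) x) - x ∈ myI 𝒜 ^ 2 := by
  intro x hx
  refine Submodule.iSup_induction' (p := fun d : {d : ℕ // 1 ≤ d} => 𝒜 d.val)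
    (motive := fun x _ => antipode (R := K) (antipode (R := K) x) - x ∈ myI 𝒜 ^ 2)
    ?_ ?_ ?_ hx
  · intro d z hzd
    have e1 := antipode_add_self_mem_sq 𝒜 hΔ hε hconn hS d.2 hzd
    have e2 := antipode_add_self_mem_sq 𝒜 hΔ hε hconn hS d.2 (hS d.val z hzd)
    have hre : antipode (R := K) (antipode (R := K) z) - z
        = (antipode (R := K) (antipode (R := K) z) + antipode (R := K) z)
          - (antipode (R := K) z + z) := by abel
    rw [hre, sq]
    exact sub_mem e2 e1
  · show antipode (R := K) (antipode (R := K) (0 : H)) - 0 ∈ myI 𝒜 ^ 2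
    rw [map_zero, map_zero, sub_zero]; exact zero_mem _
  · intro z w _ _ hz hw
    show antipode (R := K) (antipode (R := K) (z + w)) - (z + w) ∈ myI 𝒜 ^ 2
    have : antipode (R := K) (antipode (R := K) (z + w)) - (z + w)
        = (antipode (R := K) (antipode (R := K) z) - z)
          + (antipode (R := K) (antipode (R := K) w) - w) := by
      rw [map_add, map_add]; abel
    rw [this]; exact add_mem hz hw

include hΔ hε hconn in
lemma N_pow_step (k : ℕ) :
    ∀ x ∈ myI 𝒜 ^ (k + 1),
      antipode (R := K) (antipode (R := K) x) - x ∈ myI 𝒜 ^ (k + 2) := by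
  induction k with
  | zero =>
      intro x hx
      rw [pow_one] at hx
      exact N_step_one 𝒜 hΔ hε hconn hS x hx
  | succ k ih =>
      intro x hx
      rw [pow_succ] at hx
      refine Submodule.mul_induction_on hx ?_ ?_
      · intro u hu v hv
        have hre : antipode (R := K) (antipode (R := K) (u * v)) - u * v
            = (antipode (R := K) (antipode (R := K) u) - u)
                * antipode (R := K) (antipode (R := K) v)
              + u * (antipode (R := K) (antipode (R := K) v) - v) := by
          rw [my_antipode_mul, my_antipode_mul, sub_mul, mul_sub]
          abel
        rw [hre]
        refine add_mem ?_ ?_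
        · have h1 := ih u hu
          have h2 : antipode (R := K) (antipode (R := K) v) ∈ myI 𝒜 :=
            antipode_myI_mem 𝒜 hS _ (antipode_myI_mem 𝒜 hS _ hv)
          have h3 := Submodule.mul_mem_mul h1 h2
          rwa [← pow_succ] at h3
        · have h1 := N_step_one 𝒜 hΔ hε hconn hS v hv
          have h3 := Submodule.mul_mem_mul hu h1
          rwa [← pow_add] at h3
      · intro z w hz hw
        have : antipode (R := K) (antipode (R := K) (z + w)) - (z + w)
            = (antipode (R := K) (antipode (R := K) z) - z)
              + (antipode (R := K) (antipode (R := K) w) - w) := by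
          rw [map_add, map_add]; abel
        rw [this]; exact add_mem hz hw

end Nilp

section Final
variable {K H : Type*} [Field K] [Ring H] [HopfAlgebra K H]
variable (𝒜 : ℕ → Submodule K H) [GradedAlgebra 𝒜]

lemma N_pow_vanish
    (hΔ : ∀ m : ℕ, ∀ x ∈ 𝒜 m, Coalgebra.comul (R := K) x ∈
      ∑ pq ∈ Finset.HasAntidiagonal.antidiagonal m,
        LinearMap.range (TensorProduct.map (𝒜 pq.1).subtype (𝒜 pq.2).subtype))
    (hε : ∀ m : ℕ, 0 < m → ∀ x ∈ 𝒜 m, Coalgebra.counit (R := K) x = 0)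
    (hconn : 𝒜 0 = Submodule.span K {(1 : H)})
    (hS : ∀ m : ℕ, ∀ x ∈ 𝒜 m, antipode (R := K) x ∈ 𝒜 m)
    (m : ℕ) : ∀ x ∈ 𝒜 m,
    ((((antipode (R := K) : Module.End K H) * antipode (R := K) - 1 : Module.End K H)) ^ (m + 1)) x
      = 0 := by
  intro x hx
  have hEapp : ∀ z : H,
      ((antipode (R := K) : Module.End K H) * antipode (R := K) - 1 : Module.End K H) z
        = antipode (R := K) (antipode (R := K) z) - z := by
    intro z
    rw [LinearMap.sub_apply, Module.End.mul_apply, Module.End.one_apply]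
  rcases Nat.eq_zero_or_pos m with hm | hm
  · subst hm
    rw [pow_one, hEapp]
    have hx' : x ∈ Submodule.span K {(1 : H)} := hconn ▸ hx
    rw [Submodule.mem_span_singleton] at hx'
    obtain ⟨c, hc⟩ := hx'
    rw [← hc, map_smul, map_smul, my_antipode_one, my_antipode_one, sub_self]
  · have hstep : ∀ j : ℕ,
        ((((antipode (R := K) : Module.End K H) * antipode (R := K) - 1 : Module.End K H)) ^ j) x
            ∈ myI 𝒜 ^ (j + 1)
        ∧ ((((antipode (R := K) : Module.End K H) * antipode (R := K) - 1 : Module.End K H)) ^ j) x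
            ∈ 𝒜 m := by
      intro j
      induction j with
      | zero =>
          constructor
          · rw [pow_zero, Module.End.one_apply, pow_one]
            exact mem_myI 𝒜 hm hx
          · rw [pow_zero, Module.End.one_apply]; exact hx
      | succ j ih =>
          have h1 : ((((antipode (R := K) : Module.End K H) * antipode (R := K) - 1
                : Module.End K H)) ^ (j + 1)) x
              = ((antipode (R := K) : Module.End K H) * antipode (R := K) - 1 : Module.End K H)
                (((((antipode (R := K) : Module.End K H) * antipode (R := K) - 1
                  : Module.End K H)) ^ j) x) := by
            rw [pow_succ', Module.End.mul_apply]
          constructor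
          · rw [h1, hEapp]
            exact N_pow_step 𝒜 hΔ hε hconn hS j _ ih.1
          · rw [h1, hEapp]
            exact sub_mem (hS m _ (hS m _ ih.2)) ih.2
    have h0 : ((((antipode (R := K) : Module.End K H) * antipode (R := K) - 1
        : Module.End K H)) ^ m) x = 0 := by
      have h1 := (hstep m).1
      have h2 := (hstep m).2
      obtain ⟨m', rfl⟩ : ∃ m', m = m' + 1 := ⟨m - 1, by omega⟩
      exact Submodule.disjoint_def.mp (disjoint_myG 𝒜 (m' + 1)) _ h2 (myI_pow_le 𝒜 (m' + 1) h1)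
    rw [pow_succ', Module.End.mul_apply, h0, map_zero]

end Final

/-- **Characteristic polynomials of composition powers of the antipode** (Aguiar–Lauve).
Let `H` be a graded connected Hopf algebra over a field `K` of characteristic zero with
finite-dimensional homogeneous components.  For all `n m : ℕ`, the characteristic polynomial
of `S^(2n)` restricted to `𝒜 m` is `(X - 1)^{dim 𝒜 m}` (the characteristic polynomial of the
identity), and that of `S^(2n+1)` restricted to `𝒜 m` equals the characteristic polynomial of
`S` restricted to `𝒜 m`. -/
theorem charpoly_antipode_comp_pow
    (K H : Type*) [Field K] [CharZero K] [Ring H] [HopfAlgebra K H]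
    (𝒜 : ℕ → Submodule K H) [GradedAlgebra 𝒜]
    -- the comultiplication respects the grading
    (hΔ : ∀ m : ℕ, ∀ x ∈ 𝒜 m, Coalgebra.comul (R := K) x ∈
      ∑ pq ∈ Finset.HasAntidiagonal.antidiagonal m,
        LinearMap.range (TensorProduct.map (𝒜 pq.1).subtype (𝒜 pq.2).subtype))
    -- the counit vanishes in positive degrees
    (hε : ∀ m : ℕ, 0 < m → ∀ x ∈ 𝒜 m, Coalgebra.counit (R := K) x = 0)
    -- graded connectedness: `𝒜 0` is the span of `1`
    (hconn : 𝒜 0 = Submodule.span K {(1 : H)})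
    -- finite-dimensional homogeneous components
    [hfin : ∀ m, Module.Finite K (𝒜 m)]
    -- the antipode and its composition powers preserve the grading
    (hS : ∀ m : ℕ, ∀ x ∈ 𝒜 m, HopfAlgebra.antipode (R := K) x ∈ 𝒜 m)
    (hSpow : ∀ (k m : ℕ), ∀ x ∈ 𝒜 m,
      ((HopfAlgebra.antipode (R := K) : Module.End K H) ^ k) x ∈ 𝒜 m)
    (n m : ℕ) :
    LinearMap.charpoly
        ((((HopfAlgebra.antipode (R := K) : Module.End K H) ^ (2 * n)).restrict
          (hSpow (2 * n) m)) : Module.End K (𝒜 m)) =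
      (Polynomial.X - 1) ^ Module.finrank K (𝒜 m) ∧
    LinearMap.charpoly
        ((((HopfAlgebra.antipode (R := K) : Module.End K H) ^ (2 * n + 1)).restrict
          (hSpow (2 * n + 1) m)) : Module.End K (𝒜 m)) =
      LinearMap.charpoly ((HopfAlgebra.antipode (R := K)).restrict (hS m)) := by
  haveI := hfin m
  set A : Module.End K (𝒜 m) := (HopfAlgebra.antipode (R := K)).restrict (hS m) with hAdef
  have hrestr : ∀ k : ℕ,
      (((HopfAlgebra.antipode (R := K) : Module.End K H) ^ k).restrict (hSpow k m))
        = A ^ k := by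
    intro k
    rw [hAdef]
    exact (Module.End.pow_restrict k (hS m)).symm
  have hcoe : ∀ (j : ℕ) (x : 𝒜 m), (((A * A - 1) ^ j) x : H)
      = ((((antipode (R := K) : Module.End K H) * antipode (R := K) - 1 : Module.End K H) ^ j))
          (x : H) := by
    intro j
    induction j with
    | zero =>
        intro x
        rw [pow_zero, pow_zero, Module.End.one_apply, Module.End.one_apply]
    | succ j ih =>
        intro x
        rw [pow_succ', pow_succ', Module.End.mul_apply, Module.End.mul_apply, ← ih x]
        generalize ((A * A - 1) ^ j) x = y
        rw [LinearMap.sub_apply, LinearMap.sub_apply, Module.End.mul_apply, Module.End.mul_apply,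
          Module.End.one_apply, Module.End.one_apply, AddSubgroupClass.coe_sub, hAdef,
          LinearMap.restrict_coe_apply, LinearMap.restrict_coe_apply]
  have hnil : IsNilpotent (A * A - 1) := by
    refine ⟨m + 1, ?_⟩
    ext x
    have h1 := hcoe (m + 1) x
    have h2 := N_pow_vanish 𝒜 hΔ hε hconn hS m x x.2
    rw [LinearMap.zero_apply]
    rw [h1, h2, ZeroMemClass.coe_zero]
  have heven : ∀ j : ℕ, IsNilpotent (A ^ (2 * j) - 1) := by
    intro j
    obtain ⟨q, hq⟩ := sub_dvd_pow_sub_pow ((Polynomial.X : Polynomial K) ^ 2) 1 j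
    have key : A ^ (2 * j) - 1 = (A * A - 1) * (Polynomial.aeval A q) := by
      have h2 := congrArg (Polynomial.aeval A) hq
      simp only [map_sub, map_pow, map_mul, map_one, Polynomial.aeval_X] at h2
      rw [← pow_mul, one_pow, sq] at h2
      exact h2
    rw [key]
    have h1 : Commute ((Polynomial.X : Polynomial K) ^ 2 - 1) q := Commute.all _ _
    have h3 := h1.map (Polynomial.aeval A)
    simp only [map_sub, map_pow, map_one, Polynomial.aeval_X] at h3
    rw [sq] at h3
    exact h3.isNilpotent_mul_right hnil
  constructor
  · rw [hrestr (2 * n)]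
    have hsplit : A ^ (2 * n) = 1 + (A ^ (2 * n) - 1) := by abel
    rw [hsplit, my_charpoly_add_nilpotent 1 _ (Commute.one_left _) (by
      have := heven n
      exact this), my_charpoly_one]
  · rw [hrestr (2 * n + 1)]
    have hsplit : A ^ (2 * n + 1) = A + (A ^ (2 * n) - 1) * A := by
      rw [pow_succ]
      ext x
      simp
    have hcA : Commute (A ^ (2 * n) - 1) A := by
      show _ = _
      ext x
      simp only [Module.End.mul_apply, LinearMap.sub_apply, Module.End.one_apply, map_sub]
      rw [← Module.End.mul_apply, ← Module.End.mul_apply, ← pow_succ, ← pow_succ']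
    have hMA : IsNilpotent ((A ^ (2 * n) - 1) * A) := hcA.isNilpotent_mul_right (heven n)
    have hcomm2 : Commute A ((A ^ (2 * n) - 1) * A) :=
      hcA.symm.mul_right (Commute.refl A)
    rw [hsplit, my_charpoly_add_nilpotent A _ hcomm2 hMA]
end

section
/- For every natural number m, the number of self-conjugate partitions of m equals the number of partitions of m with an even number of even parts minus the number of partitions of m with an odd number of even parts; that is, c(m) + o(m) = e(m), where c(m) is the number of self-conjugate partitions of m, e(m) is the number of partitions of m having an even number of even parts, and o(m) is the number of partitions of m having an odd number of even parts. -/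
/-- The multiset of parts of the conjugate partition of a partition with parts `s`:
its `j`-th part is the number of parts of `s` that are `≥ j` (transpose of the Young
diagram); we record one entry for each `j ≥ 1` for which this count is positive. -/
def conjParts (s : Multiset ℕ) : Multiset ℕ :=
  ((Finset.Icc 1 s.sum).val.map fun j => (s.filter fun a => j ≤ a).card).filter fun c => 0 < c

/-- A partition is self-conjugate if it coincides with its conjugate. -/
def Nat.Partition.SelfConjugate {m : ℕ} (p : Nat.Partition m) : Prop :=
  conjParts p.parts = p.parts

open YoungDiagram Finset

lemma card_eq_sum_rowLens (μ : YoungDiagram) :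
    μ.cells.card = ((μ.rowLens : Multiset ℕ)).sum := by
  have h1 : ((μ.rowLens : Multiset ℕ)).sum = ∑ i ∈ Finset.range (μ.colLen 0), μ.rowLen i := rfl
  rw [h1]
  rw [Finset.card_eq_sum_card_fiberwise (f := Prod.fst) (t := Finset.range (μ.colLen 0))
    (fun c hc => by
      rw [Finset.mem_coe, Finset.mem_range]
      have := (mem_iff_lt_colLen (μ := μ)).1 (by simpa using hc)
      exact lt_of_lt_of_le this (μ.colLen_anti 0 c.2 (Nat.zero_le _)))]
  refine Finset.sum_congr rfl fun i _ => ?_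
  rw [rowLen_eq_card]
  rfl

lemma colLen_rowLen_iff (μ : YoungDiagram) (i j : ℕ) : i < μ.colLen j ↔ j < μ.rowLen i :=
  (mem_iff_lt_colLen.symm).trans mem_iff_lt_rowLen

lemma filterLen (μ : YoungDiagram) (j : ℕ) :
    Multiset.card (((μ.rowLens : Multiset ℕ)).filter fun a => j + 1 ≤ a) = μ.colLen j := by
  have h2 : (Finset.range (μ.colLen 0)).filter (fun i => j + 1 ≤ μ.rowLen i)
      = Finset.range (μ.colLen j) := by
    ext i
    simp only [Finset.mem_filter, Finset.mem_range]
    have k1 := colLen_rowLen_iff μ i j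
    have k2 : μ.colLen j ≤ μ.colLen 0 := μ.colLen_anti 0 j (Nat.zero_le _)
    omega
  calc Multiset.card (((μ.rowLens : Multiset ℕ)).filter fun a => j + 1 ≤ a)
      = Multiset.countP (fun a => j + 1 ≤ a) ((μ.rowLens : Multiset ℕ)) :=
        (Multiset.countP_eq_card_filter _ _).symm
    _ = Multiset.countP ((fun a => j + 1 ≤ a) ∘ μ.rowLen) (Finset.range (μ.colLen 0)).val := by
        rw [show ((μ.rowLens : Multiset ℕ)) = (Finset.range (μ.colLen 0)).val.map μ.rowLen from rfl,
          Multiset.countP_map]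
        simp [Function.comp, Multiset.countP_eq_card_filter]
    _ = Multiset.card (Multiset.filter (fun i => j + 1 ≤ μ.rowLen i) (Finset.range (μ.colLen 0)).val) := by
        rw [Multiset.countP_eq_card_filter]
        simp [Function.comp]
    _ = ((Finset.range (μ.colLen 0)).filter (fun i => j + 1 ≤ μ.rowLen i)).card := by
        rw [Finset.card_def, Finset.filter_val]
    _ = μ.colLen j := by rw [h2, Finset.card_range]

lemma rowLen_zero_le_card (μ : YoungDiagram) : μ.rowLen 0 ≤ μ.cells.card := by
  rw [rowLen_eq_card]
  exact Finset.card_le_card (Finset.filter_subset _ _)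

lemma conjParts_rowLens (μ : YoungDiagram) :
    conjParts (μ.rowLens : Multiset ℕ) = ((μ.transpose.rowLens : Multiset ℕ)) := by
  set M := ((μ.rowLens : Multiset ℕ)).sum with hM
  have hMcard : M = μ.cells.card := (card_eq_sum_rowLens μ).symm
  have hIcc : Finset.Icc 1 M = (Finset.range M).map ⟨Nat.succ, Nat.succ_injective⟩ := by
    ext i
    simp only [Finset.mem_Icc, Finset.mem_map, Finset.mem_range, Function.Embedding.coeFn_mk]
    constructor
    · intro h; exact ⟨i - 1, by omega, by omega⟩
    · rintro ⟨a, ha, rfl⟩; omega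
  have step1 : conjParts (μ.rowLens : Multiset ℕ)
      = ((Finset.range M).val.map (fun i => μ.colLen i)).filter (fun c => 0 < c) := by
    rw [conjParts, ← hM, hIcc, Finset.map_val, Multiset.map_map]
    congr 1
    apply Multiset.map_congr rfl
    intro i _
    simpa using filterLen μ i
  rw [step1]
  have step3 : (Finset.range M).filter (fun i => 0 < μ.colLen i) = Finset.range (μ.rowLen 0) := by
    ext i
    simp only [Finset.mem_filter, Finset.mem_range]
    have k1 := colLen_rowLen_iff μ 0 i
    have k2 := hMcard ▸ rowLen_zero_le_card μ
    omega
  have step2 : ((Finset.range M).val.map (fun i => μ.colLen i)).filter (fun c => 0 < c)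
      = ((Finset.range (μ.rowLen 0)).val).map (fun i => μ.colLen i) := by
    rw [Multiset.filter_map]
    congr 1
    rw [show Multiset.filter ((fun c => 0 < c) ∘ fun i => μ.colLen i) (Finset.range M).val
        = ((Finset.range M).filter (fun i => 0 < μ.colLen i)).val from (Finset.filter_val _ _).symm,
      step3]
  rw [step2]
  rw [show ((μ.transpose.rowLens : Multiset ℕ)) =
      (Finset.range (μ.transpose.colLen 0)).val.map μ.transpose.rowLen from rfl]
  rw [show μ.transpose.colLen 0 = μ.rowLen 0 from μ.colLen_transpose 0]
  apply Multiset.map_congr rfl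
  intro i _
  exact (μ.rowLen_transpose i).symm

namespace SCAux

def toYD {m : ℕ} (p : Nat.Partition m) : YoungDiagram :=
  equivListRowLens.symm ⟨Multiset.sort p.parts (· ≥ ·), (Multiset.pairwise_sort _ _).sortedGE, by
    intro x hx
    exact p.parts_pos (by rwa [← Multiset.mem_sort (r := (· ≥ ·))])⟩

lemma rowLens_toYD {m : ℕ} (p : Nat.Partition m) :
    ((toYD p).rowLens : Multiset ℕ) = p.parts := by
  have : (toYD p).rowLens = Multiset.sort p.parts (· ≥ ·) := by
    have := congrArg Subtype.val (equivListRowLens.apply_symm_apply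
      ⟨Multiset.sort p.parts (· ≥ ·), (Multiset.pairwise_sort _ _).sortedGE, by
        intro x hx
        exact p.parts_pos (by rwa [← Multiset.mem_sort (r := (· ≥ ·))])⟩)
    simpa [toYD] using this
  rw [this, Multiset.sort_eq]

lemma card_toYD {m : ℕ} (p : Nat.Partition m) : (toYD p).cells.card = m := by
  rw [card_eq_sum_rowLens, rowLens_toYD, p.parts_sum]

lemma yd_eq_of_rowLens_multiset_eq {μ ν : YoungDiagram}
    (h : (μ.rowLens : Multiset ℕ) = (ν.rowLens : Multiset ℕ)) : μ = ν := by
  have : μ.rowLens = ν.rowLens :=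
    List.Perm.eq_of_sortedGE (rowLens_sorted μ) (rowLens_sorted ν) (Multiset.coe_eq_coe.1 h)
  exact equivListRowLens.injective (Subtype.ext this)

lemma selfConjugate_iff {m : ℕ} (p : Nat.Partition m) :
    p.SelfConjugate ↔ (toYD p).transpose = toYD p := by
  unfold Nat.Partition.SelfConjugate
  rw [← rowLens_toYD p, conjParts_rowLens]
  constructor
  · exact yd_eq_of_rowLens_multiset_eq
  · intro h; rw [h]

def fromYD {m : ℕ} (μ : YoungDiagram) (hm : μ.cells.card = m) : Nat.Partition m where
  parts := (μ.rowLens : Multiset ℕ)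
  parts_pos := fun hi => μ.pos_of_mem_rowLens _ (by simpa using hi)
  parts_sum := by rw [← card_eq_sum_rowLens]; exact hm

lemma fromYD_toYD {m : ℕ} (p : Nat.Partition m) : fromYD (toYD p) (card_toYD p) = p := by
  ext1
  exact rowLens_toYD p

lemma toYD_fromYD {m : ℕ} (μ : YoungDiagram) (hm : μ.cells.card = m) :
    toYD (fromYD μ hm) = μ := by
  rw [toYD, Equiv.symm_apply_eq]
  apply Subtype.ext
  show Multiset.sort ((fromYD μ hm).parts) (· ≥ ·) = μ.rowLens
  have hperm : (Multiset.sort ((fromYD μ hm).parts) (· ≥ ·) : Multiset ℕ)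
      = (μ.rowLens : Multiset ℕ) := by
    rw [Multiset.sort_eq]; rfl
  exact List.Perm.eq_of_sortedGE
    (Multiset.pairwise_sort _ _).sortedGE (rowLens_sorted μ) (Multiset.coe_eq_coe.1 hperm)

/-- The equivalence between partitions of `m` and Young diagrams with `m` cells. -/
def E1 {m : ℕ} : Nat.Partition m ≃ {μ : YoungDiagram // μ.cells.card = m} where
  toFun p := ⟨toYD p, card_toYD p⟩
  invFun μ := fromYD μ.1 μ.2
  left_inv p := fromYD_toYD p
  right_inv μ := Subtype.ext (toYD_fromYD μ.1 μ.2)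

/-! ### Durfee square, arms, hook decomposition -/

lemma exists_diag (μ : YoungDiagram) : ∃ n, (n, n) ∉ μ := by
  refine ⟨μ.rowLen 0, fun h => ?_⟩
  have h1 := mem_iff_lt_rowLen.1 h
  have h2 := μ.rowLen_anti 0 (μ.rowLen 0) (Nat.zero_le _)
  omega

def durfee (μ : YoungDiagram) : ℕ := Nat.find (exists_diag μ)

lemma lt_durfee_iff {μ : YoungDiagram} {i : ℕ} : i < durfee μ ↔ (i, i) ∈ μ := by
  constructor
  · intro h; exact not_not.1 (Nat.find_min _ h)
  · intro h
    by_contra hle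
    push_neg at hle
    exact Nat.find_spec (exists_diag μ) (μ.up_left_mem hle hle h)

def arm (μ : YoungDiagram) (t : ℕ) : ℕ := μ.rowLen t - (t + 1)

lemma colLen_eq_rowLen {μ : YoungDiagram} (hsym : μ.transpose = μ) (t : ℕ) :
    μ.colLen t = μ.rowLen t := by
  rw [← rowLen_transpose, hsym]

lemma mem_symm_iff {μ : YoungDiagram} (hsym : μ.transpose = μ) (i j : ℕ) :
    (i, j) ∈ μ ↔ min i j < durfee μ ∧ max i j < μ.rowLen (min i j) := by
  constructor
  · intro h
    rcases le_total i j with hij | hij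
    · rw [min_eq_left hij, max_eq_right hij]
      exact ⟨lt_durfee_iff.2 (μ.up_left_mem le_rfl hij h), mem_iff_lt_rowLen.1 h⟩
    · rw [min_eq_right hij, max_eq_left hij]
      refine ⟨lt_durfee_iff.2 (μ.up_left_mem hij le_rfl h), ?_⟩
      rw [← colLen_eq_rowLen hsym]
      exact mem_iff_lt_colLen.1 h
  · rintro ⟨h1, h2⟩
    rcases le_total i j with hij | hij
    · rw [min_eq_left hij, max_eq_right hij] at h2
      exact mem_iff_lt_rowLen.2 h2
    · rw [min_eq_right hij, max_eq_left hij] at h2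
      exact mem_iff_lt_colLen.2 (by rw [colLen_eq_rowLen hsym]; exact h2)

lemma card_symm {μ : YoungDiagram} (hsym : μ.transpose = μ) :
    μ.cells.card = ∑ t ∈ Finset.range (durfee μ), (2 * arm μ t + 1) := by
  rw [Finset.card_eq_sum_card_fiberwise (f := fun c => min c.1 c.2) (t := Finset.range (durfee μ))
    (fun c hc => by
      rw [Finset.mem_coe, Finset.mem_range]
      exact ((mem_symm_iff hsym c.1 c.2).1 (by simpa using hc)).1)]
  refine Finset.sum_congr rfl fun t ht => ?_
  have ht' : t < durfee μ := Finset.mem_range.1 ht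
  have htr : t < μ.rowLen t := mem_iff_lt_rowLen.1 (lt_durfee_iff.1 ht')
  have hfib : μ.cells.filter (fun c => min c.1 c.2 = t)
      = (({t} : Finset ℕ) ×ˢ Finset.Ico t (μ.rowLen t)) ∪
        ((Finset.Ioo t (μ.rowLen t)) ×ˢ ({t} : Finset ℕ)) := by
    ext ⟨i, j⟩
    simp only [Finset.mem_filter, mem_cells, Finset.mem_union, Finset.mem_product,
      Finset.mem_singleton, Finset.mem_Ico, Finset.mem_Ioo]
    rw [mem_symm_iff hsym]
    constructor
    · rintro ⟨⟨h1, h2⟩, hmin⟩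
      rw [hmin] at h2
      omega
    · intro hc
      have hmin : min i j = t := by omega
      refine ⟨⟨?_, ?_⟩, hmin⟩ <;> rw [hmin] <;> omega
  rw [hfib, Finset.card_union_of_disjoint (by
    rw [Finset.disjoint_left]
    rintro ⟨i, j⟩ h1 h2
    simp only [Finset.mem_product, Finset.mem_singleton, Finset.mem_Ico, Finset.mem_Ioo] at h1 h2
    omega)]
  simp only [Finset.card_product, Finset.card_singleton, Nat.card_Ico, Nat.card_Ioo, arm]
  omega

end SCAux

namespace SCAux
open Finset

/-! ### Ranks in a finset of naturals -/

def rk (S : Finset ℕ) (s : ℕ) : ℕ := (S.filter fun x => s < x).card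

lemma rk_lt_card {S : Finset ℕ} {s : ℕ} (hs : s ∈ S) : rk S s < S.card :=
  Finset.card_lt_card (Finset.filter_ssubset.2 ⟨s, hs, lt_irrefl s⟩)

lemma rk_anti {S : Finset ℕ} {s s' : ℕ} (hs : s ∈ S) (hs' : s' ∈ S) (h : s < s') :
    rk S s' < rk S s := by
  have hsub : S.filter (fun x => s' < x) ⊆ S.filter (fun x => s < x) := by
    intro x hx
    rw [Finset.mem_filter] at hx ⊢
    exact ⟨hx.1, by omega⟩
  refine Finset.card_lt_card ⟨hsub, fun hcon => ?_⟩
  have := hcon (Finset.mem_filter.2 ⟨hs', h⟩)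
  rw [Finset.mem_filter] at this
  omega

lemma rk_injOn {S : Finset ℕ} : Set.InjOn (rk S) S := by
  intro s hs s' hs' h
  rcases lt_trichotomy s s' with hc | hc | hc
  · have := rk_anti hs hs' hc; omega
  · exact hc
  · have := rk_anti hs' hs hc; omega

lemma rk_image (S : Finset ℕ) : S.image (rk S) = Finset.range S.card := by
  apply Finset.eq_of_subset_of_card_le
  · intro x hx
    obtain ⟨s, hs, rfl⟩ := Finset.mem_image.1 hx
    exact Finset.mem_range.2 (rk_lt_card hs)
  · rw [Finset.card_range, Finset.card_image_of_injOn rk_injOn]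

lemma rk_surj {S : Finset ℕ} {t : ℕ} (ht : t < S.card) : ∃ s ∈ S, rk S s = t := by
  have : t ∈ S.image (rk S) := by rw [rk_image]; exact Finset.mem_range.2 ht
  obtain ⟨s, hs, h⟩ := Finset.mem_image.1 this
  exact ⟨s, hs, h⟩

lemma rk_add_le {S : Finset ℕ} {s s' : ℕ} (hs : s ∈ S) (hs' : s' ∈ S) (h : s ≤ s') :
    rk S s + s ≤ rk S s' + s' := by
  have hsplit : S.filter (fun x => s < x)
      = S.filter (fun x => s' < x) ∪ S.filter (fun x => s < x ∧ x ≤ s') := by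
    ext x
    simp only [Finset.mem_filter, Finset.mem_union]
    constructor
    · rintro ⟨hx, hlt⟩
      rcases le_or_gt x s' with hc | hc
      · exact Or.inr ⟨hx, hlt, hc⟩
      · exact Or.inl ⟨hx, hc⟩
    · rintro (⟨hx, hlt⟩ | ⟨hx, hlt, _⟩) <;> exact ⟨hx, by omega⟩
  have hdisj : Disjoint (S.filter (fun x => s' < x)) (S.filter (fun x => s < x ∧ x ≤ s')) := by
    rw [Finset.disjoint_left]
    intro x h1 h2
    rw [Finset.mem_filter] at h1 h2
    omega
  have hcard : rk S s = rk S s' + (S.filter (fun x => s < x ∧ x ≤ s')).card := by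
    rw [rk, hsplit, Finset.card_union_of_disjoint hdisj, rk]
  have hle : (S.filter (fun x => s < x ∧ x ≤ s')).card ≤ s' - s := by
    calc (S.filter (fun x => s < x ∧ x ≤ s')).card
        ≤ (Finset.Ioc s s').card := Finset.card_le_card (fun x hx => by
          rw [Finset.mem_filter] at hx; rw [Finset.mem_Ioc]; exact hx.2)
      _ = s' - s := Nat.card_Ioc s s'
  omega

/-! ### The symmetric Young diagram with given diagonal arm lengths -/

def hookCells (S : Finset ℕ) : Finset (ℕ × ℕ) :=
  ((Finset.range (S.card + S.sum id + 1)) ×ˢ (Finset.range (S.card + S.sum id + 1))).filter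
    (fun c => ∃ s ∈ S, min c.1 c.2 = rk S s ∧ max c.1 c.2 ≤ rk S s + s)

lemma mem_hookCells {S : Finset ℕ} {c : ℕ × ℕ} :
    c ∈ hookCells S ↔ ∃ s ∈ S, min c.1 c.2 = rk S s ∧ max c.1 c.2 ≤ rk S s + s := by
  rw [hookCells, Finset.mem_filter]
  constructor
  · exact fun h => h.2
  · rintro ⟨s, hs, hmin, hmax⟩
    refine ⟨?_, s, hs, hmin, hmax⟩
    have h1 : rk S s < S.card := rk_lt_card hs
    have h2 : s ≤ S.sum id := Finset.single_le_sum (f := id) (fun x _ => Nat.zero_le x) hs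
    rw [Finset.mem_product, Finset.mem_range, Finset.mem_range]
    constructor <;> omega

def hookYD (S : Finset ℕ) : YoungDiagram where
  cells := hookCells S
  isLowerSet := by
    rintro ⟨i2, j2⟩ ⟨i1, j1⟩ ⟨hi, hj⟩ hc
    rw [Finset.mem_coe, mem_hookCells] at hc ⊢
    obtain ⟨s, hs, hmin, hmax⟩ := hc
    simp only at hi hj hmin hmax ⊢
    have hlt : min i1 j1 < S.card := by
      have := rk_lt_card hs; omega
    obtain ⟨s', hs', hrk⟩ := rk_surj hlt
    refine ⟨s', hs', hrk.symm, ?_⟩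
    have h1 : rk S s' ≤ rk S s := by omega
    have h2 : s ≤ s' := by
      rcases le_or_gt s s' with hc | hc
      · exact hc
      · have := rk_anti hs' hs hc; omega
    have h3 := rk_add_le hs hs' h2
    omega

lemma mem_hookYD {S : Finset ℕ} {c : ℕ × ℕ} :
    c ∈ hookYD S ↔ ∃ s ∈ S, min c.1 c.2 = rk S s ∧ max c.1 c.2 ≤ rk S s + s :=
  mem_hookCells

lemma hookYD_symm (S : Finset ℕ) : (hookYD S).transpose = hookYD S := by
  ext ⟨i, j⟩
  rw [YoungDiagram.mem_cells, YoungDiagram.mem_cells, YoungDiagram.mem_transpose,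
    mem_hookYD, mem_hookYD]
  simp only [Prod.swap, min_comm j i, max_comm j i]

lemma diag_mem_hookYD {S : Finset ℕ} {t : ℕ} : (t, t) ∈ hookYD S ↔ t < S.card := by
  rw [mem_hookYD]
  constructor
  · rintro ⟨s, hs, hmin, -⟩
    have := rk_lt_card hs
    simp only [min_self] at hmin
    omega
  · intro ht
    obtain ⟨s, hs, hrk⟩ := rk_surj ht
    exact ⟨s, hs, by simp [hrk], by simp; omega⟩

lemma durfee_hookYD (S : Finset ℕ) : durfee (hookYD S) = S.card := by
  rcases lt_trichotomy (durfee (hookYD S)) S.card with h | h | h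
  · have := lt_durfee_iff.2 (diag_mem_hookYD.2 h)
    omega
  · exact h
  · have := diag_mem_hookYD.1 (lt_durfee_iff.1 h)
    omega

lemma rowLen_hookYD {S : Finset ℕ} {s : ℕ} (hs : s ∈ S) :
    (hookYD S).rowLen (rk S s) = rk S s + s + 1 := by
  have hin : (rk S s, rk S s + s) ∈ hookYD S :=
    mem_hookYD.2 ⟨s, hs, by simp, by simp⟩
  have hout : (rk S s, rk S s + s + 1) ∉ hookYD S := by
    intro h
    obtain ⟨s', hs', hmin, hmax⟩ := mem_hookYD.1 h
    simp only [min_eq_left (by omega : rk S s ≤ rk S s + s + 1),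
      max_eq_right (by omega : rk S s ≤ rk S s + s + 1)] at hmin hmax
    have : s = s' := rk_injOn hs hs' hmin
    omega
  have h1 := YoungDiagram.mem_iff_lt_rowLen.1 hin
  have h2 : ¬ (rk S s + s + 1 < (hookYD S).rowLen (rk S s)) :=
    fun hlt => hout (YoungDiagram.mem_iff_lt_rowLen.2 hlt)
  omega

lemma card_hookYD (S : Finset ℕ) : (hookYD S).cells.card = ∑ s ∈ S, (2 * s + 1) := by
  rw [card_symm (hookYD_symm S), durfee_hookYD, ← rk_image S, Finset.sum_image
    (fun s hs s' hs' h => rk_injOn hs hs' h)]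
  refine Finset.sum_congr rfl fun s hs => ?_
  rw [arm, rowLen_hookYD hs]
  omega

end SCAux

namespace SCAux
open Finset YoungDiagram

def armSet (μ : YoungDiagram) : Finset ℕ := (Finset.range (durfee μ)).image (arm μ)

lemma arm_strictAnti {μ : YoungDiagram} {t u : ℕ} (htu : t < u) (hu : u < durfee μ) :
    arm μ u < arm μ t := by
  have h1 : μ.rowLen u ≤ μ.rowLen t := μ.rowLen_anti t u (le_of_lt htu)
  have h2 : u < μ.rowLen u := mem_iff_lt_rowLen.1 (lt_durfee_iff.1 hu)
  rw [arm, arm]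
  omega

lemma arm_injOn {μ : YoungDiagram} :
    Set.InjOn (arm μ) (Finset.range (durfee μ)) := by
  intro t ht u hu h
  rw [Finset.coe_range, Set.mem_Iio] at ht hu
  rcases lt_trichotomy t u with hc | hc | hc
  · have := arm_strictAnti hc hu; omega
  · exact hc
  · have := arm_strictAnti hc ht; omega

lemma card_armSet (μ : YoungDiagram) : (armSet μ).card = durfee μ := by
  rw [armSet, Finset.card_image_of_injOn arm_injOn, Finset.card_range]

lemma sum_armSet {μ : YoungDiagram} (hsym : μ.transpose = μ) :
    ∑ s ∈ armSet μ, (2 * s + 1) = μ.cells.card := by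
  rw [armSet, Finset.sum_image (fun t ht u hu h => arm_injOn (by simpa using ht)
    (by simpa using hu) h), card_symm hsym]

lemma rk_armSet {μ : YoungDiagram} {t : ℕ} (ht : t < durfee μ) :
    rk (armSet μ) (arm μ t) = t := by
  have hfil : (armSet μ).filter (fun x => arm μ t < x) = (Finset.range t).image (arm μ) := by
    ext x
    simp only [armSet, Finset.mem_filter, Finset.mem_image, Finset.mem_range]
    constructor
    · rintro ⟨⟨u, hu, rfl⟩, hlt⟩
      refine ⟨u, ?_, rfl⟩
      rcases lt_trichotomy u t with hc | hc | hc
      · exact hc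
      · subst hc; omega
      · have := arm_strictAnti hc (by omega : u < durfee μ)
        omega
    · rintro ⟨u, hut, rfl⟩
      exact ⟨⟨u, by omega, rfl⟩, arm_strictAnti hut ht⟩
  rw [rk, hfil, Finset.card_image_of_injOn (fun a ha b hb h => arm_injOn
    (by simp only [Finset.coe_range, Set.mem_Iio] at ha ⊢; omega)
    (by simp only [Finset.coe_range, Set.mem_Iio] at hb ⊢; omega) h), Finset.card_range]

lemma mem_armSet_iff {μ : YoungDiagram} {x : ℕ} :
    x ∈ armSet μ ↔ ∃ t < durfee μ, arm μ t = x := by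
  simp [armSet]

lemma hookYD_armSet {μ : YoungDiagram} (hsym : μ.transpose = μ) : hookYD (armSet μ) = μ := by
  ext ⟨i, j⟩
  rw [YoungDiagram.mem_cells, YoungDiagram.mem_cells, mem_hookYD, mem_symm_iff hsym]
  constructor
  · rintro ⟨s, hs, hmin, hmax⟩
    obtain ⟨t, ht, rfl⟩ := mem_armSet_iff.1 hs
    rw [rk_armSet ht] at hmin hmax
    have harm : t < μ.rowLen t := mem_iff_lt_rowLen.1 (lt_durfee_iff.1 ht)
    rw [hmin]
    refine ⟨ht, ?_⟩
    rw [arm] at hmax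
    omega
  · rintro ⟨h1, h2⟩
    refine ⟨arm μ (min i j), mem_armSet_iff.2 ⟨min i j, h1, rfl⟩, (rk_armSet h1).symm, ?_⟩
    rw [rk_armSet h1, arm]
    have harm : min i j < μ.rowLen (min i j) := mem_iff_lt_rowLen.1 (lt_durfee_iff.1 h1)
    omega

lemma armSet_hookYD (S : Finset ℕ) : armSet (hookYD S) = S := by
  have key : ∀ s ∈ S, arm (hookYD S) (rk S s) = s := by
    intro s hs
    rw [arm, rowLen_hookYD hs]
    omega
  rw [armSet, durfee_hookYD, ← rk_image S, Finset.image_image]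
  rw [show (arm (hookYD S)) ∘ (rk S) = fun s => arm (hookYD S) (rk S s) from rfl]
  ext x
  simp only [Finset.mem_image]
  constructor
  · rintro ⟨s, hs, rfl⟩
    rw [key s hs]; exact hs
  · intro hx
    exact ⟨x, hx, key x hx⟩

/-- Symmetric Young diagrams with `m` cells are equivalent to finsets of arm lengths
with hook sum `m`. -/
def E2 {m : ℕ} : {μ : YoungDiagram // μ.cells.card = m ∧ μ.transpose = μ} ≃
    {S : Finset ℕ // ∑ s ∈ S, (2 * s + 1) = m} where
  toFun μ := ⟨armSet μ.1, by rw [sum_armSet μ.2.2]; exact μ.2.1⟩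
  invFun S := ⟨hookYD S.1, by rw [card_hookYD]; exact S.2, hookYD_symm S.1⟩
  left_inv μ := Subtype.ext (hookYD_armSet μ.2.2)
  right_inv S := Subtype.ext (armSet_hookYD S.1)

end SCAux

namespace SCAux
open Finset

/-- Distinct odd partitions correspond to finsets of arms. -/
def E3 {m : ℕ} : {S : Finset ℕ // ∑ s ∈ S, (2 * s + 1) = m} ≃
    {p : Nat.Partition m // p.parts.Nodup ∧ ∀ a ∈ p.parts, ¬ Even a} where
  toFun S := ⟨⟨S.1.val.map (fun s => 2 * s + 1),
      by intro i hi; obtain ⟨s, _, rfl⟩ := Multiset.mem_map.1 hi; omega,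
      by rw [show (S.1.val.map (fun s => 2 * s + 1)).sum = ∑ s ∈ S.1, (2 * s + 1) from rfl]
         exact S.2⟩,
    by
      refine ⟨Multiset.Nodup.map (fun a b h => by omega) S.1.nodup, ?_⟩
      intro a ha
      obtain ⟨s, _, rfl⟩ := Multiset.mem_map.1 ha
      rw [Nat.even_iff]
      omega⟩
  invFun p := ⟨⟨p.1.parts.map (fun a => (a - 1) / 2),
      Multiset.Nodup.map_on (fun x hx y hy h => by
        have hx1 : ¬ Even x := p.2.2 x hx
        have hy1 : ¬ Even y := p.2.2 y hy
        rw [Nat.not_even_iff] at hx1 hy1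
        omega) p.2.1⟩,
    by
      rw [show ∑ s ∈ (⟨p.1.parts.map (fun a => (a - 1) / 2), _⟩ : Finset ℕ), (2 * s + 1)
          = ((p.1.parts.map (fun a => (a - 1) / 2)).map (fun s => 2 * s + 1)).sum from rfl,
        Multiset.map_map]
      have : Multiset.map ((fun s => 2 * s + 1) ∘ fun a => (a - 1) / 2) p.1.parts
          = Multiset.map id p.1.parts := by
        apply Multiset.map_congr rfl
        intro x hx
        have hx1 : ¬ Even x := p.2.2 x hx
        rw [Nat.not_even_iff] at hx1
        simp only [Function.comp, id]
        omega
      rw [this, Multiset.map_id]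
      exact p.1.parts_sum⟩
  left_inv S := by
    apply Subtype.ext
    apply Finset.val_injective
    show (S.1.val.map (fun s => 2 * s + 1)).map (fun a => (a - 1) / 2) = S.1.val
    rw [Multiset.map_map]
    have : Multiset.map ((fun a => (a - 1) / 2) ∘ fun s => 2 * s + 1) S.1.val
        = Multiset.map id S.1.val := by
      apply Multiset.map_congr rfl
      intro x _
      simp only [Function.comp, id]
      omega
    rw [this, Multiset.map_id]
  right_inv p := by
    apply Subtype.ext
    ext1
    show (p.1.parts.map (fun a => (a - 1) / 2)).map (fun s => 2 * s + 1) = p.1.parts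
    rw [Multiset.map_map]
    have : Multiset.map ((fun s => 2 * s + 1) ∘ fun a => (a - 1) / 2) p.1.parts
        = Multiset.map id p.1.parts := by
      apply Multiset.map_congr rfl
      intro x hx
      have hx1 : ¬ Even x := p.2.2 x hx
      rw [Nat.not_even_iff] at hx1
      simp only [Function.comp, id]
      omega
    rw [this, Multiset.map_id]

/-- Part 1: self-conjugate partitions are equinumerous with distinct-odd partitions. -/
def EA {m : ℕ} : {p : Nat.Partition m // p.SelfConjugate} ≃
    {p : Nat.Partition m // p.parts.Nodup ∧ ∀ a ∈ p.parts, ¬ Even a} :=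
  ((Equiv.subtypeEquiv E1 (fun p => selfConjugate_iff p)).trans
    ((Equiv.subtypeSubtypeEquivSubtypeInter _ _).trans E2)).trans E3

end SCAux

namespace SCAux
open scoped Classical

/-- count of `d * 2^j` in `s` -/
def cnt (s : Multiset ℕ) (d j : ℕ) : ℕ := s.count (d * 2 ^ j)

/-- chain `d` admits a move -/
def chainBad (s : Multiset ℕ) (d : ℕ) : Prop :=
  2 ≤ cnt s d 0 ∨ ∃ j : ℕ, 1 ≤ cnt s d (j + 1)

/-- the move at level `k+1` of chain `d` is not available -/
def stuckL (s : Multiset ℕ) (d k : ℕ) : Prop :=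
  Even (cnt s d (k + 1)) ∧ (if k = 0 then cnt s d 0 ≤ 1 else cnt s d k = 0)

lemma exists_nonstuck {s : Multiset ℕ} {d : ℕ} (hb : chainBad s d) : ∃ k, ¬ stuckL s d k := by
  by_contra hall
  push_neg at hall
  rcases hb with h | ⟨j, hj⟩
  · have h0 := (hall 0).2
    rw [if_pos rfl] at h0
    omega
  · have h0 := (hall (j + 1)).2
    rw [if_neg (Nat.succ_ne_zero j)] at h0
    omega

/-- the merge/split move at level `k+1` of chain `D` -/
def mv (s : Multiset ℕ) (D k : ℕ) : Multiset ℕ :=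
  if Even (cnt s D (k + 1)) then (2 * (D * 2 ^ k)) ::ₘ (s.erase (D * 2 ^ k)).erase (D * 2 ^ k)
  else (D * 2 ^ k) ::ₘ (D * 2 ^ k) ::ₘ s.erase (2 * (D * 2 ^ k))

lemma two_pow_succ_eq (D k : ℕ) : D * 2 ^ (k + 1) = 2 * (D * 2 ^ k) := by ring

section ctx
variable {s : Multiset ℕ} {D k : ℕ}

lemma hB (hmin : ∀ j < k, stuckL s D j) (hk : ¬ stuckL s D k)
    (h : Even (cnt s D (k + 1))) : 2 ≤ cnt s D k := by
  rw [stuckL, not_and] at hk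
  have h2 := hk h
  rcases Nat.eq_zero_or_pos k with rfl | hkpos
  · rw [if_pos rfl] at h2; omega
  · have h3 := hmin (k - 1) (by omega)
    have h4 : Even (cnt s D k) := by
      have := h3.1
      rwa [Nat.sub_add_cancel hkpos] at this
    rw [if_neg (by omega : ¬ k = 0)] at h2
    rcases h4 with ⟨c, hc⟩
    omega

lemma hA (h : ¬ Even (cnt s D (k + 1))) : 1 ≤ cnt s D (k + 1) := by
  rcases Nat.eq_zero_or_pos (cnt s D (k + 1)) with h0 | h0
  · exact absurd (h0 ▸ Even.zero) h
  · exact h0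

lemma vne (hD : 0 < D) : (D * 2 ^ k) ≠ 2 * (D * 2 ^ k) := by
  have : 0 < D * 2 ^ k := by positivity
  omega

lemma mv_cases (hD : 0 < D) (hmin : ∀ j < k, stuckL s D j) (hk : ¬ stuckL s D k) :
    (Even (cnt s D (k + 1)) ∧
      mv s D k = (2 * (D * 2 ^ k)) ::ₘ ((s.erase (D * 2 ^ k)).erase (D * 2 ^ k)) ∧
      s = (D * 2 ^ k) ::ₘ (D * 2 ^ k) ::ₘ ((s.erase (D * 2 ^ k)).erase (D * 2 ^ k)))
  ∨ (¬ Even (cnt s D (k + 1)) ∧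
      mv s D k = (D * 2 ^ k) ::ₘ (D * 2 ^ k) ::ₘ (s.erase (2 * (D * 2 ^ k))) ∧
      s = (2 * (D * 2 ^ k)) ::ₘ (s.erase (2 * (D * 2 ^ k)))) := by
  by_cases h : Even (cnt s D (k + 1))
  · left
    have h2 : 2 ≤ Multiset.count (D * 2 ^ k) s := hB hmin hk h
    have hv1 : (D * 2 ^ k) ∈ s := by rw [← Multiset.count_pos]; omega
    have hv2 : (D * 2 ^ k) ∈ s.erase (D * 2 ^ k) := by
      rw [← Multiset.count_pos, Multiset.count_erase_self]; omega
    exact ⟨h, by rw [mv, if_pos h],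
      by rw [Multiset.cons_erase hv2, Multiset.cons_erase hv1]⟩
  · right
    have h2 : 1 ≤ Multiset.count (D * 2 ^ (k + 1)) s := hA h
    have hw1 : (2 * (D * 2 ^ k)) ∈ s := by
      rw [← Multiset.count_pos, ← two_pow_succ_eq]; omega
    exact ⟨h, by rw [mv, if_neg h], by rw [Multiset.cons_erase hw1]⟩

lemma mv_sum (hD : 0 < D) (hmin : ∀ j < k, stuckL s D j) (hk : ¬ stuckL s D k) :
    (mv s D k).sum = s.sum := by
  rcases mv_cases hD hmin hk with ⟨-, hmv, hs⟩ | ⟨-, hmv, hs⟩ <;>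
  · rw [hmv]
    conv_rhs => rw [hs]
    simp only [Multiset.sum_cons]
    ring

lemma mv_pos (hD : 0 < D) (hmin : ∀ j < k, stuckL s D j) (hk : ¬ stuckL s D k)
    (h : ∀ a ∈ s, 0 < a) : ∀ a ∈ mv s D k, 0 < a := by
  have hv : 0 < D * 2 ^ k := by positivity
  rcases mv_cases hD hmin hk with ⟨-, hmv, -⟩ | ⟨-, hmv, -⟩ <;> rw [hmv] <;>
    intro a ha <;> simp only [Multiset.mem_cons] at ha
  · rcases ha with rfl | ha
    · omega
    · exact h a (Multiset.mem_of_mem_erase (Multiset.mem_of_mem_erase ha))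
  · rcases ha with rfl | rfl | ha
    · omega
    · omega
    · exact h a (Multiset.mem_of_mem_erase ha)

lemma E_cons (a : ℕ) (u : Multiset ℕ) :
    Multiset.card ((a ::ₘ u).filter (fun x => Even x))
      = (if Even a then 1 else 0) + Multiset.card (u.filter (fun x => Even x)) := by
  rw [Multiset.filter_cons]
  split_ifs <;> simp [Nat.add_comm]

lemma mv_parity (hD : 0 < D) (hmin : ∀ j < k, stuckL s D j) (hk : ¬ stuckL s D k) :
    Even (Multiset.card ((mv s D k).filter (fun x => Even x)))
      ↔ ¬ Even (Multiset.card (s.filter (fun x => Even x))) := by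
  have h2v : Even (2 * (D * 2 ^ k)) := ⟨D * 2 ^ k, by ring⟩
  rcases mv_cases hD hmin hk with ⟨-, hmv, hs⟩ | ⟨-, hmv, hs⟩
  · set t := (s.erase (D * 2 ^ k)).erase (D * 2 ^ k) with ht
    rw [hmv, hs, E_cons, E_cons, E_cons, if_pos h2v]
    by_cases hv : Even (D * 2 ^ k) <;> simp only [Nat.even_iff] <;> omega
  · set t := s.erase (2 * (D * 2 ^ k)) with ht
    rw [hmv, hs, E_cons, E_cons, E_cons, if_pos h2v]
    by_cases hv : Even (D * 2 ^ k) <;> simp only [Nat.even_iff] <;> omega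

lemma count_mv_other (x : ℕ) (hx1 : x ≠ D * 2 ^ k) (hx2 : x ≠ 2 * (D * 2 ^ k)) :
    Multiset.count x (mv s D k) = Multiset.count x s := by
  rw [mv]
  split_ifs with h
  · rw [Multiset.count_cons_of_ne hx2, Multiset.count_erase_of_ne hx1,
      Multiset.count_erase_of_ne hx1]
  · rw [Multiset.count_cons_of_ne hx1, Multiset.count_cons_of_ne hx1,
      Multiset.count_erase_of_ne hx2]

lemma pow_mul_ne {j : ℕ} (hD : 0 < D) (hjk : j ≠ k) : D * 2 ^ j ≠ D * 2 ^ k := by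
  intro h
  exact hjk (Nat.pow_right_injective le_rfl (Nat.eq_of_mul_eq_mul_left hD h))

lemma cnt_mv_k (hD : 0 < D) (hmin : ∀ j < k, stuckL s D j) (hk : ¬ stuckL s D k) :
    cnt (mv s D k) D k
      = if Even (cnt s D (k + 1)) then cnt s D k - 2 else cnt s D k + 2 := by
  have hne : (D * 2 ^ k) ≠ 2 * (D * 2 ^ k) := vne hD
  rw [cnt, mv]
  split_ifs with h
  · rw [Multiset.count_cons_of_ne hne, Multiset.count_erase_self, Multiset.count_erase_self]
    have := hB hmin hk h
    rw [cnt] at this ⊢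
    omega
  · rw [Multiset.count_cons_self, Multiset.count_cons_self, Multiset.count_erase_of_ne hne, cnt]

lemma cnt_mv_k1 (hD : 0 < D) (hmin : ∀ j < k, stuckL s D j) (hk : ¬ stuckL s D k) :
    cnt (mv s D k) D (k + 1)
      = if Even (cnt s D (k + 1)) then cnt s D (k + 1) + 1 else cnt s D (k + 1) - 1 := by
  have hne : 2 * (D * 2 ^ k) ≠ D * 2 ^ k := (vne hD).symm
  rw [cnt, two_pow_succ_eq, mv]
  split_ifs with h
  · rw [Multiset.count_cons_self, Multiset.count_erase_of_ne hne,
      Multiset.count_erase_of_ne hne, cnt, two_pow_succ_eq]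
  · rw [Multiset.count_cons_of_ne hne, Multiset.count_cons_of_ne hne,
      Multiset.count_erase_self, cnt, two_pow_succ_eq]

lemma cnt_mv_other (hD : 0 < D) {j : ℕ} (hj1 : j ≠ k) (hj2 : j ≠ k + 1) :
    cnt (mv s D k) D j = cnt s D j := by
  rw [cnt, cnt]
  exact count_mv_other _ (pow_mul_ne hD hj1)
    (by rw [← two_pow_succ_eq]; exact pow_mul_ne hD hj2)

lemma mv_stuckL_below (hD : 0 < D) (hmin : ∀ j < k, stuckL s D j) (hk : ¬ stuckL s D k) :
    ∀ j < k, stuckL (mv s D k) D j := by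
  intro j hj
  obtain ⟨h1, h2⟩ := hmin j hj
  constructor
  · -- Even (cnt (mv) D (j+1)); j + 1 ≤ k
    rcases Nat.lt_or_ge (j + 1) k with hlt | hge
    · rwa [cnt_mv_other hD (by omega) (by omega)]
    · -- j + 1 = k
      have hjk : j + 1 = k := by omega
      rw [hjk, cnt_mv_k hD hmin hk]
      split_ifs with h
      · have := hB hmin hk h
        have h1' : Even (cnt s D k) := hjk ▸ h1
        rcases h1' with ⟨c, hc⟩
        exact ⟨c - 1, by omega⟩
      · have h1' : Even (cnt s D k) := hjk ▸ h1
        rcases h1' with ⟨c, hc⟩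
        exact ⟨c + 1, by omega⟩
  · rcases Nat.eq_zero_or_pos j with rfl | hjpos
    · rw [if_pos rfl] at h2 ⊢
      rwa [show cnt (mv s D k) D 0 = cnt s D 0 from
        cnt_mv_other hD (by omega) (by omega)]
    · rw [if_neg (by omega : ¬ j = 0)] at h2 ⊢
      rwa [cnt_mv_other hD (by omega) (by omega)]

lemma mv_not_stuckL (hD : 0 < D) (hmin : ∀ j < k, stuckL s D j) (hk : ¬ stuckL s D k) :
    ¬ stuckL (mv s D k) D k := by
  intro hcon
  obtain ⟨h1, h2⟩ := hcon
  rw [cnt_mv_k1 hD hmin hk] at h1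
  by_cases h : Even (cnt s D (k + 1))
  · rw [if_pos h] at h1
    rcases h with ⟨c, hc⟩
    rcases h1 with ⟨c', hc'⟩
    omega
  · -- split happened: cnt (mv) k = cnt k + 2 ≥ 2
    have hck := cnt_mv_k hD hmin hk
    rw [if_neg h] at hck
    rcases Nat.eq_zero_or_pos k with rfl | hkpos
    · rw [if_pos rfl] at h2; omega
    · rw [if_neg (by omega : ¬ k = 0)] at h2; omega

lemma mv_chainBad (hD : 0 < D) (hmin : ∀ j < k, stuckL s D j) (hk : ¬ stuckL s D k) :
    chainBad (mv s D k) D := by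
  by_cases h : Even (cnt s D (k + 1))
  · right
    exact ⟨k, by rw [cnt_mv_k1 hD hmin hk, if_pos h]; omega⟩
  · have hck := cnt_mv_k hD hmin hk
    rw [if_neg h] at hck
    rcases Nat.eq_zero_or_pos k with rfl | hkpos
    · left; rw [hck]; omega
    · right
      exact ⟨k - 1, by rw [show k - 1 + 1 = k by omega, hck]; omega⟩

lemma odd_mul_pow_inj {d e j i : ℕ} (hd : Odd d) (he : Odd e)
    (h : d * 2 ^ j = e * 2 ^ i) : d = e ∧ j = i := by
  have haux : ∀ {d e j i : ℕ}, Odd d → Odd e → d * 2 ^ j = e * 2 ^ i → j ≤ i → d = e ∧ j = i := by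
    intro d e j i hd he h hji
    have h2 : d * 2 ^ j = e * 2 ^ (i - j) * 2 ^ j := by
      rw [mul_assoc, ← pow_add]
      rw [show i - j + j = i by omega]
      exact h
    have h3 : d = e * 2 ^ (i - j) :=
      Nat.eq_of_mul_eq_mul_right (Nat.pow_pos (n := j) (by omega)) h2
    rcases Nat.eq_zero_or_pos (i - j) with h0 | h0
    · rw [h0, pow_zero, mul_one] at h3
      exact ⟨h3, by
        subst h3
        have := Nat.eq_of_mul_eq_mul_left (by rcases hd with ⟨c, hc⟩; omega) h
        have := Nat.pow_right_injective (le_refl 2) this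
        omega⟩
    · exfalso
      have hdvd : (2 : ℕ) ∣ d := by
        rw [h3, show i - j = i - j - 1 + 1 by omega, pow_succ]
        exact ⟨e * 2 ^ (i - j - 1), by ring⟩
      rcases hd with ⟨c, hc⟩
      rcases hdvd with ⟨t, ht⟩
      omega
  rcases Nat.le_total j i with hji | hji
  · exact haux hd he h hji
  · obtain ⟨a, b⟩ := haux he hd h.symm hji
    exact ⟨a.symm, b.symm⟩

lemma mv_chainBad_other (hD : 0 < D) {d : ℕ} (hdodd : Odd d) (hDodd : Odd D) (hne : d ≠ D) :
    (chainBad (mv s D k) d ↔ chainBad s d) := by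
  have hc : ∀ j, cnt (mv s D k) d j = cnt s d j := by
    intro j
    rw [cnt, cnt]
    refine count_mv_other _ (fun h => hne (odd_mul_pow_inj hdodd hDodd h).1) ?_
    rw [← two_pow_succ_eq]
    exact fun h => hne (odd_mul_pow_inj hdodd hDodd h).1
  rw [chainBad, chainBad]
  simp only [hc]

lemma mv_mv (hD : 0 < D) (hmin : ∀ j < k, stuckL s D j) (hk : ¬ stuckL s D k) :
    mv (mv s D k) D k = s := by
  have hcnt1 := cnt_mv_k1 hD hmin hk
  rcases mv_cases hD hmin hk with ⟨he, hmv, hs⟩ | ⟨he, hmv, hs⟩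
  · -- merge happened; now split
    rw [if_pos he] at hcnt1
    have hodd : ¬ Even (cnt (mv s D k) D (k + 1)) := by
      rw [hcnt1]
      rcases he with ⟨c, hc⟩
      intro hcon
      rcases hcon with ⟨c', hc'⟩
      omega
    rw [mv, if_neg hodd, hmv, Multiset.erase_cons_head]
    exact hs.symm
  · -- split happened; now merge
    rw [if_neg he] at hcnt1
    have heven : Even (cnt (mv s D k) D (k + 1)) := by
      rw [hcnt1]
      have := hA he
      rcases Nat.even_or_odd (cnt s D (k + 1)) with hcon | ⟨c, hc⟩
      · exact absurd hcon he
      · exact ⟨c, by omega⟩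
    rw [mv, if_pos heven, hmv, Multiset.erase_cons_head, Multiset.erase_cons_head]
    exact hs.symm

end ctx

lemma odd_part_exists : ∀ a : ℕ, 0 < a → ∃ d j, Odd d ∧ a = d * 2 ^ j := by
  intro a
  induction a using Nat.strong_induction_on with
  | _ a ih =>
    intro ha
    rcases Nat.even_or_odd a with ⟨b, hb⟩ | h
    · have hb1 : 0 < b := by omega
      have hb2 : b < a := by omega
      obtain ⟨d, j, hd, hbe⟩ := ih b hb2 hb1
      refine ⟨d, j + 1, hd, ?_⟩
      rw [show a = 2 * b by omega, hbe, pow_succ]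
      ring
    · exact ⟨a, 0, h, by simp⟩

lemma noBad_iff {s : Multiset ℕ} (hpos : ∀ a ∈ s, 0 < a) :
    (¬ ∃ d, Odd d ∧ chainBad s d) ↔ (s.Nodup ∧ ∀ a ∈ s, ¬ Even a) := by
  constructor
  · intro h
    constructor
    · rw [Multiset.nodup_iff_count_le_one]
      intro a
      by_contra hc
      push_neg at hc
      have hapos : 0 < a := hpos a (by rw [← Multiset.count_pos]; omega)
      obtain ⟨d, j, hd, rfl⟩ := odd_part_exists a hapos
      apply h
      refine ⟨d, hd, ?_⟩
      rcases Nat.eq_zero_or_pos j with rfl | hj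
      · left; rw [cnt]; omega
      · right
        exact ⟨j - 1, by rw [cnt, show j - 1 + 1 = j by omega]; omega⟩
    · intro a ha hae
      have hapos := hpos a ha
      obtain ⟨d, j, hd, rfl⟩ := odd_part_exists a hapos
      rcases Nat.eq_zero_or_pos j with rfl | hj
      · rw [pow_zero, mul_one] at hae
        exact (Nat.not_odd_iff_even.2 hae) hd
      · apply h
        refine ⟨d, hd, Or.inr ⟨j - 1, ?_⟩⟩
        rw [cnt, show j - 1 + 1 = j by omega]
        exact Multiset.count_pos.2 ha
  · rintro ⟨hnd, hodd⟩ ⟨d, hd, hbad⟩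
    rcases hbad with h2 | ⟨j, hj⟩
    · rw [Multiset.nodup_iff_count_le_one] at hnd
      have := hnd (d * 2 ^ 0)
      rw [cnt] at h2
      omega
    · have hmem : d * 2 ^ (j + 1) ∈ s := by
        rw [← Multiset.count_pos]
        rw [cnt] at hj
        omega
      exact hodd _ hmem ⟨d * 2 ^ j, by rw [pow_succ]; ring⟩

/-- The sign-reversing involution. -/
noncomputable def iota (s : Multiset ℕ) (H : ∃ d, Odd d ∧ chainBad s d) : Multiset ℕ :=
  mv s (Nat.find H) (Nat.find (exists_nonstuck (Nat.find_spec H).2))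

section iotalemmas
variable (s : Multiset ℕ) (H : ∃ d, Odd d ∧ chainBad s d)

lemma iD_odd : Odd (Nat.find H) := (Nat.find_spec H).1

lemma iD_pos : 0 < Nat.find H := by
  rcases iD_odd s H with ⟨c, hc⟩; omega

lemma i_hmin : ∀ j < Nat.find (exists_nonstuck (Nat.find_spec H).2),
    stuckL s (Nat.find H) j :=
  fun j hj => not_not.1 (Nat.find_min (exists_nonstuck (Nat.find_spec H).2) hj)

lemma i_hk : ¬ stuckL s (Nat.find H) (Nat.find (exists_nonstuck (Nat.find_spec H).2)) :=
  Nat.find_spec (exists_nonstuck (Nat.find_spec H).2)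

lemma iota_sum : (iota s H).sum = s.sum :=
  mv_sum (iD_pos s H) (i_hmin s H) (i_hk s H)

lemma iota_pos (h : ∀ a ∈ s, 0 < a) : ∀ a ∈ iota s H, 0 < a :=
  mv_pos (iD_pos s H) (i_hmin s H) (i_hk s H) h

lemma iota_parity :
    Even (Multiset.card ((iota s H).filter (fun x => Even x)))
      ↔ ¬ Even (Multiset.card (s.filter (fun x => Even x))) :=
  mv_parity (iD_pos s H) (i_hmin s H) (i_hk s H)

lemma iota_bad : ∃ d, Odd d ∧ chainBad (iota s H) d :=
  ⟨Nat.find H, iD_odd s H, mv_chainBad (iD_pos s H) (i_hmin s H) (i_hk s H)⟩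

lemma iota_iota (H₂ : ∃ d, Odd d ∧ chainBad (iota s H) d) :
    iota (iota s H) H₂ = s := by
  have hDpos := iD_pos s H
  have hDodd := iD_odd s H
  have hmin := i_hmin s H
  have hk := i_hk s H
  have hD' : Nat.find H₂ = Nat.find H := by
    rw [Nat.find_eq_iff]
    refine ⟨⟨hDodd, mv_chainBad hDpos hmin hk⟩, fun n hn => ?_⟩
    rintro ⟨hnodd, hnbad⟩
    exact Nat.find_min H hn
      ⟨hnodd, (mv_chainBad_other hDpos hnodd hDodd (by omega)).1 hnbad⟩
  have hk' : Nat.find (exists_nonstuck (Nat.find_spec H₂).2)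
      = Nat.find (exists_nonstuck (Nat.find_spec H).2) := by
    rw [Nat.find_eq_iff]
    constructor
    · rw [hD']
      exact mv_not_stuckL hDpos hmin hk
    · intro n hn
      rw [hD']
      exact not_not.2 (mv_stuckL_below hDpos hmin hk n hn)
  show mv (iota s H) (Nat.find H₂) (Nat.find (exists_nonstuck (Nat.find_spec H₂).2)) = s
  rw [hk', hD']
  exact mv_mv hDpos hmin hk

end iotalemmas
end SCAux

namespace SCAux
open scoped Classical

noncomputable def iotaP {m : ℕ} (p : Nat.Partition m) (H : ∃ d, Odd d ∧ chainBad p.parts d) :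
    Nat.Partition m where
  parts := iota p.parts H
  parts_pos := fun hi => iota_pos p.parts H (fun _ ha => p.parts_pos ha) _ hi
  parts_sum := by rw [iota_sum]; exact p.parts_sum

lemma badP {m : ℕ} (p : Nat.Partition m)
    (h : Odd (Multiset.card (p.parts.filter fun a => Even a))) :
    ∃ d, Odd d ∧ chainBad p.parts d := by
  by_contra hno
  obtain ⟨-, hodd⟩ := (noBad_iff (fun _ ha => p.parts_pos ha)).1 hno
  rw [Multiset.filter_eq_nil.2 hodd] at h
  simp at h

noncomputable def EB {m : ℕ} :
    {p : Nat.Partition m // p.parts.Nodup ∧ ∀ a ∈ p.parts, ¬ Even a}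
      ⊕ {p : Nat.Partition m // Odd (Multiset.card (p.parts.filter fun a => Even a))}
    ≃ {p : Nat.Partition m // Even (Multiset.card (p.parts.filter fun a => Even a))} where
  toFun x :=
    match x with
    | Sum.inl ⟨p, hp⟩ => ⟨p, by rw [Multiset.filter_eq_nil.2 hp.2]; simp⟩
    | Sum.inr ⟨p, hp⟩ => ⟨iotaP p (badP p hp),
        (iota_parity p.parts (badP p hp)).2 (Nat.not_even_iff_odd.2 hp)⟩
  invFun q :=
    if H : ∃ d, Odd d ∧ chainBad q.1.parts d then
      Sum.inr ⟨iotaP q.1 H,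
        Nat.not_even_iff_odd.1 (fun hc => ((iota_parity q.1.parts H).1 hc) q.2)⟩
    else Sum.inl ⟨q.1, (noBad_iff (fun _ ha => q.1.parts_pos ha)).1 H⟩
  left_inv := by
    rintro (⟨p, hp⟩ | ⟨p, hp⟩)
    · simp only
      rw [dif_neg ((noBad_iff (fun _ ha => p.parts_pos ha)).2 hp)]
    · simp only
      rw [dif_pos (show ∃ d, Odd d ∧ chainBad (iotaP p (badP p hp)).parts d from
        iota_bad p.parts (badP p hp))]
      congr 1
      apply Subtype.ext
      ext1
      exact iota_iota p.parts (badP p hp) _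
  right_inv := by
    intro q
    dsimp only
    by_cases H : ∃ d, Odd d ∧ chainBad (q : Nat.Partition m).parts d
    · rw [dif_pos H]
      apply Subtype.ext
      show (iotaP (iotaP q.1 H) _ : Nat.Partition m) = q.1
      ext1
      exact iota_iota q.1.parts H _
    · rw [dif_neg H]

end SCAux

/-- **Self-conjugate partitions versus even parts** (Aguiar–Lauve, identity (5.2)):
for every `m`, the number `c(m)` of self-conjugate partitions of `m` equals `e(m) - o(m)`,
where `e(m)` (resp. `o(m)`) is the number of partitions of `m` with an even (resp. odd)
number of even parts; that is, `c(m) + o(m) = e(m)`. -/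
theorem selfConjugate_add_oddEven_eq_evenEven (m : ℕ) :
    Nat.card {p : Nat.Partition m // p.SelfConjugate} +
      Nat.card {p : Nat.Partition m // Odd (Multiset.card (p.parts.filter fun a => Even a))} =
    Nat.card {p : Nat.Partition m // Even (Multiset.card (p.parts.filter fun a => Even a))} := by
  classical
  rw [Nat.card_congr (SCAux.EA (m := m))]
  rw [← Nat.card_congr (SCAux.EB (m := m))]
  rw [Nat.card_sum]
end

section
/- For every natural number m, the number of palindromic compositions of m equals 2^{⌊m/2⌋}. -/
open Finset List

/-- The finset of palindromic positive compositions (as lists) of `m`. -/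
def palSet : ℕ → Finset (List ℕ)
  | 0 => {([] : List ℕ)}
  | (m+1) => insert [m+1] (((Finset.Icc 1 ((m+1)/2)).attach).biUnion fun a =>
      (palSet (m+1 - 2*a.1)).image fun t => a.1 :: (t ++ [a.1]))
  decreasing_by
    have h := a.2
    rw [Finset.mem_Icc] at h
    omega

theorem mem_palSet (m : ℕ) (l : List ℕ) :
    l ∈ palSet m ↔ l.sum = m ∧ (∀ x ∈ l, 0 < x) ∧ l.reverse = l := by
  induction m using Nat.strong_induction_on generalizing l with
  | _ m ih =>
    match m with
    | 0 =>
      simp only [palSet, Finset.mem_singleton]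
      constructor
      · rintro rfl; simp
      · rintro ⟨hs, hp, _⟩
        cases l with
        | nil => rfl
        | cons a t =>
          exfalso
          have := hp a (by simp)
          simp [List.sum_cons] at hs
          omega
    | (m+1) =>
      simp only [palSet, Finset.mem_insert, Finset.mem_biUnion, Finset.mem_attach,
        Finset.mem_image, true_and, Subtype.exists]
      constructor
      · rintro (rfl | ⟨a, ha, t, ht, rfl⟩)
        · refine ⟨by simp, by simp, by simp⟩
        · rw [Finset.mem_Icc] at ha
          rw [ih _ (by omega)] at ht
          obtain ⟨hs, hp, hpal⟩ := ht
          refine ⟨?_, ?_, ?_⟩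
          · simp only [List.sum_cons, List.sum_append, List.sum_cons, List.sum_nil]
            omega
          · intro x hx
            simp at hx
            rcases hx with rfl | hx | rfl
            · omega
            · exact hp x hx
            · omega
          · simp [List.reverse_append, hpal]
      · rintro ⟨hs, hp, hpal⟩
        have hpal' := List.Palindrome.of_reverse_eq hpal
        cases hpal' with
        | nil => simp at hs
        | singleton x =>
          left
          simp only [List.sum_cons, List.sum_nil, add_zero] at hs
          simp [hs]
        | @cons_concat a t hpt =>
          right
          have ha : 0 < a := hp a (by simp)
          have hsum : 2*a + t.sum = m + 1 := by
            simp only [List.sum_cons, List.sum_append, List.sum_cons, List.sum_nil] at hs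
            omega
          refine ⟨a, ?_, t, ?_, rfl⟩
          · rw [Finset.mem_Icc]; omega
          · rw [ih _ (by omega)]
            refine ⟨by omega, fun x hx => hp x (by simp [hx]), hpt.reverse_eq⟩

theorem card_palSet (m : ℕ) : (palSet m).card = 2 ^ (m / 2) := by
  induction m using Nat.strong_induction_on with
  | _ m ih =>
    match m with
    | 0 => simp [palSet]
    | (m+1) =>
      rw [palSet]
      rw [Finset.card_insert_of_notMem, Finset.card_biUnion]
      · have h1 : ∀ a : {x // x ∈ Finset.Icc 1 ((m+1)/2)},
            ((palSet (m+1 - 2*a.1)).image fun t => a.1 :: (t ++ [a.1])).card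
              = 2 ^ ((m+1)/2 - a.1) := by
          rintro ⟨a, ha⟩
          dsimp only
          rw [Finset.mem_Icc] at ha
          rw [Finset.card_image_of_injective _ (fun s t h => by simpa using h),
            ih _ (by omega)]
          congr 1
          omega
        rw [Finset.sum_congr rfl (fun a _ => h1 a)]
        rw [Finset.sum_attach (Finset.Icc 1 ((m+1)/2)) (fun a => 2 ^ ((m+1)/2 - a))]
        have h2 : ∑ a ∈ Finset.Icc 1 ((m+1)/2), 2 ^ ((m+1)/2 - a)
            = ∑ j ∈ Finset.range ((m+1)/2), 2 ^ j := by
          apply Finset.sum_nbij' (fun a => (m+1)/2 - a) (fun j => (m+1)/2 - j)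
          all_goals intro a ha
          all_goals simp [Finset.mem_Icc, Finset.mem_range] at *
          all_goals omega
        rw [h2, Nat.geomSum_eq le_rfl]
        have : 1 ≤ 2 ^ ((m+1)/2) := Nat.one_le_two_pow
        omega
      · -- pairwise disjoint
        rintro ⟨a, ha⟩ - ⟨b, hb⟩ - hab
        simp only [Finset.disjoint_left, Finset.mem_image]
        rintro l ⟨t, ht, rfl⟩ ⟨s, hs, heq⟩
        apply hab
        simp only [List.cons.injEq] at heq
        exact Subtype.ext heq.1.symm
      · -- [m+1] not in biUnion
        simp only [Finset.mem_biUnion, Finset.mem_attach, true_and, Subtype.exists,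
          Finset.mem_image, not_exists]
        rintro a ha t ⟨ht, heq⟩
        have : ([m+1] : List ℕ).length = (a :: (t ++ [a])).length := by rw [heq]
        simp at this

/-- **Number of palindromic compositions** (Aguiar–Lauve, Section 5.3):
for every `m`, the number of palindromic compositions of `m` equals `2^⌊m/2⌋`. -/
theorem card_palindromic_compositions (m : ℕ) :
    Nat.card {c : Composition m // c.blocks.reverse = c.blocks} = 2 ^ (m / 2) := by
  have e : {c : Composition m // c.blocks.reverse = c.blocks} ≃ {l // l ∈ palSet m} :=
    { toFun := fun c => ⟨c.1.blocks, (mem_palSet m _).2 ⟨c.1.blocks_sum,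
        fun x hx => c.1.blocks_pos hx, c.2⟩⟩
      invFun := fun l => ⟨⟨l.1, fun {x} hx => ((mem_palSet m _).1 l.2).2.1 x hx,
        ((mem_palSet m _).1 l.2).1⟩, ((mem_palSet m _).1 l.2).2.2⟩
      left_inv := fun c => by
        apply Subtype.ext
        apply Composition.ext
        rfl
      right_inv := fun l => rfl }
  rw [Nat.card_congr e, Nat.card_eq_finsetCard]
  exact card_palSet m
end

section
/- For all natural numbers m ≥ 1 and 1 ≤ k ≤ m, the number of palindromic compositions of m with exactly k parts equals: binomial(⌈m/2⌉ − 1, ⌈k/2⌉ − 1) if m is even, or if m and k are both odd; and 0 if m is odd and k is even. -/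
lemma mem_casEquiv {n : ℕ} (c : CompositionAsSet n) (i : Fin (n-1)) :
    i ∈ compositionAsSetEquiv n c ↔
      (⟨1 + (i : ℕ), by omega⟩ : Fin (n+1)) ∈ c.boundaries := by
  simp only [compositionAsSetEquiv, Equiv.coe_fn_mk, Set.mem_toFinset, Set.mem_setOf_eq]

lemma card_casEquiv {n : ℕ} (hn : 1 ≤ n) (c : CompositionAsSet n) :
    (compositionAsSetEquiv n c).card + 2 = c.boundaries.card := by
  classical
  have h0 : (0 : Fin (n+1)) ∈ c.boundaries := c.zero_mem
  have hl : Fin.last n ∈ c.boundaries := c.getLast_mem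
  have h0l : (0 : Fin (n+1)) ≠ Fin.last n := by
    intro h
    have := congrArg Fin.val h
    simp [Fin.val_last] at this
    omega
  have h2 : (compositionAsSetEquiv n c).card
      = ((c.boundaries.erase (Fin.last n)).erase 0).card := by
    refine Finset.card_bij'
      (fun a _ => (⟨1 + (a : ℕ), by omega⟩ : Fin (n+1)))
      (fun b hb => (⟨(b : ℕ) - 1, by
        simp only [Finset.mem_erase] at hb
        have h1 : (b : ℕ) ≠ 0 := fun h => hb.1 (Fin.ext h)
        have h2 : (b : ℕ) ≠ n := fun h => hb.2.1 (Fin.ext (by simp [Fin.val_last, h]))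
        have := b.isLt; omega⟩ : Fin (n-1))) ?_ ?_ ?_ ?_
    · intro a ha
      rw [mem_casEquiv] at ha
      simp only [Finset.mem_erase]
      have := a.isLt
      exact ⟨by simp [Fin.ext_iff], by simp [Fin.ext_iff, Fin.val_last]; omega, ha⟩
    · intro b hb
      rw [mem_casEquiv]
      simp only [Finset.mem_erase] at hb
      have h1 : (b : ℕ) ≠ 0 := fun h => hb.1 (Fin.ext h)
      have hbn := b.isLt
      convert hb.2.2 using 1
      simp [Fin.ext_iff]; omega
    · intro a ha; simp [Fin.ext_iff]
    · intro b hb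
      simp only [Finset.mem_erase] at hb
      have h1 : (b : ℕ) ≠ 0 := fun h => hb.1 (Fin.ext h)
      simp [Fin.ext_iff]; omega
  rw [h2, Finset.card_erase_of_mem, Finset.card_erase_of_mem hl]
  · have hc : 2 ≤ c.boundaries.card := Finset.one_lt_card.mpr ⟨0, h0, Fin.last n, hl, h0l⟩
    omega
  · exact Finset.mem_erase.mpr ⟨h0l, h0⟩

lemma card_comp_length (n k : ℕ) (hn : 1 ≤ n) :
    Nat.card {c : Composition n // c.length = k + 1} = (n - 1).choose k := by
  have e1 : {c : Composition n // c.length = k + 1} ≃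
      {c : CompositionAsSet n // c.length = k + 1} :=
    (compositionEquiv n).subtypeEquiv (fun c => by
      rw [show (compositionEquiv n) c = c.toCompositionAsSet from rfl,
        Composition.toCompositionAsSet_length])
  have e2 : {c : CompositionAsSet n // c.length = k + 1} ≃
      {s : Finset (Fin (n-1)) // s.card = k} :=
    (compositionAsSetEquiv n).subtypeEquiv (fun c => by
      have := card_casEquiv hn c
      have hb : c.boundaries.card = c.length + 1 := c.card_boundaries_eq_succ_length
      constructor
      · intro h; omega
      · intro h; omega)
  rw [Nat.card_congr (e1.trans e2), Nat.card_eq_fintype_card, Fintype.card_finset_len,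
    Fintype.card_fin]


private lemma short_reverse {α : Type*} (d : List α) (hd : d.length ≤ 1) :
    d.reverse = d := by
  match d with
  | [] => rfl
  | [a] => rfl
  | a :: b :: t => simp at hd

private lemma pal_decomp {b : List ℕ} {k : ℕ} (hrev : b.reverse = b)
    (hlen : b.length = k) :
    b = b.take (k/2) ++ (((b.drop (k/2)).take (k % 2)) ++ (b.take (k/2)).reverse) := by
  have hdr : b.drop (k/2 + k % 2) = (b.take (k/2)).reverse := by
    rw [List.reverse_take, hrev, hlen]
    congr 1
    omega
  conv_lhs => rw [← List.take_append_drop (k/2) b]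
  congr 1
  conv_lhs => rw [← List.take_append_drop (k % 2) (b.drop (k/2))]
  rw [List.drop_drop, hdr]

private lemma pal_sum {b : List ℕ} {k : ℕ} (hrev : b.reverse = b)
    (hlen : b.length = k) :
    b.sum = 2 * (b.take (k/2)).sum + ((b.drop (k/2)).take (k % 2)).sum := by
  conv_lhs => rw [pal_decomp hrev hlen]
  simp [List.sum_append, List.sum_reverse]
  ring

private def Fm (k : ℕ) (b : List ℕ) : List ℕ :=
  b.take (k/2) ++ ((b.drop (k/2)).take (k % 2)).map (fun x => (x+1)/2)

private def Gm (m k : ℕ) (l : List ℕ) : List ℕ :=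
  l.take (k/2) ++ ((l.drop (k/2)).map (fun a => 2*a - m % 2) ++ (l.take (k/2)).reverse)

private def palEquiv (m k : ℕ) (hk : 1 ≤ k) (hkm : k ≤ m)
    (hpar : m % 2 = 1 → k % 2 = 1) :
    {c : Composition m // c.blocks.reverse = c.blocks ∧ c.length = k} ≃
    {c : Composition ((m+1)/2) // c.length = (k+1)/2} where
  toFun c := by
    obtain ⟨⟨b, bpos, bsum⟩, hrev, hlen⟩ := c
    rw [← Composition.blocks_length] at hlen
    simp only at hrev hlen bsum bpos ⊢
    refine ⟨⟨Fm k b, ?_, ?_⟩, ?_⟩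
    · -- positivity
      intro i hi
      rw [Fm, List.mem_append] at hi
      rcases hi with hi | hi
      · exact bpos (List.take_subset _ _ hi)
      · obtain ⟨x, hx, rfl⟩ := List.mem_map.mp hi
        have := bpos (List.drop_subset _ _ (List.take_subset _ _ hx))
        omega
    · -- sum
      have hs := pal_sum hrev hlen
      rw [bsum] at hs
      have hrlen : ((b.drop (k/2)).take (k % 2)).length = k % 2 := by
        rw [List.length_take, List.length_drop, hlen]; omega
      rw [Fm, List.sum_append]
      rcases Nat.even_or_odd k with hke | hko
      · have hk2 : k % 2 = 0 := Nat.even_iff.mp hke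
        rw [hk2] at hrlen hs ⊢
        rw [List.length_eq_zero_iff.mp hrlen] at hs ⊢
        simp only [List.map_nil, List.sum_nil, List.sum_nil, add_zero] at hs ⊢
        omega
      · have hk2 : k % 2 = 1 := Nat.odd_iff.mp hko
        rw [hk2] at hrlen hs ⊢
        obtain ⟨x, hx⟩ := List.length_eq_one_iff.mp hrlen
        rw [hx] at hs ⊢
        simp only [List.map_cons, List.map_nil, List.sum_cons, List.sum_nil, add_zero] at hs ⊢
        omega
    · -- length
      show (Fm k b).length = (k+1)/2
      rw [Fm, List.length_append, List.length_map, List.length_take, List.length_take,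
        List.length_drop, hlen]
      omega
  invFun c := by
    obtain ⟨⟨l, lpos, lsum⟩, hlen⟩ := c
    rw [← Composition.blocks_length] at hlen
    simp only at hlen lsum lpos ⊢
    have hdlen : (l.drop (k/2)).length = k % 2 := by
      rw [List.length_drop, hlen]; omega
    refine ⟨⟨Gm m k l, ?_, ?_⟩, ?_, ?_⟩
    · intro i hi
      rw [Gm, List.mem_append, List.mem_append] at hi
      rcases hi with hi | hi | hi
      · exact lpos (List.take_subset _ _ hi)
      · obtain ⟨x, hx, rfl⟩ := List.mem_map.mp hi
        have := lpos (List.drop_subset _ _ hx)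
        omega
      · exact lpos (List.take_subset _ _ (List.mem_reverse.mp hi))
    · -- sum
      have hs : (l.take (k/2)).sum + (l.drop (k/2)).sum = (m+1)/2 := by
        rw [← List.sum_append, List.take_append_drop, lsum]
      rw [Gm, List.sum_append, List.sum_append, List.sum_reverse]
      rcases Nat.even_or_odd k with hke | hko
      · have hk2 : k % 2 = 0 := Nat.even_iff.mp hke
        have hm2 : m % 2 = 0 := by
          by_contra h
          have := hpar (by omega)
          omega
        rw [hk2] at hdlen
        rw [List.length_eq_zero_iff.mp hdlen] at hs ⊢
        simp only [List.sum_nil, List.map_nil, add_zero] at hs ⊢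
        omega
      · have hk2 : k % 2 = 1 := Nat.odd_iff.mp hko
        rw [hk2] at hdlen
        obtain ⟨x, hx⟩ := List.length_eq_one_iff.mp hdlen
        have hx1 : 1 ≤ x := lpos (List.drop_subset _ _ (hx ▸ List.mem_cons_self (a := x) (l := [])))
        rw [hx] at hs ⊢
        simp only [List.sum_cons, List.sum_nil, List.map_cons, List.map_nil, add_zero] at hs ⊢
        omega
    · -- palindromic
      show (Gm m k l).reverse = Gm m k l
      rw [Gm, List.reverse_append, List.reverse_append, List.reverse_reverse]
      rw [short_reverse ((l.drop (k/2)).map (fun a => 2*a - m % 2)) (by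
        rw [List.length_map, hdlen]; omega)]
      simp [List.append_assoc]
    · -- length
      show (Gm m k l).length = k
      rw [Gm, List.length_append, List.length_append, List.length_reverse, List.length_map,
        List.length_take, List.length_drop, hlen]
      omega
  left_inv := by
    rintro ⟨⟨b, bpos, bsum⟩, hrev0, hlen0⟩
    have hrev : b.reverse = b := hrev0
    have hlen' : b.length = k := hlen0
    apply Subtype.ext
    apply Composition.ext
    show Gm m k (Fm k b) = b
    have t_len : (b.take (k/2)).length = k/2 := by rw [List.length_take]; omega
    have h1 : (Fm k b).take (k/2) = b.take (k/2) := List.take_left' t_len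
    have h2 : (Fm k b).drop (k/2)
        = ((b.drop (k/2)).take (k % 2)).map (fun x => (x+1)/2) := List.drop_left' t_len
    rw [Gm, h1, h2]
    have hrlen : ((b.drop (k/2)).take (k % 2)).length = k % 2 := by
      rw [List.length_take, List.length_drop, hlen']; omega
    have hs := pal_sum hrev hlen'
    rw [bsum] at hs
    rcases Nat.even_or_odd k with hke | hko
    · have hk2 : k % 2 = 0 := Nat.even_iff.mp hke
      rw [hk2] at hrlen
      have hnil := List.length_eq_zero_iff.mp hrlen
      rw [hk2, hnil]
      conv_rhs => rw [pal_decomp hrev hlen', hk2, hnil]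
      simp
    · have hk2 : k % 2 = 1 := Nat.odd_iff.mp hko
      rw [hk2] at hrlen
      obtain ⟨x, hx⟩ := List.length_eq_one_iff.mp hrlen
      rw [hk2, hx] at hs
      simp only [List.sum_cons, List.sum_nil, add_zero] at hs
      rw [hk2, hx]
      conv_rhs => rw [pal_decomp hrev hlen', hk2, hx]
      simp only [List.map_cons, List.map_nil]
      rw [show 2 * ((x+1)/2) - m % 2 = x from by omega]
  right_inv := by
    rintro ⟨⟨l, lpos, lsum⟩, hlen0⟩
    have hlen' : l.length = (k+1)/2 := hlen0
    apply Subtype.ext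
    apply Composition.ext
    show Fm k (Gm m k l) = l
    have t_len : (l.take (k/2)).length = k/2 := by rw [List.length_take]; omega
    have h1 : (Gm m k l).take (k/2) = l.take (k/2) := List.take_left' t_len
    have h2 : (Gm m k l).drop (k/2)
        = (l.drop (k/2)).map (fun a => 2*a - m % 2) ++ (l.take (k/2)).reverse :=
      List.drop_left' t_len
    rw [Fm, h1, h2]
    have h3 : ((l.drop (k/2)).map (fun a => 2*a - m % 2) ++ (l.take (k/2)).reverse).take (k % 2)
        = (l.drop (k/2)).map (fun a => 2*a - m % 2) :=
      List.take_left' (by rw [List.length_map, List.length_drop, hlen']; omega)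
    rw [h3, List.map_map]
    have hid : ((fun x => (x+1)/2) ∘ (fun a => 2*a - m % 2)) = id := by
      funext a
      simp only [Function.comp_apply, id_eq]
      omega
    rw [hid, List.map_id, List.take_append_drop]

private lemma card_comp_length' (n k : ℕ) (hn : 1 ≤ n) (hk : 1 ≤ k) :
    Nat.card {c : Composition n // c.length = k} = (n - 1).choose (k - 1) := by
  obtain ⟨k', rfl⟩ : ∃ k', k = k' + 1 := ⟨k - 1, by omega⟩
  simpa using card_comp_length n k' hn

/-- **Palindromic compositions by length** (Aguiar–Lauve, Section 5.3): for `1 ≤ k ≤ m`,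
the number of palindromic compositions of `m` with exactly `k` parts equals
`C(⌈m/2⌉ - 1, ⌈k/2⌉ - 1)` if `m` is even, or if `m` and `k` are both odd, and equals `0`
if `m` is odd and `k` is even. -/
theorem card_palindromic_compositions_length (m k : ℕ) (hm : 1 ≤ m) (hk : 1 ≤ k)
    (hkm : k ≤ m) :
    ((Even m ∨ (Odd m ∧ Odd k)) →
      Nat.card {c : Composition m // c.blocks.reverse = c.blocks ∧ c.length = k} =
        Nat.choose ((m + 1) / 2 - 1) ((k + 1) / 2 - 1)) ∧
    ((Odd m ∧ Even k) →
      Nat.card {c : Composition m // c.blocks.reverse = c.blocks ∧ c.length = k} = 0) := by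
  constructor
  · intro hcase
    have hpar : m % 2 = 1 → k % 2 = 1 := by
      intro hm2
      rcases hcase with h | ⟨_, h2⟩
      · exact absurd (Nat.even_iff.mp h) (by omega)
      · exact Nat.odd_iff.mp h2
    rw [Nat.card_congr (palEquiv m k hk hkm hpar)]
    exact card_comp_length' ((m+1)/2) ((k+1)/2) (by omega) (by omega)
  · rintro ⟨hmo, hke⟩
    have hm2 : m % 2 = 1 := Nat.odd_iff.mp hmo
    have hk2 : k % 2 = 0 := Nat.even_iff.mp hke
    have : IsEmpty {c : Composition m // c.blocks.reverse = c.blocks ∧ c.length = k} := by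
      constructor
      rintro ⟨⟨b, bpos, bsum⟩, hrev0, hlen0⟩
      have hrev : b.reverse = b := hrev0
      have hlen' : b.length = k := hlen0
      have hs := pal_sum hrev hlen'
      have hrlen : ((b.drop (k/2)).take (k % 2)).length = k % 2 := by
        rw [List.length_take, List.length_drop, hlen']; omega
      rw [hk2] at hrlen hs
      rw [List.length_eq_zero_iff.mp hrlen] at hs
      have : b.sum = m := bsum
      simp only [List.sum_nil, add_zero] at hs
      omega
    exact Nat.card_of_isEmpty
end

section
/- For every natural number m ≥ 1, the number of compositions of m all of whose parts are odd equals the m-th Fibonacci number fib(m) (with the convention fib(0) = 0, fib(1) = fib(2) = 1). -/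
private lemma odd_pos' {a : ℕ} (h : Odd a) : 0 < a := by
  obtain ⟨k, rfl⟩ := h; omega

private lemma odd_sum_zero {l : List ℕ} (ho : ∀ a ∈ l, Odd a) (hs : l.sum = 0) : l = [] := by
  cases l with
  | nil => rfl
  | cons a t =>
    have := odd_pos' (ho a (by simp))
    simp only [List.sum_cons] at hs
    omega

private lemma odd_sum_one {l : List ℕ} (ho : ∀ a ∈ l, Odd a) (hs : l.sum = 1) : l = [1] := by
  cases l with
  | nil => simp at hs
  | cons a t =>
    obtain ⟨k, hk⟩ := ho a (by simp)
    simp only [List.sum_cons] at hs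
    have ha : a = 1 := by omega
    have ht : t.sum = 0 := by omega
    rw [odd_sum_zero (fun x hx => ho x (by simp [hx])) ht, ha]

private lemma odd_sum_two {l : List ℕ} (ho : ∀ a ∈ l, Odd a) (hs : l.sum = 2) : l = [1, 1] := by
  cases l with
  | nil => simp at hs
  | cons a t =>
    obtain ⟨k, hk⟩ := ho a (by simp)
    simp only [List.sum_cons] at hs
    have ha : a = 1 := by omega
    have ht : t.sum = 1 := by omega
    rw [odd_sum_one (fun x hx => ho x (by simp [hx])) ht, ha]

private abbrev OddL (m : ℕ) := {l : List ℕ // (∀ a ∈ l, Odd a) ∧ l.sum = m}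

private def compEquiv (m : ℕ) :
    {c : Composition m // ∀ a ∈ c.blocks, Odd a} ≃ OddL m where
  toFun c := ⟨c.1.blocks, c.2, c.1.blocks_sum⟩
  invFun l := ⟨⟨l.1, fun hi => odd_pos' (l.2.1 _ hi), l.2.2⟩, l.2.1⟩
  left_inv _ := rfl
  right_inv _ := rfl

private instance (m : ℕ) : Finite (OddL m) := Finite.of_equiv _ (compEquiv m)

private def g (m : ℕ) : OddL (m + 2) ⊕ OddL (m + 1) → OddL (m + 3)
  | .inl ⟨t, ht⟩ => ⟨1 :: t, by
      intro a ha
      rcases List.mem_cons.1 ha with rfl | h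
      · exact ⟨0, rfl⟩
      · exact ht.1 a h, by
      simp only [List.sum_cons, ht.2]; omega⟩
  | .inr ⟨[], hl⟩ => False.elim (by
      have h := hl.2; rw [List.sum_nil] at h; omega)
  | .inr ⟨a :: t, hl⟩ => ⟨(a + 2) :: t, by
      intro b hb
      rcases List.mem_cons.1 hb with rfl | h
      · obtain ⟨k, hk⟩ := hl.1 a (by simp)
        exact ⟨k + 1, by omega⟩
      · exact hl.1 b (by simp [h]), by
      have := hl.2
      simp only [List.sum_cons] at this ⊢
      omega⟩

private lemma g_bij (m : ℕ) : Function.Bijective (g m) := by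
  constructor
  · intro x y h
    match x, y, h with
    | .inl ⟨t, ht⟩, .inl ⟨t', ht'⟩, h =>
      have hv : (1 : ℕ) :: t = 1 :: t' := congrArg Subtype.val h
      simp only [List.cons.injEq] at hv
      simp [hv.2]
    | .inl ⟨t, ht⟩, .inr ⟨[], hl'⟩, h =>
      exact absurd hl'.2 (by intro hh; rw [List.sum_nil] at hh; omega)
    | .inl ⟨t, ht⟩, .inr ⟨a :: t', hl'⟩, h =>
      have hv : (1 : ℕ) :: t = (a + 2) :: t' := congrArg Subtype.val h
      simp only [List.cons.injEq] at hv
      omega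
    | .inr ⟨[], hl⟩, _, h =>
      exact absurd hl.2 (by intro hh; rw [List.sum_nil] at hh; omega)
    | .inr ⟨a :: t, hl⟩, .inl ⟨t', ht'⟩, h =>
      have hv : (a + 2 : ℕ) :: t = 1 :: t' := congrArg Subtype.val h
      simp only [List.cons.injEq] at hv
      omega
    | .inr ⟨a :: t, hl⟩, .inr ⟨[], hl'⟩, h =>
      exact absurd hl'.2 (by intro hh; rw [List.sum_nil] at hh; omega)
    | .inr ⟨a :: t, hl⟩, .inr ⟨a' :: t', hl'⟩, h =>
      have hv : (a + 2 : ℕ) :: t = (a' + 2) :: t' := congrArg Subtype.val h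
      simp only [List.cons.injEq] at hv
      simp only [Sum.inr.injEq, Subtype.mk.injEq, List.cons.injEq]
      exact ⟨by omega, hv.2⟩
  · rintro ⟨l, hl⟩
    cases l with
    | nil =>
      exact absurd hl.2 (by intro hh; rw [List.sum_nil] at hh; omega)
    | cons a t =>
      obtain ⟨k, hk⟩ := hl.1 a (by simp)
      have hts : a + t.sum = m + 3 := by
        have := hl.2; simpa using this
      have hto : ∀ x ∈ t, Odd x := fun x hx => hl.1 x (by simp [hx])
      rcases Nat.eq_zero_or_pos k with rfl | hk1
      · refine ⟨.inl ⟨t, hto, by omega⟩, Subtype.ext ?_⟩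
        show (1 : ℕ) :: t = a :: t
        rw [show a = 1 by omega]
      · refine ⟨.inr ⟨(a - 2) :: t, ⟨?_, ?_⟩⟩, Subtype.ext ?_⟩
        · intro b hb
          rcases List.mem_cons.1 hb with rfl | h
          · exact ⟨k - 1, by omega⟩
          · exact hto b h
        · simp only [List.sum_cons]; omega
        · show (a - 2 + 2 : ℕ) :: t = a :: t
          rw [show a - 2 + 2 = a by omega]

private lemma card_one : Nat.card (OddL 1) = 1 := by
  rw [Nat.card_eq_one_iff_unique]
  constructor
  · constructor
    rintro ⟨l, hl⟩ ⟨l', hl'⟩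
    simp only [Subtype.mk.injEq]
    rw [odd_sum_one hl.1 hl.2, odd_sum_one hl'.1 hl'.2]
  · exact ⟨⟨[1], fun a ha => by rw [List.mem_singleton] at ha; subst ha; exact odd_one,
      by decide⟩⟩

private lemma card_two : Nat.card (OddL 2) = 1 := by
  rw [Nat.card_eq_one_iff_unique]
  constructor
  · constructor
    rintro ⟨l, hl⟩ ⟨l', hl'⟩
    simp only [Subtype.mk.injEq]
    rw [odd_sum_two hl.1 hl.2, odd_sum_two hl'.1 hl'.2]
  · refine ⟨⟨[1, 1], fun a ha => ?_, by decide⟩⟩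
    simp only [List.mem_cons, List.not_mem_nil, or_false] at ha
    rcases ha with rfl | rfl <;> exact odd_one

private lemma key : ∀ n : ℕ, Nat.card (OddL (n + 1)) = Nat.fib (n + 1) := by
  intro n
  induction n using Nat.strong_induction_on with
  | _ n ih =>
    match n with
    | 0 => simpa using card_one
    | 1 => simpa [Nat.fib_two] using card_two
    | (k + 2) =>
      have h1 : Nat.card (OddL (k + 2)) = Nat.fib (k + 2) := ih (k + 1) (by omega)
      have h2 : Nat.card (OddL (k + 1)) = Nat.fib (k + 1) := ih k (by omega)
      have hc : Nat.card (OddL (k + 3)) = Nat.card (OddL (k + 2)) + Nat.card (OddL (k + 1)) := by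
        rw [← Nat.card_sum, Nat.card_eq_of_bijective (g k) (g_bij k)]
      have hf : Nat.fib (k + 3) = Nat.fib (k + 2) + Nat.fib (k + 1) := by
        show Nat.fib ((k + 1) + 2) = Nat.fib ((k + 1) + 1) + Nat.fib (k + 1)
        rw [Nat.fib_add_two]
        exact Nat.add_comm _ _
      show Nat.card (OddL (k + 3)) = Nat.fib (k + 3)
      rw [hc, h1, h2, hf]

/-- **Compositions into odd parts are counted by Fibonacci numbers** (Aguiar–Lauve,
Section 5.4): for every `m ≥ 1`, the number of compositions of `m` all of whose parts are
odd equals `fib m`. -/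
theorem card_odd_compositions (m : ℕ) (hm : 1 ≤ m) :
    Nat.card {c : Composition m // ∀ a ∈ c.blocks, Odd a} = Nat.fib m := by
  rw [Nat.card_congr (compEquiv m)]
  obtain ⟨n, rfl⟩ := Nat.exists_eq_add_of_le hm
  rw [Nat.add_comm]
  exact key n
end

section
/- Define, for a composition α = (a_1, …, a_k) of m, the statistic inv(α) = ∑_{1 ≤ i < j ≤ k} a_i · a_j, and let P(k, m) ∈ ℤ[q] be the polynomial ∑_α q^{inv(α)}, the sum over all palindromic compositions α of m with exactly k parts. Then for all natural numbers k ≥ 1 and m ≥ 0, the following recursions hold in ℤ[q]: P(2k, m) = ∑_{a ≥ 1, 2a ≤ m} q^{a² + 2a(m − 2a)} · P(2k − 2, m − 2a), and P(2k + 1, m) = ∑_{a ≥ 1, 2a < m} q^{a² + 2a(m − 2a)} · P(2k − 1, m − 2a). -/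
/-- The inversion statistic of a composition `α = (a_1, …, a_k)`:
`inv(α) = ∑_{1 ≤ i < j ≤ k} a_i a_j`. -/
def compInv {m : ℕ} (c : Composition m) : ℕ :=
  ∑ i ∈ Finset.range c.length, ∑ j ∈ Finset.Ioo i c.length,
    c.blocks.getD i 0 * c.blocks.getD j 0

/-- `P(k, m) = ∑_α q^{inv(α)} ∈ ℤ[q]`, the sum over all palindromic compositions `α` of `m`
with exactly `k` parts. -/
noncomputable def palPoly (k m : ℕ) : Polynomial ℤ :=
  ∑ c ∈ Finset.univ.filter
      (fun c : Composition m => c.blocks.reverse = c.blocks ∧ c.length = k),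
    Polynomial.X ^ compInv c

open Finset

def listInv : List ℕ → ℕ
  | [] => 0
  | x :: l => x * l.sum + listInv l

lemma sum_range_getD (t : List ℕ) : ∑ j ∈ range t.length, t.getD j 0 = t.sum := by
  induction t with
  | nil => simp
  | cons x t ih =>
    rw [List.length_cons, Finset.sum_range_succ']
    simp only [List.getD_cons_succ, List.getD_cons_zero, ih, List.sum_cons]
    omega

lemma shift_Ioo (n i : ℕ) (g : ℕ → ℕ) :
    ∑ j ∈ Ioo (i+1) (n+1), g j = ∑ j ∈ Ioo i n, g (j+1) := by
  rw [← Finset.map_add_right_Ioo i n 1, Finset.sum_map]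
  simp

lemma Ioo_zero (n : ℕ) (g : ℕ → ℕ) :
    ∑ j ∈ Ioo 0 (n+1), g j = ∑ j ∈ range n, g (j+1) := by
  have h : Ioo 0 (n+1) = (range n).map (addRightEmbedding 1) := by
    rw [Finset.range_eq_Ico, Finset.map_add_right_Ico, Finset.Ico_add_one_left_eq_Ioo]
  rw [h, Finset.sum_map]
  simp

lemma listInv_eq (L : List ℕ) :
    ∑ i ∈ range L.length, ∑ j ∈ Ioo i L.length, L.getD i 0 * L.getD j 0 = listInv L := by
  induction L with
  | nil => simp [listInv]
  | cons x t ih =>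
    rw [List.length_cons, Finset.sum_range_succ']
    have h0 : ∑ j ∈ Ioo 0 (t.length+1), (x::t).getD 0 0 * (x::t).getD j 0 = x * t.sum := by
      rw [Ioo_zero]
      simp only [List.getD_cons_succ, List.getD_cons_zero, ← Finset.mul_sum, sum_range_getD]
    have h1 : ∀ i, ∑ j ∈ Ioo (i+1) (t.length+1), (x::t).getD (i+1) 0 * (x::t).getD j 0
        = ∑ j ∈ Ioo i t.length, t.getD i 0 * t.getD j 0 := by
      intro i; rw [shift_Ioo]; simp only [List.getD_cons_succ]
    simp only [h1, h0, ih, listInv]; omega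

lemma compInv_eq {m : ℕ} (c : Composition m) : compInv c = listInv c.blocks := by
  unfold compInv
  rw [← listInv_eq]

lemma listInv_concat (l : List ℕ) (a : ℕ) : listInv (l ++ [a]) = listInv l + a * l.sum := by
  induction l with
  | nil => simp [listInv]
  | cons x t ih => simp [listInv, ih]; ring

lemma pal_cons_concat (a : ℕ) (l : List ℕ) :
    (a :: l ++ [a]).reverse = a :: l ++ [a] ↔ l.reverse = l := by
  simp only [List.reverse_append, List.reverse_cons, List.reverse_nil, List.nil_append,
    List.cons_append, List.cons.injEq, true_and]
  constructor
  · intro h; exact List.append_cancel_right h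
  · intro h; rw [h]

lemma pal_decomp_s19 (L : List ℕ) (n : ℕ) (hL : L.length = n + 2) (hp : L.reverse = L) :
    ∃ a l, L = a :: l ++ [a] ∧ l.length = n := by
  cases L with
  | nil => simp at hL
  | cons x t =>
    have ht : t.reverse ≠ [] := by
      intro h
      have : t = [] := by simpa using congrArg List.reverse h
      subst this; simp at hL
    obtain ⟨y, s, hys⟩ := List.exists_cons_of_ne_nil ht
    have hrev : (x :: t).reverse = t.reverse ++ [x] := by simp
    rw [hp, hys] at hrev
    have hx : x = y ∧ t = s ++ [x] := by
      simpa using hrev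
    refine ⟨x, s, ?_, ?_⟩
    · rw [hx.2]; simp
    · have := congrArg List.length hx.2
      simp at hL this
      omega

def glue (m a : ℕ) (ha : 1 ≤ a) (h2 : 2*a ≤ m) (c : Composition (m - 2*a)) : Composition m where
  blocks := a :: c.blocks ++ [a]
  blocks_pos := by
    intro i hi
    simp only [List.cons_append, List.mem_cons, List.mem_append, List.mem_singleton,
      List.not_mem_nil, or_false] at hi
    rcases hi with rfl | h | rfl
    · exact ha
    · exact c.blocks_pos h
    · exact ha
  blocks_sum := by
    have h := c.blocks_sum
    simp only [List.cons_append, List.sum_cons, List.sum_append, List.sum_singleton,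
      List.sum_nil, h]
    omega

lemma palPoly_key (n m : ℕ) :
    palPoly (n + 2) m =
      ∑ a ∈ (Finset.Icc 1 m).filter (fun a => 2 * a ≤ m),
        Polynomial.X ^ (a ^ 2 + 2 * a * (m - 2 * a)) * palPoly n (m - 2 * a) := by
  have hrhs : ∀ a : ℕ,
      Polynomial.X ^ (a ^ 2 + 2 * a * (m - 2 * a)) * palPoly n (m - 2 * a)
      = ∑ c ∈ Finset.univ.filter
          (fun c : Composition (m - 2*a) => c.blocks.reverse = c.blocks ∧ c.length = n),
        (Polynomial.X : Polynomial ℤ) ^ (a ^ 2 + 2 * a * (m - 2 * a) + compInv c) := by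
    intro a
    rw [palPoly, Finset.mul_sum]
    exact Finset.sum_congr rfl fun c _ => by rw [← pow_add]
  simp only [hrhs]
  rw [Finset.sum_sigma']
  rw [palPoly]
  symm
  apply Finset.sum_bij (fun p hp => glue m p.1
    (by simp only [Finset.mem_sigma, Finset.mem_filter, Finset.mem_Icc] at hp; exact hp.1.1.1)
    (by simp only [Finset.mem_sigma, Finset.mem_filter, Finset.mem_Icc] at hp; exact hp.1.2)
    p.2)
  · -- membership
    intro p hp
    simp only [Finset.mem_sigma, Finset.mem_filter, Finset.mem_Icc, Finset.mem_univ,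
      true_and] at hp ⊢
    obtain ⟨⟨⟨h1, h2⟩, h3⟩, hpal, hlen⟩ := hp
    constructor
    · show (p.1 :: p.2.blocks ++ [p.1]).reverse = p.1 :: p.2.blocks ++ [p.1]
      exact (pal_cons_concat _ _).mpr hpal
    · show (p.1 :: p.2.blocks ++ [p.1]).length = n + 2
      simp [Composition.length] at hlen ⊢
      omega
  · -- injectivity
    intro p hp q hq hpq
    obtain ⟨pa, pc⟩ := p
    obtain ⟨qa, qc⟩ := q
    have hb : pa :: pc.blocks ++ [pa] = qa :: qc.blocks ++ [qa] :=
      congrArg Composition.blocks hpq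
    simp only [List.cons_append, List.cons.injEq] at hb
    obtain ⟨h1, h2⟩ := hb
    subst h1
    have h3 : pc.blocks = qc.blocks := List.append_cancel_right h2
    have hcc : pc = qc := by
      cases pc; cases qc; simpa using h3
    rw [hcc]
  · -- surjectivity
    intro d hd
    simp only [Finset.mem_filter, Finset.mem_univ, true_and] at hd
    obtain ⟨hpal, hlen⟩ := hd
    obtain ⟨a, l, hLl, hln⟩ := pal_decomp_s19 d.blocks n hlen hpal
    have hpos : ∀ i ∈ a :: l ++ [a], 0 < i := by rw [← hLl]; exact fun i hi => d.blocks_pos hi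
    have ha : 1 ≤ a := hpos a (by simp)
    have hsum : (a :: l ++ [a]).sum = m := by rw [← hLl]; exact d.blocks_sum
    have hls : l.sum = m - 2*a ∧ 2*a ≤ m := by
      simp only [List.cons_append, List.sum_cons, List.sum_append, List.sum_singleton,
        List.sum_nil] at hsum
      omega
    have hlpal : l.reverse = l := by
      rw [hLl] at hpal
      exact (pal_cons_concat a l).mp hpal
    refine ⟨⟨a, ⟨l, fun {i} hi => hpos i (by simp [hi]), hls.1⟩⟩, ?_, ?_⟩
    · simp only [Finset.mem_sigma, Finset.mem_filter, Finset.mem_Icc, Finset.mem_univ, true_and]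
      exact ⟨⟨⟨ha, by omega⟩, hls.2⟩, hlpal, hln⟩
    · cases d
      simp only [glue, Composition.mk.injEq]
      exact hLl.symm
  · -- values
    intro p hp
    simp only [Finset.mem_sigma, Finset.mem_filter, Finset.mem_Icc, Finset.mem_univ,
      true_and] at hp
    congr 1
    rw [compInv_eq, compInv_eq]
    show _ = listInv (p.1 :: p.2.blocks ++ [p.1])
    have hbs : p.2.blocks.sum = m - 2 * p.1 := p.2.blocks_sum
    rw [List.cons_append]
    simp only [listInv, listInv_concat, List.sum_append, List.sum_singleton, List.sum_nil, hbs]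
    ring

lemma palPoly_zero_right (j : ℕ) (hj : 1 ≤ j) : palPoly j 0 = 0 := by
  rw [palPoly]
  apply Finset.sum_eq_zero
  intro c hc
  simp only [Finset.mem_filter, Finset.mem_univ, true_and] at hc
  exfalso
  have hb : c.blocks = [] := by
    cases hcb : c.blocks with
    | nil => rfl
    | cons x t =>
      have h1 : 0 < x := c.blocks_pos (by rw [hcb]; simp)
      have h2 : (x :: t).sum = 0 := by rw [← hcb]; exact c.blocks_sum
      simp at h2
      omega
  have : c.length = 0 := by simp [Composition.length, hb]
  omega

/-- **Recursions for the palindromic `q`-polynomials** (Aguiar–Lauve, Proposition on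
`q`-generating functions): for `k ≥ 1` and any `m`, in `ℤ[q]`,
`P(2k, m) = ∑_{a ≥ 1, 2a ≤ m} q^{a² + 2a(m-2a)} P(2k-2, m-2a)` and
`P(2k+1, m) = ∑_{a ≥ 1, 2a < m} q^{a² + 2a(m-2a)} P(2k-1, m-2a)`. -/
theorem palPoly_recursion (k m : ℕ) (hk : 1 ≤ k) :
    palPoly (2 * k) m =
      ∑ a ∈ (Finset.Icc 1 m).filter (fun a => 2 * a ≤ m),
        Polynomial.X ^ (a ^ 2 + 2 * a * (m - 2 * a)) * palPoly (2 * k - 2) (m - 2 * a) ∧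
    palPoly (2 * k + 1) m =
      ∑ a ∈ (Finset.Icc 1 m).filter (fun a => 2 * a < m),
        Polynomial.X ^ (a ^ 2 + 2 * a * (m - 2 * a)) * palPoly (2 * k - 1) (m - 2 * a) := by
  constructor
  · have h : 2 * k = (2 * k - 2) + 2 := by omega
    rw [h]
    exact palPoly_key (2 * k - 2) m
  · have h : 2 * k + 1 = (2 * k - 1) + 2 := by omega
    rw [h, palPoly_key (2 * k - 1) m]
    symm
    apply Finset.sum_subset
    · intro a ha
      simp only [Finset.mem_filter, Finset.mem_Icc] at ha ⊢
      exact ⟨ha.1, le_of_lt ha.2⟩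
    · intro a ha hna
      simp only [Finset.mem_filter, Finset.mem_Icc] at ha hna
      have : m - 2 * a = 0 := by omega
      rw [this, palPoly_zero_right (2 * k - 1) (by omega)]
      ring
end
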